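/- arXiv:1008.4560 — 8 statements merged into one kernel-verified Lean document; each statement's English description precedes it below -/
import Mathlib

section
/- Let B : ℂ^{d−1} → ℂ^N be a vector-valued multi-affine polynomial, written B(w) = ∑_{α ⊆ {1,…,d−1}} B_α·w^α with coefficient vectors B_α ∈ ℂ^N, and suppose that |B(w)|² is a symmetric function of w (invariant under all permutations of the d−1 variables). Then the inner product ⟨B_α, B_β⟩ depends only on |α|, |β|, and |α ∩ β|: if α, β, α', β' ⊆ {1,…,d−1} satisfy |α| = |α'|, |β| = |β'|, and |α ∩ β| = |α' ∩ β'|, then ⟨B_α, B_β⟩ = ⟨B_{α'}, B_{β'}⟩. -/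
open Complex ComplexConjugate Finset

noncomputable section

lemma coeff_unique {ι : Type*} [DecidableEq ι] (s : Finset ι) :
    ∀ (c : Finset ι → Finset ι → ℂ),
    (∀ w : ι → ℂ, ∑ a ∈ s.powerset, ∑ b ∈ s.powerset,
      c a b * (∏ i ∈ a, w i) * (∏ j ∈ b, conj (w j)) = 0) →
    ∀ a ∈ s.powerset, ∀ b ∈ s.powerset, c a b = 0 := by
  induction s using Finset.induction_on with
  | empty =>
    intro c h a ha b hb
    simp only [Finset.powerset_empty, Finset.mem_singleton] at ha hb
    subst ha; subst hb
    simpa using h (fun _ => 0)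
  | @insert k s hk IH =>
    intro c h a ha b hb
    have hkn : ∀ t : Finset ι, t ∈ s.powerset → k ∉ t :=
      fun t ht h' => hk (Finset.mem_powerset.mp ht h')
    have key : ∀ (w : ι → ℂ) (z : ℂ),
        (∑ a ∈ s.powerset, ∑ b ∈ s.powerset,
            c a b * (∏ i ∈ a, w i) * (∏ j ∈ b, conj (w j)))
        + z * (∑ a ∈ s.powerset, ∑ b ∈ s.powerset,
            c (insert k a) b * (∏ i ∈ a, w i) * (∏ j ∈ b, conj (w j)))
        + conj z * (∑ a ∈ s.powerset, ∑ b ∈ s.powerset,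
            c a (insert k b) * (∏ i ∈ a, w i) * (∏ j ∈ b, conj (w j)))
        + z * conj z * (∑ a ∈ s.powerset, ∑ b ∈ s.powerset,
            c (insert k a) (insert k b) * (∏ i ∈ a, w i) * (∏ j ∈ b, conj (w j)))
        = 0 := by
      intro w z
      have hw := h (Function.update w k z)
      have hP : ∀ t ∈ s.powerset, (∏ i ∈ t, Function.update w k z i) = ∏ i ∈ t, w i := by
        intro t ht
        exact Finset.prod_congr rfl fun i hi =>
          Function.update_of_ne (fun he => hkn t ht (by rw [← he]; exact hi)) _ _
      have hQ : ∀ t ∈ s.powerset, (∏ j ∈ t, conj (Function.update w k z j))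
          = ∏ j ∈ t, conj (w j) := by
        intro t ht
        exact Finset.prod_congr rfl fun i hi => by
          rw [Function.update_of_ne (fun he => hkn t ht (by rw [← he]; exact hi))]
      have hPi : ∀ t ∈ s.powerset, (∏ i ∈ insert k t, Function.update w k z i)
          = z * ∏ i ∈ t, w i := by
        intro t ht
        rw [Finset.prod_insert (hkn t ht), Function.update_self, hP t ht]
      have hQi : ∀ t ∈ s.powerset, (∏ j ∈ insert k t, conj (Function.update w k z j))
          = conj z * ∏ j ∈ t, conj (w j) := by
        intro t ht
        rw [Finset.prod_insert (hkn t ht), Function.update_self, hQ t ht]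
      rw [Finset.sum_powerset_insert hk] at hw
      have e1 : ∑ a ∈ s.powerset, ∑ b ∈ (insert k s).powerset,
          c a b * (∏ i ∈ a, Function.update w k z i) *
            (∏ j ∈ b, conj (Function.update w k z j))
          = (∑ a ∈ s.powerset, ∑ b ∈ s.powerset,
              c a b * (∏ i ∈ a, w i) * (∏ j ∈ b, conj (w j)))
            + conj z * (∑ a ∈ s.powerset, ∑ b ∈ s.powerset,
              c a (insert k b) * (∏ i ∈ a, w i) * (∏ j ∈ b, conj (w j))) := by
        rw [Finset.mul_sum, ← Finset.sum_add_distrib]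
        refine Finset.sum_congr rfl fun a ha' => ?_
        rw [Finset.sum_powerset_insert hk, Finset.mul_sum, ← Finset.sum_add_distrib,
          ← Finset.sum_add_distrib]
        refine Finset.sum_congr rfl fun b hb' => ?_
        rw [hP a ha', hQ b hb', hQi b hb']
        ring
      have e2 : ∑ a ∈ s.powerset, ∑ b ∈ (insert k s).powerset,
          c (insert k a) b * (∏ i ∈ insert k a, Function.update w k z i) *
            (∏ j ∈ b, conj (Function.update w k z j))
          = z * (∑ a ∈ s.powerset, ∑ b ∈ s.powerset,
              c (insert k a) b * (∏ i ∈ a, w i) * (∏ j ∈ b, conj (w j)))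
            + z * conj z * (∑ a ∈ s.powerset, ∑ b ∈ s.powerset,
              c (insert k a) (insert k b) * (∏ i ∈ a, w i) * (∏ j ∈ b, conj (w j))) := by
        rw [Finset.mul_sum, Finset.mul_sum, ← Finset.sum_add_distrib]
        refine Finset.sum_congr rfl fun a ha' => ?_
        rw [Finset.sum_powerset_insert hk, Finset.mul_sum, Finset.mul_sum,
          ← Finset.sum_add_distrib, ← Finset.sum_add_distrib]
        refine Finset.sum_congr rfl fun b hb' => ?_
        rw [hPi a ha', hQ b hb', hQi b hb']
        ring
      rw [e1, e2] at hw
      linear_combination hw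
    -- extract the four coefficient families
    have hA : ∀ w : ι → ℂ, ∑ a ∈ s.powerset, ∑ b ∈ s.powerset,
        c a b * (∏ i ∈ a, w i) * (∏ j ∈ b, conj (w j)) = 0 := by
      intro w
      have h0 := key w 0
      simpa using h0
    have hBCD : ∀ w : ι → ℂ,
        (∑ a ∈ s.powerset, ∑ b ∈ s.powerset,
          c (insert k a) b * (∏ i ∈ a, w i) * (∏ j ∈ b, conj (w j))) = 0 ∧
        (∑ a ∈ s.powerset, ∑ b ∈ s.powerset,
          c a (insert k b) * (∏ i ∈ a, w i) * (∏ j ∈ b, conj (w j))) = 0 ∧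
        (∑ a ∈ s.powerset, ∑ b ∈ s.powerset,
          c (insert k a) (insert k b) * (∏ i ∈ a, w i) * (∏ j ∈ b, conj (w j))) = 0 := by
      intro w
      have h0 := hA w
      have h1 := key w 1
      have h2 := key w (-1)
      have h3 := key w Complex.I
      simp only [map_one, map_neg, Complex.conj_I] at h1 h2 h3
      have hD : (∑ a ∈ s.powerset, ∑ b ∈ s.powerset,
          c (insert k a) (insert k b) * (∏ i ∈ a, w i) * (∏ j ∈ b, conj (w j))) = 0 := by
        linear_combination (h1 + h2) / 2 - h0
      have h3' : Complex.I * ((∑ a ∈ s.powerset, ∑ b ∈ s.powerset,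
            c (insert k a) b * (∏ i ∈ a, w i) * (∏ j ∈ b, conj (w j)))
          - (∑ a ∈ s.powerset, ∑ b ∈ s.powerset,
            c a (insert k b) * (∏ i ∈ a, w i) * (∏ j ∈ b, conj (w j)))) = 0 := by
        linear_combination h3 - h0 + (∑ a ∈ s.powerset, ∑ b ∈ s.powerset,
            c (insert k a) (insert k b) * (∏ i ∈ a, w i) * (∏ j ∈ b, conj (w j)))
            * Complex.I_mul_I - hD
      have hBC : (∑ a ∈ s.powerset, ∑ b ∈ s.powerset,
            c (insert k a) b * (∏ i ∈ a, w i) * (∏ j ∈ b, conj (w j)))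
          - (∑ a ∈ s.powerset, ∑ b ∈ s.powerset,
            c a (insert k b) * (∏ i ∈ a, w i) * (∏ j ∈ b, conj (w j))) = 0 :=
        (mul_eq_zero.mp h3').resolve_left Complex.I_ne_zero
      refine ⟨by linear_combination (h1 - h2) / 4 + hBC / 2,
        by linear_combination (h1 - h2) / 4 - hBC / 2, hD⟩
    have IH1 := IH _ hA
    have IH2 := IH (fun a b => c (insert k a) b) (fun w => (hBCD w).1)
    have IH3 := IH (fun a b => c a (insert k b)) (fun w => (hBCD w).2.1)
    have IH4 := IH (fun a b => c (insert k a) (insert k b)) (fun w => (hBCD w).2.2)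
    -- now case on membership of k
    have hsub : ∀ t : Finset ι, t ∈ (insert k s).powerset → t.erase k ∈ s.powerset := by
      intro t ht
      rw [Finset.mem_powerset] at ht ⊢
      intro x hx
      rcases Finset.mem_insert.mp (ht (Finset.mem_of_mem_erase hx)) with h' | h'
      · exact absurd h' (Finset.ne_of_mem_erase hx)
      · exact h'
    by_cases hka : k ∈ a <;> by_cases hkb : k ∈ b
    · have := IH4 (a.erase k) (hsub a ha) (b.erase k) (hsub b hb)
      rwa [Finset.insert_erase hka, Finset.insert_erase hkb] at this
    · have hb' : b ∈ s.powerset := by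
        rw [Finset.mem_powerset] at hb ⊢
        intro x hx
        rcases Finset.mem_insert.mp (hb hx) with h' | h'
        · exact absurd (h' ▸ hx) hkb
        · exact h'
      have := IH2 (a.erase k) (hsub a ha) b hb'
      rwa [Finset.insert_erase hka] at this
    · have ha' : a ∈ s.powerset := by
        rw [Finset.mem_powerset] at ha ⊢
        intro x hx
        rcases Finset.mem_insert.mp (ha hx) with h' | h'
        · exact absurd (h' ▸ hx) hka
        · exact h'
      have := IH3 a ha' (b.erase k) (hsub b hb)
      rwa [Finset.insert_erase hkb] at this
    · have ha' : a ∈ s.powerset := by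
        rw [Finset.mem_powerset] at ha ⊢
        intro x hx
        rcases Finset.mem_insert.mp (ha hx) with h' | h'
        · exact absurd (h' ▸ hx) hka
        · exact h'
      have hb' : b ∈ s.powerset := by
        rw [Finset.mem_powerset] at hb ⊢
        intro x hx
        rcases Finset.mem_insert.mp (hb hx) with h' | h'
        · exact absurd (h' ▸ hx) hkb
        · exact h'
      exact IH1 a ha' b hb'

lemma exists_perm {m : ℕ} (α β α' β' : Finset (Fin m)) (h1 : α.card = α'.card)
    (h2 : β.card = β'.card) (h3 : (α ∩ β).card = (α' ∩ β').card) :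
    ∃ σ : Equiv.Perm (Fin m), α.image σ = α' ∧ β.image σ = β' := by
  have hab : (α \ β).card = (α' \ β').card := by
    have e1 := Finset.card_inter_add_card_sdiff α β
    have e2 := Finset.card_inter_add_card_sdiff α' β'
    omega
  have hba : (β \ α).card = (β' \ α').card := by
    have e1 := Finset.card_inter_add_card_sdiff β α
    have e2 := Finset.card_inter_add_card_sdiff β' α'
    have e3 : (β ∩ α).card = (α ∩ β).card := by rw [Finset.inter_comm]
    have e4 : (β' ∩ α').card = (α' ∩ β').card := by rw [Finset.inter_comm]
    omega
  have hc : ((α ∪ β)ᶜ).card = ((α' ∪ β')ᶜ).card := by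
    have e1 := Finset.card_union_add_card_inter α β
    have e2 := Finset.card_union_add_card_inter α' β'
    have e3 := Finset.card_compl (α ∪ β)
    have e4 := Finset.card_compl (α' ∪ β')
    have e5 : (α ∪ β).card ≤ Fintype.card (Fin m) := Finset.card_le_card (Finset.subset_univ _) |>.trans_eq (by simp)
    have e6 : (α' ∪ β').card ≤ Fintype.card (Fin m) := Finset.card_le_card (Finset.subset_univ _) |>.trans_eq (by simp)
    omega
  have hmem : ∀ (γ δ : Finset (Fin m)) (x : Fin m), x ∉ γ ∩ δ → x ∉ γ \ δ → x ∉ δ \ γ →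
      x ∈ (γ ∪ δ)ᶜ := by
    intro γ δ x hx1 hx2 hx3
    simp only [Finset.mem_inter, Finset.mem_sdiff, Finset.mem_compl, Finset.mem_union,
      not_and, not_not] at *
    tauto
  let g1 := Finset.equivOfCardEq h3
  let g2 := Finset.equivOfCardEq hab
  let g3 := Finset.equivOfCardEq hba
  let g4 := Finset.equivOfCardEq hc
  let f : Fin m → Fin m := fun x =>
    if hx1 : x ∈ α ∩ β then (g1 ⟨x, hx1⟩ : Fin m)
    else if hx2 : x ∈ α \ β then (g2 ⟨x, hx2⟩ : Fin m)
    else if hx3 : x ∈ β \ α then (g3 ⟨x, hx3⟩ : Fin m)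
    else (g4 ⟨x, hmem α β x hx1 hx2 hx3⟩ : Fin m)
  let f' : Fin m → Fin m := fun x =>
    if hx1 : x ∈ α' ∩ β' then (g1.symm ⟨x, hx1⟩ : Fin m)
    else if hx2 : x ∈ α' \ β' then (g2.symm ⟨x, hx2⟩ : Fin m)
    else if hx3 : x ∈ β' \ α' then (g3.symm ⟨x, hx3⟩ : Fin m)
    else (g4.symm ⟨x, hmem α' β' x hx1 hx2 hx3⟩ : Fin m)
  -- evaluation lemmas
  have ev1 : ∀ x (hx : x ∈ α ∩ β), f x = (g1 ⟨x, hx⟩ : Fin m) := by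
    intro x hx; simp only [f]; rw [dif_pos hx]
  have ev2 : ∀ x (hx : x ∈ α \ β), f x = (g2 ⟨x, hx⟩ : Fin m) := by
    intro x hx
    have hx1 : x ∉ α ∩ β := by
      simp only [Finset.mem_sdiff] at hx; simp [Finset.mem_inter, hx.2]
    simp only [f]; rw [dif_neg hx1, dif_pos hx]
  have ev3 : ∀ x (hx : x ∈ β \ α), f x = (g3 ⟨x, hx⟩ : Fin m) := by
    intro x hx
    have hx1 : x ∉ α ∩ β := by
      simp only [Finset.mem_sdiff] at hx; simp [Finset.mem_inter, hx.2]
    have hx2 : x ∉ α \ β := by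
      simp only [Finset.mem_sdiff] at hx ⊢; tauto
    simp only [f]; rw [dif_neg hx1, dif_neg hx2, dif_pos hx]
  have ev4 : ∀ x (hx : x ∈ (α ∪ β)ᶜ), f x = (g4 ⟨x, hx⟩ : Fin m) := by
    intro x hx
    simp only [Finset.mem_compl, Finset.mem_union] at hx
    push_neg at hx
    have hx1 : x ∉ α ∩ β := by simp [Finset.mem_inter, hx.1]
    have hx2 : x ∉ α \ β := by simp [Finset.mem_sdiff, hx.1]
    have hx3 : x ∉ β \ α := by simp [Finset.mem_sdiff, hx.2]
    simp only [f]; rw [dif_neg hx1, dif_neg hx2, dif_neg hx3]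
  have ev1' : ∀ x (hx : x ∈ α' ∩ β'), f' x = (g1.symm ⟨x, hx⟩ : Fin m) := by
    intro x hx; simp only [f']; rw [dif_pos hx]
  have ev2' : ∀ x (hx : x ∈ α' \ β'), f' x = (g2.symm ⟨x, hx⟩ : Fin m) := by
    intro x hx
    have hx1 : x ∉ α' ∩ β' := by
      simp only [Finset.mem_sdiff] at hx; simp [Finset.mem_inter, hx.2]
    simp only [f']; rw [dif_neg hx1, dif_pos hx]
  have ev3' : ∀ x (hx : x ∈ β' \ α'), f' x = (g3.symm ⟨x, hx⟩ : Fin m) := by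
    intro x hx
    have hx1 : x ∉ α' ∩ β' := by
      simp only [Finset.mem_sdiff] at hx; simp [Finset.mem_inter, hx.2]
    have hx2 : x ∉ α' \ β' := by
      simp only [Finset.mem_sdiff] at hx ⊢; tauto
    simp only [f']; rw [dif_neg hx1, dif_neg hx2, dif_pos hx]
  have ev4' : ∀ x (hx : x ∈ (α' ∪ β')ᶜ), f' x = (g4.symm ⟨x, hx⟩ : Fin m) := by
    intro x hx
    simp only [Finset.mem_compl, Finset.mem_union] at hx
    push_neg at hx
    have hx1 : x ∉ α' ∩ β' := by simp [Finset.mem_inter, hx.1]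
    have hx2 : x ∉ α' \ β' := by simp [Finset.mem_sdiff, hx.1]
    have hx3 : x ∉ β' \ α' := by simp [Finset.mem_sdiff, hx.2]
    simp only [f']; rw [dif_neg hx1, dif_neg hx2, dif_neg hx3]
  have left : Function.LeftInverse f' f := by
    intro x
    by_cases hx1 : x ∈ α ∩ β
    · rw [ev1 x hx1, ev1' _ (g1 ⟨x, hx1⟩).2, Subtype.coe_eta, Equiv.symm_apply_apply]
    · by_cases hx2 : x ∈ α \ β
      · rw [ev2 x hx2, ev2' _ (g2 ⟨x, hx2⟩).2, Subtype.coe_eta, Equiv.symm_apply_apply]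
      · by_cases hx3 : x ∈ β \ α
        · rw [ev3 x hx3, ev3' _ (g3 ⟨x, hx3⟩).2, Subtype.coe_eta, Equiv.symm_apply_apply]
        · rw [ev4 x (hmem α β x hx1 hx2 hx3), ev4' _ (g4 ⟨x, _⟩).2, Subtype.coe_eta,
            Equiv.symm_apply_apply]
  have right : Function.RightInverse f' f := by
    intro x
    by_cases hx1 : x ∈ α' ∩ β'
    · rw [ev1' x hx1, ev1 _ (g1.symm ⟨x, hx1⟩).2, Subtype.coe_eta, Equiv.apply_symm_apply]
    · by_cases hx2 : x ∈ α' \ β'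
      · rw [ev2' x hx2, ev2 _ (g2.symm ⟨x, hx2⟩).2, Subtype.coe_eta, Equiv.apply_symm_apply]
      · by_cases hx3 : x ∈ β' \ α'
        · rw [ev3' x hx3, ev3 _ (g3.symm ⟨x, hx3⟩).2, Subtype.coe_eta, Equiv.apply_symm_apply]
        · rw [ev4' x (hmem α' β' x hx1 hx2 hx3), ev4 _ (g4.symm ⟨x, _⟩).2, Subtype.coe_eta,
            Equiv.apply_symm_apply]
  let σ : Equiv.Perm (Fin m) := ⟨f, f', left, right⟩
  refine ⟨σ, ?_, ?_⟩
  · -- α.image σ = α'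
    have hsub : α.image σ ⊆ α' := by
      intro u hu
      rcases Finset.mem_image.mp hu with ⟨x, hx, hfx⟩
      by_cases hxb : x ∈ β
      · have hx1 : x ∈ α ∩ β := Finset.mem_inter.mpr ⟨hx, hxb⟩
        have : σ x = (g1 ⟨x, hx1⟩ : Fin m) := ev1 x hx1
        rw [← hfx, this]
        exact (Finset.mem_inter.mp (g1 ⟨x, hx1⟩).2).1
      · have hx2 : x ∈ α \ β := Finset.mem_sdiff.mpr ⟨hx, hxb⟩
        have : σ x = (g2 ⟨x, hx2⟩ : Fin m) := ev2 x hx2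
        rw [← hfx, this]
        exact (Finset.mem_sdiff.mp (g2 ⟨x, hx2⟩).2).1
    refine Finset.eq_of_subset_of_card_le hsub ?_
    rw [Finset.card_image_of_injective _ σ.injective, h1]
  · have hsub : β.image σ ⊆ β' := by
      intro u hu
      rcases Finset.mem_image.mp hu with ⟨x, hx, hfx⟩
      by_cases hxa : x ∈ α
      · have hx1 : x ∈ α ∩ β := Finset.mem_inter.mpr ⟨hxa, hx⟩
        have : σ x = (g1 ⟨x, hx1⟩ : Fin m) := ev1 x hx1
        rw [← hfx, this]
        exact (Finset.mem_inter.mp (g1 ⟨x, hx1⟩).2).2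
      · have hx3 : x ∈ β \ α := Finset.mem_sdiff.mpr ⟨hx, hxa⟩
        have : σ x = (g3 ⟨x, hx3⟩ : Fin m) := ev3 x hx3
        rw [← hfx, this]
        exact (Finset.mem_sdiff.mp (g3 ⟨x, hx3⟩).2).1
    refine Finset.eq_of_subset_of_card_le hsub ?_
    rw [Finset.card_image_of_injective _ σ.injective, h2]

/-- if `B(w) = ∑_{α ⊆ [m]} B_α w^α` is a vector-valued multi-affine
polynomial such that `|B(w)|²` is a symmetric function of `w`, then the inner product
`⟨B_α, B_β⟩` depends only on `|α|`, `|β|` and `|α ∩ β|`. -/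
theorem stmt6 (m N : ℕ) (Bc : Finset (Fin m) → EuclideanSpace ℂ (Fin N))
    (hsym : ∀ σ : Equiv.Perm (Fin m), ∀ w : Fin m → ℂ,
      ‖∑ α : Finset (Fin m), (∏ i ∈ α, w (σ i)) • Bc α‖ =
        ‖∑ α : Finset (Fin m), (∏ i ∈ α, w i) • Bc α‖) :
    ∀ α β α' β' : Finset (Fin m),
      α.card = α'.card → β.card = β'.card → (α ∩ β).card = (α' ∩ β').card →
        (inner ℂ (Bc β) (Bc α) : ℂ) = inner ℂ (Bc β') (Bc α') := by
  have expand : ∀ u : Finset (Fin m) → ℂ,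
      (inner ℂ (∑ a : Finset (Fin m), u a • Bc a) (∑ a : Finset (Fin m), u a • Bc a) : ℂ)
      = ∑ a : Finset (Fin m), ∑ b : Finset (Fin m),
          (inner ℂ (Bc b) (Bc a) : ℂ) * u a * conj (u b) := by
    intro u
    simp only [sum_inner, inner_sum, inner_smul_left, inner_smul_right, Finset.mul_sum]
    exact Finset.sum_congr rfl fun a _ => Finset.sum_congr rfl fun b _ => by ring
  have hinv : ∀ τ : Equiv.Perm (Fin m), ∀ a b : Finset (Fin m),
      (inner ℂ (Bc (b.image τ)) (Bc (a.image τ)) : ℂ) = inner ℂ (Bc b) (Bc a) := by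
    intro τ
    set ρ : Equiv.Perm (Fin m) := τ⁻¹ with hρ
    have him : ∀ t : Finset (Fin m), (t.image ρ).image τ = t := by
      intro t
      rw [Finset.image_image]
      have : (⇑τ ∘ ⇑ρ) = id := by
        funext x
        simp [hρ, Equiv.Perm.inv_def]
      rw [this, Finset.image_id]
    have hzero : ∀ w : Fin m → ℂ,
        ∑ a ∈ (Finset.univ : Finset (Fin m)).powerset,
          ∑ b ∈ (Finset.univ : Finset (Fin m)).powerset,
            ((inner ℂ (Bc (b.image τ)) (Bc (a.image τ)) : ℂ) - inner ℂ (Bc b) (Bc a))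
              * (∏ i ∈ a, w i) * (∏ j ∈ b, conj (w j)) = 0 := by
      intro w
      rw [Finset.powerset_univ]
      have hn := hsym ρ w
      have hi : (inner ℂ (∑ a : Finset (Fin m), (∏ i ∈ a, w (ρ i)) • Bc a)
            (∑ a : Finset (Fin m), (∏ i ∈ a, w (ρ i)) • Bc a) : ℂ)
          = inner ℂ (∑ a : Finset (Fin m), (∏ i ∈ a, w i) • Bc a)
            (∑ a : Finset (Fin m), (∏ i ∈ a, w i) • Bc a) := by
        rw [inner_self_eq_norm_sq_to_K, inner_self_eq_norm_sq_to_K, hn]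
      rw [expand, expand] at hi
      have hre : ∑ a : Finset (Fin m), ∑ b : Finset (Fin m),
          (inner ℂ (Bc b) (Bc a) : ℂ) * (∏ i ∈ a, w (ρ i)) * conj (∏ i ∈ b, w (ρ i))
          = ∑ a : Finset (Fin m), ∑ b : Finset (Fin m),
          (inner ℂ (Bc (b.image τ)) (Bc (a.image τ)) : ℂ)
            * (∏ i ∈ a, w i) * conj (∏ j ∈ b, w j) := by
        refine Fintype.sum_equiv (Equiv.finsetCongr ρ) _ _ ?_
        intro a
        refine Fintype.sum_equiv (Equiv.finsetCongr ρ) _ _ ?_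
        intro b
        have ea : (Equiv.finsetCongr ρ a) = a.image ρ := by
          simp [Equiv.finsetCongr_apply, Finset.map_eq_image]
        have eb : (Equiv.finsetCongr ρ b) = b.image ρ := by
          simp [Equiv.finsetCongr_apply, Finset.map_eq_image]
        rw [ea, eb, him a, him b]
        have pa : ∏ j ∈ a.image ρ, w j = ∏ i ∈ a, w (ρ i) :=
          Finset.prod_image (fun x _ y _ h => ρ.injective h)
        have pb : ∏ j ∈ b.image ρ, w j = ∏ i ∈ b, w (ρ i) :=
          Finset.prod_image (fun x _ y _ h => ρ.injective h)
        rw [pa, pb]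
      rw [hre] at hi
      simp only [sub_mul, Finset.sum_sub_distrib]
      rw [sub_eq_zero]
      calc ∑ a : Finset (Fin m), ∑ b : Finset (Fin m),
            (inner ℂ (Bc (b.image τ)) (Bc (a.image τ)) : ℂ)
              * (∏ i ∈ a, w i) * (∏ j ∈ b, conj (w j))
          = ∑ a : Finset (Fin m), ∑ b : Finset (Fin m),
            (inner ℂ (Bc (b.image τ)) (Bc (a.image τ)) : ℂ)
              * (∏ i ∈ a, w i) * conj (∏ j ∈ b, w j) := by
            refine Finset.sum_congr rfl fun a _ => Finset.sum_congr rfl fun b _ => ?_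
            rw [map_prod]
        _ = ∑ a : Finset (Fin m), ∑ b : Finset (Fin m),
            (inner ℂ (Bc b) (Bc a) : ℂ) * (∏ i ∈ a, w i) * conj (∏ j ∈ b, w j) := hi
        _ = ∑ a : Finset (Fin m), ∑ b : Finset (Fin m),
            (inner ℂ (Bc b) (Bc a) : ℂ) * (∏ i ∈ a, w i) * (∏ j ∈ b, conj (w j)) := by
            refine Finset.sum_congr rfl fun a _ => Finset.sum_congr rfl fun b _ => ?_
            rw [map_prod]
    intro a b
    have := coeff_unique (Finset.univ : Finset (Fin m))
      (fun a b => (inner ℂ (Bc (b.image τ)) (Bc (a.image τ)) : ℂ) - inner ℂ (Bc b) (Bc a))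
      hzero a (by simp) b (by simp)
    simpa [sub_eq_zero] using this
  intro α β α' β' h1 h2 h3
  obtain ⟨σ, hα, hβ⟩ := exists_perm α β α' β' h1 h2 h3
  rw [← hα, ← hβ, hinv σ α β]
end
end

section
/- Let B : ℂ^{d−1} → ℂ^N be a vector-valued multi-affine polynomial, B(w) = ∑_{α ⊆ {1,…,d−1}} B_α·w^α, such that |B(w)|² depends only on |α|, |β|, |α∩β| in the sense that ⟨B_α,B_β⟩ = B^{|α∩β|}_{|α|,|β|} for some numbers B^i_{j,k}, and suppose |B|² is 𝕋^{d−1}-symmetric: |B(w)|² = |w_1⋯w_{d−1}|²·|B(1/conj(w_1),…,1/conj(w_{d−1}))|² for all w with nonzero coordinates. Then B^i_{j,k} = B^{d−1−j−k+i}_{d−1−k, d−1−j} for all α, β ⊆ {1,…,d−1} with |α| = j, |β| = k, |α∩β| = i. -/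
open Complex ComplexConjugate Finset

noncomputable section

lemma key {ι : Type*} [DecidableEq ι] (s : Finset ι) :
    ∀ f : Finset ι → Finset ι → ℂ,
    (∀ w : ι → ℂ, (∀ i ∈ s, w i ≠ 0) →
      ∑ α ∈ s.powerset, ∑ β ∈ s.powerset,
        f α β * (∏ i ∈ α, w i) * ∏ i ∈ β, conj (w i) = 0) →
    ∀ α ∈ s.powerset, ∀ β ∈ s.powerset, f α β = 0 := by
  induction s using Finset.induction_on with
  | empty =>
    intro f h α hα β hβ
    simp only [Finset.powerset_empty, Finset.mem_singleton] at hα hβ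
    subst hα; subst hβ
    simpa using h (fun _ => 1) (by simp)
  | @insert a s ha ih =>
    intro f h α hα β hβ
    have expand : ∀ g : Finset ι → Finset ι → ℂ,
        ∑ α ∈ (insert a s).powerset, ∑ β ∈ (insert a s).powerset, g α β
          = ∑ α ∈ s.powerset, ∑ β ∈ s.powerset,
              (g α β + g α (insert a β) + g (insert a α) β
                + g (insert a α) (insert a β)) := by
      intro g
      simp only [Finset.sum_powerset_insert ha, Finset.sum_add_distrib]
      ring
    have hdecomp : ∀ (w : ι → ℂ) (t : ℂ), (∀ i ∈ s, w i ≠ 0) → t ≠ 0 →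
        (∑ α ∈ s.powerset, ∑ β ∈ s.powerset,
            f α β * (∏ i ∈ α, w i) * ∏ i ∈ β, conj (w i))
        + conj t * ∑ α ∈ s.powerset, ∑ β ∈ s.powerset,
            f α (insert a β) * (∏ i ∈ α, w i) * ∏ i ∈ β, conj (w i)
        + t * ∑ α ∈ s.powerset, ∑ β ∈ s.powerset,
            f (insert a α) β * (∏ i ∈ α, w i) * ∏ i ∈ β, conj (w i)
        + t * conj t * ∑ α ∈ s.powerset, ∑ β ∈ s.powerset,
            f (insert a α) (insert a β) * (∏ i ∈ α, w i) * ∏ i ∈ β, conj (w i)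
        = 0 := by
      intro w t hw ht
      have hw' : ∀ i ∈ insert a s, (Function.update w a t) i ≠ 0 := by
        intro i hi
        rcases Finset.mem_insert.mp hi with rfl | his
        · simpa using ht
        · rw [Function.update_of_ne (ne_of_mem_of_not_mem his ha)]
          exact hw i his
      have hk := h (Function.update w a t) hw'
      rw [expand] at hk
      have hprod : ∀ α ∈ s.powerset, ∏ i ∈ α, (Function.update w a t) i = ∏ i ∈ α, w i := by
        intro α hαs
        exact Finset.prod_congr rfl fun i hi =>
          Function.update_of_ne (ne_of_mem_of_not_mem (Finset.mem_powerset.mp hαs hi) ha) _ _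
      have hprod2 : ∀ α ∈ s.powerset,
          ∏ i ∈ α, conj ((Function.update w a t) i) = ∏ i ∈ α, conj (w i) := by
        intro α hαs
        refine Finset.prod_congr rfl fun i hi => ?_
        rw [Function.update_of_ne (ne_of_mem_of_not_mem (Finset.mem_powerset.mp hαs hi) ha)]
      have hnot : ∀ α : Finset ι, α ∈ s.powerset → a ∉ α := fun α hαs h' =>
        ha (Finset.mem_powerset.mp hαs h')
      have step : ∀ α ∈ s.powerset, ∀ β ∈ s.powerset,
          (f α β * (∏ i ∈ α, Function.update w a t i) * ∏ i ∈ β, conj (Function.update w a t i)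
           + f α (insert a β) * (∏ i ∈ α, Function.update w a t i) *
              ∏ i ∈ insert a β, conj (Function.update w a t i)
           + f (insert a α) β * (∏ i ∈ insert a α, Function.update w a t i) *
              ∏ i ∈ β, conj (Function.update w a t i)
           + f (insert a α) (insert a β) * (∏ i ∈ insert a α, Function.update w a t i) *
              ∏ i ∈ insert a β, conj (Function.update w a t i))
          = f α β * (∏ i ∈ α, w i) * ∏ i ∈ β, conj (w i)
            + conj t * (f α (insert a β) * (∏ i ∈ α, w i) * ∏ i ∈ β, conj (w i))
            + t * (f (insert a α) β * (∏ i ∈ α, w i) * ∏ i ∈ β, conj (w i))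
            + t * conj t * (f (insert a α) (insert a β) * (∏ i ∈ α, w i)
                * ∏ i ∈ β, conj (w i)) := by
        intro α hαs β hβs
        rw [Finset.prod_insert (hnot α hαs), Finset.prod_insert (hnot β hβs),
          Function.update_self, hprod α hαs, hprod2 β hβs]
        ring
      rw [Finset.sum_congr rfl (fun α hα =>
        Finset.sum_congr rfl (fun β hβ => step α hα β hβ))] at hk
      simp only [Finset.sum_add_distrib, ← Finset.mul_sum] at hk
      linear_combination hk
    -- four evaluations
    have e1 := fun w hw => hdecomp w 1 hw one_ne_zero
    have e2 := fun w hw => hdecomp w (-1) hw (by norm_num)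
    have e3 := fun w hw => hdecomp w 2 hw (by norm_num)
    have e4 := fun w hw => hdecomp w I hw I_ne_zero
    simp only [map_one, map_neg, map_ofNat, Complex.conj_I, one_mul, neg_mul, mul_neg,
      neg_neg, mul_one, Complex.I_mul_I] at e1 e2 e3 e4
    -- derive vanishing of the four pieces
    have vA : ∀ α ∈ s.powerset, ∀ β ∈ s.powerset, f α β = 0 := by
      refine ih _ (fun w hw => ?_)
      have h1 := e1 w hw; have h2 := e2 w hw; have h3 := e3 w hw
      linear_combination h1 + h2/3 - h3/3
    have hdiff : ∀ w : ι → ℂ, (∀ i ∈ s, w i ≠ 0) →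
        (∑ α ∈ s.powerset, ∑ β ∈ s.powerset,
            f (insert a α) β * (∏ i ∈ α, w i) * ∏ i ∈ β, conj (w i))
        - ∑ α ∈ s.powerset, ∑ β ∈ s.powerset,
            f α (insert a β) * (∏ i ∈ α, w i) * ∏ i ∈ β, conj (w i) = 0 := by
      intro w hw
      have h1 := e1 w hw; have h2 := e2 w hw; have h4 := e4 w hw
      have hI : I * ((∑ α ∈ s.powerset, ∑ β ∈ s.powerset,
            f (insert a α) β * (∏ i ∈ α, w i) * ∏ i ∈ β, conj (w i))
          - ∑ α ∈ s.powerset, ∑ β ∈ s.powerset,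
            f α (insert a β) * (∏ i ∈ α, w i) * ∏ i ∈ β, conj (w i)) = 0 := by
        linear_combination h4 - h1/2 - h2/2
      exact (mul_eq_zero.mp hI).resolve_left I_ne_zero
    have vC : ∀ α ∈ s.powerset, ∀ β ∈ s.powerset, f α (insert a β) = 0 := by
      refine ih _ (fun w hw => ?_)
      have h1 := e1 w hw; have h2 := e2 w hw; have hd := hdiff w hw
      linear_combination h1/4 - h2/4 - hd/2
    have vB : ∀ α ∈ s.powerset, ∀ β ∈ s.powerset, f (insert a α) β = 0 := by
      refine ih _ (fun w hw => ?_)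
      have h1 := e1 w hw; have h2 := e2 w hw; have hd := hdiff w hw
      linear_combination h1/4 - h2/4 + hd/2
    have vD : ∀ α ∈ s.powerset, ∀ β ∈ s.powerset, f (insert a α) (insert a β) = 0 := by
      refine ih _ (fun w hw => ?_)
      have h1 := e1 w hw; have h2 := e2 w hw; have h3 := e3 w hw
      linear_combination -h1/2 + h2/6 + h3/3
    -- conclude
    rw [Finset.mem_powerset, Finset.subset_insert_iff] at hα hβ
    have hα' : α.erase a ∈ s.powerset := Finset.mem_powerset.mpr hα
    have hβ' : β.erase a ∈ s.powerset := Finset.mem_powerset.mpr hβ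
    by_cases haα : a ∈ α <;> by_cases haβ : a ∈ β
    · have := vD _ hα' _ hβ'
      rwa [Finset.insert_erase haα, Finset.insert_erase haβ] at this
    · have := vB _ hα' _ hβ'
      rwa [Finset.insert_erase haα, Finset.erase_eq_of_notMem haβ] at this
    · have := vC _ hα' _ hβ'
      rwa [Finset.erase_eq_of_notMem haα, Finset.insert_erase haβ] at this
    · have := vA _ hα' _ hβ'
      rwa [Finset.erase_eq_of_notMem haα, Finset.erase_eq_of_notMem haβ] at this

/-- if `B(w) = ∑_{α ⊆ [m]} B_α w^α` is a vector-valued multi-affine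
polynomial with `⟨B_α, B_β⟩ = B^{|α∩β|}_{|α|,|β|}` and `|B(w)|²` is `𝕋^m`-symmetric,
then `B^i_{j,k} = B^{m−j−k+i}_{m−k,m−j}` (here `m` plays the role of `d−1`). -/
theorem stmt7 (m N : ℕ) (Bc : Finset (Fin m) → EuclideanSpace ℂ (Fin N))
    (Bn : ℕ → ℕ → ℕ → ℂ)
    (hBn : ∀ α β : Finset (Fin m),
      (inner ℂ (Bc β) (Bc α) : ℂ) = Bn (α ∩ β).card α.card β.card)
    (hT : ∀ w : Fin m → ℂ, (∀ i, w i ≠ 0) →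
      ‖∑ α : Finset (Fin m), (∏ i ∈ α, w i) • Bc α‖ ^ 2 =
        ‖∏ i, w i‖ ^ 2 *
          ‖∑ α : Finset (Fin m), (∏ i ∈ α, (conj (w i))⁻¹) • Bc α‖ ^ 2) :
    ∀ α β : Finset (Fin m),
      Bn (α ∩ β).card α.card β.card =
        Bn (m + (α ∩ β).card - (α.card + β.card)) (m - β.card) (m - α.card) := by
  set cc : Finset (Fin m) → Finset (Fin m) → ℂ :=
    fun α β => Bn (α ∩ β).card α.card β.card with hcc
  -- inner product expansion
  have expandInner : ∀ coef : Finset (Fin m) → ℂ,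
      (inner ℂ (∑ α : Finset (Fin m), coef α • Bc α)
        (∑ α : Finset (Fin m), coef α • Bc α) : ℂ)
      = ∑ x : Finset (Fin m), ∑ y : Finset (Fin m), conj (coef x) * coef y * cc y x := by
    intro coef
    rw [sum_inner]
    refine Finset.sum_congr rfl fun x _ => ?_
    rw [inner_sum]
    refine Finset.sum_congr rfl fun y _ => ?_
    rw [inner_smul_left, inner_smul_right, hBn y x]
    ring
  -- the vanishing double sum
  have main : ∀ w : Fin m → ℂ, (∀ i ∈ (univ : Finset (Fin m)), w i ≠ 0) →
      ∑ α ∈ (univ : Finset (Fin m)).powerset, ∑ β ∈ (univ : Finset (Fin m)).powerset,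
        (cc α β - cc βᶜ αᶜ) * (∏ i ∈ α, w i) * ∏ i ∈ β, conj (w i) = 0 := by
    intro w hw
    have hw' : ∀ i, w i ≠ 0 := fun i => hw i (Finset.mem_univ i)
    have ht := hT w hw'
    have hF' : (inner ℂ (∑ α : Finset (Fin m), (∏ i ∈ α, w i) • Bc α)
        (∑ α : Finset (Fin m), (∏ i ∈ α, w i) • Bc α) : ℂ)
        = ((‖∑ α : Finset (Fin m), (∏ i ∈ α, w i) • Bc α‖ : ℝ) : ℂ)^2 := by
      rw [inner_self_eq_norm_sq_to_K]; rfl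
    have hG' : (inner ℂ (∑ α : Finset (Fin m), (∏ i ∈ α, (conj (w i))⁻¹) • Bc α)
        (∑ α : Finset (Fin m), (∏ i ∈ α, (conj (w i))⁻¹) • Bc α) : ℂ)
        = ((‖∑ α : Finset (Fin m), (∏ i ∈ α, (conj (w i))⁻¹) • Bc α‖ : ℝ) : ℂ)^2 := by
      rw [inner_self_eq_norm_sq_to_K]; rfl
    have htc : (inner ℂ (∑ α : Finset (Fin m), (∏ i ∈ α, w i) • Bc α)
        (∑ α : Finset (Fin m), (∏ i ∈ α, w i) • Bc α) : ℂ)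
        = ((‖∏ i, w i‖ : ℝ) : ℂ)^2 *
          inner ℂ (∑ α : Finset (Fin m), (∏ i ∈ α, (conj (w i))⁻¹) • Bc α)
            (∑ α : Finset (Fin m), (∏ i ∈ α, (conj (w i))⁻¹) • Bc α) := by
      rw [hF', hG']; exact_mod_cast ht
    rw [expandInner, expandInner] at htc
    have hnormsq : ((‖∏ i, w i‖ : ℝ) : ℂ)^2 = (∏ i, w i) * conj (∏ i, w i) := by
      rw [Complex.mul_conj, Complex.normSq_eq_norm_sq]
      norm_cast
    rw [hnormsq] at htc
    -- rewrite conj of products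
    have hconjprod : ∀ x : Finset (Fin m), conj (∏ i ∈ x, w i) = ∏ i ∈ x, conj (w i) :=
      fun x => map_prod (starRingEnd ℂ) _ _
    -- RHS simplification: coefficient terms
    have hrhs : ((∏ i, w i) * conj (∏ i, w i)) *
        ∑ x : Finset (Fin m), ∑ y : Finset (Fin m),
          conj (∏ i ∈ x, (conj (w i))⁻¹) * (∏ i ∈ y, (conj (w i))⁻¹) * cc y x
        = ∑ x : Finset (Fin m), ∑ y : Finset (Fin m),
          cc y x * (∏ i ∈ xᶜ, w i) * ∏ i ∈ yᶜ, conj (w i) := by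
      rw [Finset.mul_sum]
      refine Finset.sum_congr rfl fun x _ => ?_
      rw [Finset.mul_sum]
      refine Finset.sum_congr rfl fun y _ => ?_
      have h1 : conj (∏ i ∈ x, (conj (w i))⁻¹) = ∏ i ∈ x, (w i)⁻¹ := by
        rw [map_prod]; exact Finset.prod_congr rfl fun i _ => by
          rw [map_inv₀, Complex.conj_conj]
      have h2 : (∏ i ∈ xᶜ, w i) = (∏ i, w i) * ∏ i ∈ x, (w i)⁻¹ := by
        rw [← Finset.prod_mul_prod_compl x w]
        field_simp [Finset.prod_ne_zero_iff.mpr (fun i _ => hw' i)]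
        rw [← Finset.prod_mul_distrib]
        exact (Finset.prod_eq_one fun i _ => mul_one_div_cancel (hw' i)).symm
      have h3 : (∏ i ∈ yᶜ, conj (w i)) = conj (∏ i, w i) * ∏ i ∈ y, (conj (w i))⁻¹ := by
        rw [hconjprod, ← Finset.prod_mul_prod_compl y (fun i => conj (w i))]
        have : ∀ i, conj (w i) ≠ 0 := fun i => by
          simp [hw' i]
        field_simp [Finset.prod_ne_zero_iff.mpr (fun i (_ : i ∈ y) => this i)]
        rw [mul_assoc, ← Finset.prod_mul_distrib,
          Finset.prod_eq_one fun i _ => mul_one_div_cancel (this i), mul_one]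
      rw [h1, h2, h3]
      ring
    rw [hrhs] at htc
    -- reindex the RHS sum by complements
    have hre : (∑ x : Finset (Fin m), ∑ y : Finset (Fin m),
          cc y x * (∏ i ∈ xᶜ, w i) * ∏ i ∈ yᶜ, conj (w i))
        = ∑ α : Finset (Fin m), ∑ β : Finset (Fin m),
          cc βᶜ αᶜ * (∏ i ∈ α, w i) * ∏ i ∈ β, conj (w i) := by
      have bij := Function.Involutive.bijective (compl_compl : ∀ x : Finset (Fin m), xᶜᶜ = x)
      refine Fintype.sum_bijective compl bij _ _ fun y => ?_
      refine Fintype.sum_bijective compl bij _ _ fun x => ?_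
      simp [compl_compl]
    rw [hre] at htc
    simp only [Finset.powerset_univ]
    simp only [sub_mul, Finset.sum_sub_distrib]
    rw [sub_eq_zero]
    calc ∑ α : Finset (Fin m), ∑ β : Finset (Fin m),
            cc α β * (∏ i ∈ α, w i) * ∏ i ∈ β, conj (w i)
        = ∑ x : Finset (Fin m), ∑ y : Finset (Fin m),
            conj (∏ i ∈ x, w i) * (∏ i ∈ y, w i) * cc y x := by
          rw [Finset.sum_comm]
          refine Finset.sum_congr rfl fun x _ => Finset.sum_congr rfl fun y _ => ?_
          rw [hconjprod]; ring
      _ = ∑ α : Finset (Fin m), ∑ β : Finset (Fin m),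
            cc βᶜ αᶜ * (∏ i ∈ α, w i) * ∏ i ∈ β, conj (w i) := htc
  have hkey := key (univ : Finset (Fin m)) _ main
  intro α β
  have h := hkey α (Finset.mem_powerset.mpr (Finset.subset_univ α))
    β (Finset.mem_powerset.mpr (Finset.subset_univ β))
  have h' : cc α β = cc βᶜ αᶜ := sub_eq_zero.mp h
  rw [hcc] at h'
  simp only at h'
  rw [h']
  have hc1 : (βᶜ ∩ αᶜ : Finset (Fin m)).card = m - (β ∪ α).card := by
    rw [← Finset.compl_union, Finset.card_compl, Fintype.card_fin]
  have hc2 : (βᶜ : Finset (Fin m)).card = m - β.card := by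
    rw [Finset.card_compl, Fintype.card_fin]
  have hc3 : (αᶜ : Finset (Fin m)).card = m - α.card := by
    rw [Finset.card_compl, Fintype.card_fin]
  have hcu := Finset.card_union_add_card_inter β α
  have hle : (β ∪ α).card ≤ m := by
    simpa using Finset.card_le_univ (β ∪ α)
  have hi : (α ∩ β).card = (β ∩ α).card := by rw [Finset.inter_comm]
  have harg : m - (β ∪ α).card = m + (α ∩ β).card - (α.card + β.card) := by omega
  rw [hc1, hc2, hc3, harg]
end
end

section
/- Let p ∈ ℂ[z_1,z_2,z_3] be multi-affine and stable, and write p(z_1,z_2,z_3) = a(z_1,z_2) + b(z_1,z_2)·z_3. Let b̃(z_1,z_2) = z_1 z_2·conj(b(1/conj(z_1),1/conj(z_2))) be the reflection of b at bidegree (1,1). Then |b̃(z_1,z_2)| < |a(z_1,z_2)| for all (z_1,z_2) in the closed bidisk {(z_1,z_2) : |z_1| ≤ 1, |z_2| ≤ 1}; in particular, the polynomial a + b̃ has no zeros on the closed bidisk. -/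
open MvPolynomial Complex ComplexConjugate Finset

noncomputable section

open Metric Bornology

lemma eval_slice_diff1 (q : MvPolynomial (Fin 2) ℂ) (c : ℂ) :
    Differentiable ℂ (fun w : ℂ => eval ![w, c] q) := by
  induction q using MvPolynomial.induction_on with
  | C r => simp only [eval_C]; exact differentiable_const r
  | add p q hp hq => simp only [eval_add]; exact hp.add hq
  | mul_X p i hp =>
      fin_cases i
      · simp only [eval_mul, eval_X, Matrix.cons_val_zero]
        exact hp.mul differentiable_id
      · simp only [eval_mul, eval_X, Matrix.cons_val_one, Matrix.head_cons]
        exact hp.mul (differentiable_const c)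

lemma eval_slice_diff2 (q : MvPolynomial (Fin 2) ℂ) (c : ℂ) :
    Differentiable ℂ (fun w : ℂ => eval ![c, w] q) := by
  induction q using MvPolynomial.induction_on with
  | C r => simp only [eval_C]; exact differentiable_const r
  | add p q hp hq => simp only [eval_add]; exact hp.add hq
  | mul_X p i hp =>
      fin_cases i
      · simp only [eval_mul, eval_X, Matrix.cons_val_zero]
        exact hp.mul (differentiable_const c)
      · simp only [eval_mul, eval_X, Matrix.cons_val_one, Matrix.head_cons]
        exact hp.mul differentiable_id

lemma eval_cont2 (q : MvPolynomial (Fin 2) ℂ) :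
    Continuous (fun z : ℂ × ℂ => eval ![z.1, z.2] q) := by
  induction q using MvPolynomial.induction_on with
  | C r => simp only [eval_C]; exact continuous_const
  | add p q hp hq => simp only [eval_add]; exact hp.add hq
  | mul_X p i hp =>
      fin_cases i
      · simp only [eval_mul, eval_X, Matrix.cons_val_zero]
        exact hp.mul continuous_fst
      · simp only [eval_mul, eval_X, Matrix.cons_val_one, Matrix.head_cons]
        exact hp.mul continuous_snd



/-- A polynomial is *stable* if it has no zeros on the closed unit polydisk. -/
def IsStable {n : ℕ} (p : MvPolynomial (Fin n) ℂ) : Prop :=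
  ∀ z : Fin n → ℂ, (∀ i, ‖z i‖ ≤ 1) → eval z p ≠ 0

/-- `pt` is the reflection of the multi-affine polynomial `p`
(at multidegree `(1,…,1)`):  `p̃(z) = z₁⋯zₙ · conj (p (1/conj z₁, …, 1/conj zₙ))`. -/
def IsReflection {n : ℕ} (p pt : MvPolynomial (Fin n) ℂ) : Prop :=
  ∀ z : Fin n → ℂ, (∀ i, z i ≠ 0) →
    eval z pt = (∏ i, z i) * conj (eval (fun i => (conj (z i))⁻¹) p)

/-- `qt` is the reflection of `q ∈ ℂ[z₁,z₂]` at bidegree `(1,1)`: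
`q̃(z₁,z₂) = z₁ z₂ · conj (q (1/conj z₁, 1/conj z₂))`. -/
def IsReflection2 (q qt : MvPolynomial (Fin 2) ℂ) : Prop :=
  ∀ z1 z2 : ℂ, z1 ≠ 0 → z2 ≠ 0 →
    eval ![z1, z2] qt = z1 * z2 * conj (eval ![(conj z1)⁻¹, (conj z2)⁻¹] q)

/-- for a stable multi-affine `p = a(z₁,z₂) + b(z₁,z₂) z₃`,
`|b̃| < |a|` on the closed bidisk; in particular `a + b̃` has no zeros there. -/
theorem stmt12 (p : MvPolynomial (Fin 3) ℂ) (a b bt : MvPolynomial (Fin 2) ℂ)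
    (hma : ∀ i, p.degreeOf i ≤ 1) (hst : IsStable p)
    (hmaa : ∀ i, a.degreeOf i ≤ 1) (hmab : ∀ i, b.degreeOf i ≤ 1)
    (hp : ∀ z : Fin 3 → ℂ,
      eval z p = eval ![z 0, z 1] a + eval ![z 0, z 1] b * z 2)
    (hbt : IsReflection2 b bt) :
    ∀ z1 z2 : ℂ, ‖z1‖ ≤ 1 → ‖z2‖ ≤ 1 →
      ‖eval ![z1, z2] bt‖ < ‖eval ![z1, z2] a‖ ∧
      eval ![z1, z2] (a + bt) ≠ 0 := by
  -- a has no zeros on the closed bidisk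
  have ha0 : ∀ z1 z2 : ℂ, ‖z1‖ ≤ 1 → ‖z2‖ ≤ 1 → eval ![z1, z2] a ≠ 0 := by
    intro z1 z2 h1 h2 hc
    have := hst ![z1, z2, 0] (by
      intro i; fin_cases i
      · simpa using h1
      · simpa using h2
      · simp)
    rw [hp ![z1, z2, 0]] at this
    simp [hc] at this
  -- |b| < |a| on the closed bidisk
  have hba : ∀ z1 z2 : ℂ, ‖z1‖ ≤ 1 → ‖z2‖ ≤ 1 →
      ‖eval ![z1, z2] b‖ < ‖eval ![z1, z2] a‖ := by
    intro z1 z2 h1 h2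
    by_contra hcon
    push_neg at hcon
    have hb0 : eval ![z1, z2] b ≠ 0 := by
      intro h
      rw [h] at hcon
      simp only [norm_zero] at hcon
      exact ha0 z1 z2 h1 h2 (norm_le_zero_iff.mp hcon)
    set w : ℂ := -(eval ![z1, z2] a / eval ![z1, z2] b) with hw
    have hwle : ‖w‖ ≤ 1 := by
      rw [hw, norm_neg, norm_div]
      exact div_le_one_of_le₀ hcon (norm_nonneg _)
    have := hst ![z1, z2, w] (by
      intro i; fin_cases i
      · simpa using h1
      · simpa using h2
      · simpa using hwle)
    rw [hp ![z1, z2, w]] at this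
    apply this
    simp only [Matrix.cons_val_zero, Matrix.cons_val_one, Matrix.head_cons,
      Matrix.cons_val_two, Matrix.tail_cons]
    rw [hw, mul_neg, mul_div_cancel₀ _ hb0, add_neg_cancel]
  -- on the torus, ‖bt‖ = ‖b‖ < ‖a‖
  have ht : ∀ z1 z2 : ℂ, ‖z1‖ = 1 → ‖z2‖ = 1 →
      ‖eval ![z1, z2] bt‖ < ‖eval ![z1, z2] a‖ := by
    intro z1 z2 h1 h2
    have hz1 : z1 ≠ 0 := by intro h; rw [h] at h1; simp at h1
    have hz2 : z2 ≠ 0 := by intro h; rw [h] at h2; simp at h2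
    have e1 : (conj z1)⁻¹ = z1 := by
      apply inv_eq_of_mul_eq_one_right
      rw [mul_comm, Complex.mul_conj]
      norm_cast
      rw [Complex.normSq_eq_norm_sq, h1]; norm_num
    have e2 : (conj z2)⁻¹ = z2 := by
      apply inv_eq_of_mul_eq_one_right
      rw [mul_comm, Complex.mul_conj]
      norm_cast
      rw [Complex.normSq_eq_norm_sq, h2]; norm_num
    rw [hbt z1 z2 hz1 hz2, e1, e2]
    rw [norm_mul, norm_mul, h1, h2, RCLike.norm_conj]
    simpa using hba z1 z2 h1.le h2.le
  -- maximum of ‖bt‖/‖a‖ over the torus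
  have hTc : IsCompact ((sphere (0:ℂ) 1) ×ˢ (sphere (0:ℂ) 1)) :=
    (isCompact_sphere 0 1).prod (isCompact_sphere 0 1)
  have hTne : ((sphere (0:ℂ) 1) ×ˢ (sphere (0:ℂ) 1)).Nonempty :=
    ⟨(1, 1), by simp⟩
  have hcont : ContinuousOn
      (fun z : ℂ × ℂ => ‖eval ![z.1, z.2] bt‖ / ‖eval ![z.1, z.2] a‖)
      ((sphere (0:ℂ) 1) ×ˢ (sphere (0:ℂ) 1)) := by
    apply ContinuousOn.div ((eval_cont2 bt).norm.continuousOn)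
      ((eval_cont2 a).norm.continuousOn)
    rintro ⟨z1, z2⟩ hz
    simp only [Set.mem_prod, mem_sphere_zero_iff_norm] at hz
    simpa using ha0 z1 z2 hz.1.le hz.2.le
  obtain ⟨zm, hzm, hmax⟩ := hTc.exists_isMaxOn hTne hcont
  set M : ℝ := ‖eval ![zm.1, zm.2] bt‖ / ‖eval ![zm.1, zm.2] a‖ with hM
  simp only [Set.mem_prod, mem_sphere_zero_iff_norm] at hzm
  have hM1 : M < 1 := by
    rw [hM, div_lt_one (norm_pos_iff.mpr (ha0 _ _ hzm.1.le hzm.2.le))]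
    exact ht _ _ hzm.1 hzm.2
  have hMtor : ∀ w v : ℂ, ‖w‖ = 1 → ‖v‖ = 1 →
      ‖eval ![w, v] bt‖ ≤ M * ‖eval ![w, v] a‖ := by
    intro w v hw hv
    have := hmax (show (w, v) ∈ (sphere (0:ℂ) 1) ×ˢ (sphere (0:ℂ) 1) by
      simp [Set.mem_prod, mem_sphere_zero_iff_norm, hw, hv])
    simp only [Set.mem_setOf_eq] at this
    rw [div_le_iff₀ (norm_pos_iff.mpr (ha0 w v hw.le hv.le))] at this
    simpa using this
  -- max principle in the second variable, first variable on the circle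
  have key2 : ∀ w : ℂ, ‖w‖ = 1 → ∀ v : ℂ, ‖v‖ ≤ 1 →
      ‖eval ![w, v] bt‖ ≤ M * ‖eval ![w, v] a‖ := by
    intro w hw v hv
    have ha' : ∀ u : ℂ, u ∈ closedBall (0:ℂ) 1 → eval ![w, u] a ≠ 0 := by
      intro u hu
      exact ha0 w u hw.le (mem_closedBall_zero_iff.mp hu)
    have hd : DiffContOnCl ℂ (fun u => eval ![w, u] bt / eval ![w, u] a)
        (ball (0:ℂ) 1) := by
      constructor
      · exact ((eval_slice_diff2 bt w).differentiableOn).div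
          ((eval_slice_diff2 a w).differentiableOn)
          (fun u hu => ha' u (ball_subset_closedBall hu))
      · rw [closure_ball (0:ℂ) one_ne_zero]
        exact ((eval_slice_diff2 bt w).continuous.continuousOn).div
          ((eval_slice_diff2 a w).continuous.continuousOn) ha'
    have hb := Complex.norm_le_of_forall_mem_frontier_norm_le
      isBounded_ball hd (C := M) ?_ (z := v) ?_
    · rw [norm_div, div_le_iff₀ (norm_pos_iff.mpr (ha0 w v hw.le hv))] at hb
      exact hb
    · intro u hu
      rw [frontier_ball (0:ℂ) one_ne_zero, mem_sphere_zero_iff_norm] at hu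
      rw [norm_div, div_le_iff₀ (norm_pos_iff.mpr (ha0 w u hw.le hu.le))]
      exact hMtor w u hw hu
    · rw [closure_ball (0:ℂ) one_ne_zero, mem_closedBall_zero_iff]
      exact hv
  -- max principle in the first variable
  have key1 : ∀ z1 z2 : ℂ, ‖z1‖ ≤ 1 → ‖z2‖ ≤ 1 →
      ‖eval ![z1, z2] bt‖ ≤ M * ‖eval ![z1, z2] a‖ := by
    intro z1 z2 h1 h2
    have ha' : ∀ u : ℂ, u ∈ closedBall (0:ℂ) 1 → eval ![u, z2] a ≠ 0 := by
      intro u hu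
      exact ha0 u z2 (mem_closedBall_zero_iff.mp hu) h2
    have hd : DiffContOnCl ℂ (fun u => eval ![u, z2] bt / eval ![u, z2] a)
        (ball (0:ℂ) 1) := by
      constructor
      · exact ((eval_slice_diff1 bt z2).differentiableOn).div
          ((eval_slice_diff1 a z2).differentiableOn)
          (fun u hu => ha' u (ball_subset_closedBall hu))
      · rw [closure_ball (0:ℂ) one_ne_zero]
        exact ((eval_slice_diff1 bt z2).continuous.continuousOn).div
          ((eval_slice_diff1 a z2).continuous.continuousOn) ha'
    have hb := Complex.norm_le_of_forall_mem_frontier_norm_le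
      isBounded_ball hd (C := M) ?_ (z := z1) ?_
    · rw [norm_div, div_le_iff₀ (norm_pos_iff.mpr (ha0 z1 z2 h1 h2))] at hb
      exact hb
    · intro u hu
      rw [frontier_ball (0:ℂ) one_ne_zero, mem_sphere_zero_iff_norm] at hu
      rw [norm_div, div_le_iff₀ (norm_pos_iff.mpr (ha0 u z2 hu.le h2))]
      exact key2 u hu z2 h2
    · rw [closure_ball (0:ℂ) one_ne_zero, mem_closedBall_zero_iff]
      exact h1
  intro z1 z2 h1 h2
  have hapos : 0 < ‖eval ![z1, z2] a‖ := norm_pos_iff.mpr (ha0 z1 z2 h1 h2)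
  have hlt : ‖eval ![z1, z2] bt‖ < ‖eval ![z1, z2] a‖ :=
    lt_of_le_of_lt (key1 z1 z2 h1 h2)
      (by nlinarith)
  refine ⟨hlt, ?_⟩
  rw [eval_add]
  intro h
  have : eval ![z1, z2] bt = -eval ![z1, z2] a := by linear_combination h
  rw [this, norm_neg] at hlt
  exact lt_irrefl _ hlt
end
end

section
/- For every integer d ≥ 1 and all z = (z_1,…,z_d) ∈ ℂ^d: 1 − |z_1 z_2 ⋯ z_d|² = ∑_{j=1}^d (1 − |z_j|²) · ∑_{α ⊆ {1,…,d}∖{j}} |z^α|² / (d · C(d−1, |α|)), where C(n,k) denotes the binomial coefficient. -/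
open Complex Finset

private lemma choose_coeff (d k : ℕ) (h1 : 1 ≤ k) (h2 : k ≤ d - 1) (hd : 1 ≤ d) :
    ((d - k : ℕ) : ℝ) / ((d : ℝ) * ((d - 1).choose k : ℝ))
      = (k : ℝ) / ((d : ℝ) * ((d - 1).choose (k - 1) : ℝ)) := by
  have hkd : k ≤ d := le_trans h2 (Nat.sub_le d 1)
  have hc1 : 0 < (d - 1).choose k := Nat.choose_pos h2
  have hc2 : 0 < (d - 1).choose (k - 1) := Nat.choose_pos (le_trans (Nat.sub_le k 1) h2)
  haveI : Nonempty (Fin d) := Fin.pos_iff_nonempty.mp hd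
  have hd0 : (0:ℝ) < (d : ℝ) := by exact_mod_cast hd
  have hn : (d - k) * ((d - 1).choose (k - 1)) = k * ((d - 1).choose k) := by
    have := Nat.choose_succ_right_eq (d - 1) (k - 1)
    rw [Nat.sub_add_cancel h1] at this
    have hdk : d - 1 - (k - 1) = d - k := by omega
    rw [hdk] at this
    rw [mul_comm, ← this, mul_comm]
  rw [div_eq_div_iff (by positivity) (by positivity)]
  have hcast := congrArg (Nat.cast : ℕ → ℝ) hn
  push_cast at hcast ⊢
  nlinarith [hcast]

private lemma key_s13 (d : ℕ) (hd : 1 ≤ d) (w : Fin d → ℝ) :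
    1 - ∏ i, w i =
      ∑ j, (1 - w j) *
        ∑ α ∈ (Finset.univ.erase j).powerset,
          (∏ i ∈ α, w i) / ((d : ℝ) * (((d - 1).choose α.card) : ℝ)) := by
  classical
  set F : Fin d → Finset (Fin d) → ℝ := fun j β =>
    (if j ∈ β then 0 else (∏ i ∈ β, w i) / ((d : ℝ) * (((d - 1).choose β.card) : ℝ)))
      - (if j ∈ β then (∏ i ∈ β, w i) / ((d : ℝ) * (((d - 1).choose (β.card - 1)) : ℝ)) else 0)
    with hF
  have step1 : ∀ j : Fin d,
      (1 - w j) * ∑ α ∈ (Finset.univ.erase j).powerset,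
          (∏ i ∈ α, w i) / ((d : ℝ) * (((d - 1).choose α.card) : ℝ))
      = ∑ β ∈ (Finset.univ : Finset (Fin d)).powerset, F j β := by
    intro j
    have hjE : j ∉ Finset.univ.erase j := Finset.notMem_erase j _
    have huniv : (Finset.univ : Finset (Fin d)) = insert j (Finset.univ.erase j) :=
      (Finset.insert_erase (Finset.mem_univ j)).symm
    conv_rhs => rw [huniv]
    rw [Finset.sum_powerset_insert hjE]
    have h1 : ∀ α ∈ (Finset.univ.erase j).powerset, j ∉ α := by
      intro α hα hj
      exact hjE (Finset.mem_powerset.mp hα hj)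
    have e1 : ∑ α ∈ (Finset.univ.erase j).powerset, F j α
        = ∑ α ∈ (Finset.univ.erase j).powerset,
            (∏ i ∈ α, w i) / ((d : ℝ) * (((d - 1).choose α.card) : ℝ)) := by
      refine Finset.sum_congr rfl fun α hα => ?_
      simp [hF, h1 α hα]
    have e2 : ∑ α ∈ (Finset.univ.erase j).powerset, F j (insert j α)
        = -∑ α ∈ (Finset.univ.erase j).powerset,
            w j * ((∏ i ∈ α, w i) / ((d : ℝ) * (((d - 1).choose α.card) : ℝ))) := by
      rw [← Finset.sum_neg_distrib]
      refine Finset.sum_congr rfl fun α hα => ?_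
      have hjα : j ∉ α := h1 α hα
      simp only [hF, Finset.mem_insert_self, if_pos, Finset.card_insert_of_notMem hjα,
        Nat.add_sub_cancel, Finset.prod_insert hjα]
      rw [zero_sub, mul_div_assoc]
    rw [e1, e2, sub_mul, one_mul, Finset.mul_sum, ← sub_eq_add_neg]
  simp_rw [step1]
  rw [Finset.sum_comm]
  have step2 : ∀ β ∈ (Finset.univ : Finset (Fin d)).powerset,
      ∑ j : Fin d, F j β
        = ((d - β.card : ℕ) : ℝ) * ((∏ i ∈ β, w i) / ((d : ℝ) * (((d - 1).choose β.card) : ℝ)))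
          - (β.card : ℝ) * ((∏ i ∈ β, w i) / ((d : ℝ) * (((d - 1).choose (β.card - 1)) : ℝ))) := by
    intro β _
    rw [Finset.sum_sub_distrib]
    congr 1
    · rw [Finset.sum_ite, Finset.sum_const_zero, Finset.sum_const, zero_add, nsmul_eq_mul]
      congr 2
      rw [Finset.filter_not, Finset.filter_mem_eq_inter, Finset.univ_inter]
      rw [Finset.card_sdiff_of_subset (Finset.subset_univ β), Finset.card_univ, Fintype.card_fin]
    · rw [Finset.sum_ite_mem, Finset.univ_inter, Finset.sum_const, nsmul_eq_mul]
  rw [Finset.sum_congr rfl step2]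
  set T : Finset (Fin d) → ℝ := fun β =>
    ((d - β.card : ℕ) : ℝ) * ((∏ i ∈ β, w i) / ((d : ℝ) * (((d - 1).choose β.card) : ℝ)))
      - (β.card : ℝ) * ((∏ i ∈ β, w i) / ((d : ℝ) * (((d - 1).choose (β.card - 1)) : ℝ)))
    with hT
  haveI : Nonempty (Fin d) := Fin.pos_iff_nonempty.mp hd
  have hd0 : (0:ℝ) < (d : ℝ) := by exact_mod_cast hd
  have hTempty : T ∅ = 1 := by
    simp only [hT, Finset.card_empty, Finset.prod_empty, Nat.choose_zero_right, Nat.sub_zero,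
      Nat.zero_sub, Nat.cast_zero, Nat.cast_one, mul_one, zero_mul, sub_zero]
    field_simp
  have hTuniv : T Finset.univ = -(∏ i, w i) := by
    have hcard : (Finset.univ : Finset (Fin d)).card = d := by
      rw [Finset.card_univ, Fintype.card_fin]
    simp only [hT, hcard, Nat.sub_self, Nat.cast_zero, zero_mul, zero_sub,
      Nat.choose_self, Nat.cast_one, mul_one, neg_inj]
    field_simp
  have hTzero : ∀ β ∈ ((Finset.univ : Finset (Fin d)).powerset).erase ∅,
      β ≠ Finset.univ → T β = 0 := by
    intro β hβ hne
    have hβne : β ≠ ∅ := (Finset.mem_erase.mp hβ).1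
    have h1 : 1 ≤ β.card := Finset.card_pos.mpr (Finset.nonempty_of_ne_empty hβne)
    have h2 : β.card ≤ d - 1 := by
      have : β.card < d := by
        have := Finset.card_lt_card (Finset.ssubset_univ_iff.mpr hne)
        simpa [Finset.card_univ] using this
      omega
    have h := choose_coeff d β.card h1 h2 hd
    simp only [hT]
    linear_combination (∏ i ∈ β, w i) * h
  rw [← Finset.add_sum_erase _ T (Finset.empty_mem_powerset _)]
  rw [Finset.sum_eq_single Finset.univ hTzero (by
    intro h
    exact absurd (Finset.mem_erase.mpr ⟨(Finset.univ_nonempty).ne_empty, Finset.mem_powerset_self _⟩) h)]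
  rw [hTempty, hTuniv]
  ring


/-- for every `d ≥ 1` and `z ∈ ℂ^d`,
`1 − |z₁⋯z_d|² = ∑ⱼ (1 − |zⱼ|²) ∑_{α ⊆ [d]∖{j}} |z^α|² / (d·C(d−1,|α|))`. -/
theorem stmt13 (d : ℕ) (hd : 1 ≤ d) (z : Fin d → ℂ) :
    1 - ‖∏ i, z i‖ ^ 2 =
      ∑ j, (1 - ‖z j‖ ^ 2) *
        ∑ α ∈ (Finset.univ.erase j).powerset,
          ‖∏ i ∈ α, z i‖ ^ 2 / ((d : ℝ) * ((d - 1).choose α.card : ℝ)) := by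
  have h := key_s13 d hd (fun i => ‖z i‖ ^ 2)
  simp_rw [norm_prod, ← Finset.prod_pow]
  exact h
end

section
/- Let p ∈ ℂ[z] have degree d with reflection p̃(z) = z^d·conj(p(1/conj(z))), and suppose A(z) = ∑_{j=0}^{d−1} A_j z^j is a ℂ^N-valued vector polynomial such that |p(z)|² − |p̃(z)|² = (1 − |z|²)·|A(z)|² for all z ∈ ℂ. Then |A(z)|² = |z|^{2(d−1)}·|A(1/conj(z))|² for all z ≠ 0, and consequently ⟨A_j, A_k⟩ = ⟨A_{d−1−k}, A_{d−1−j}⟩ for all 0 ≤ j, k ≤ d−1. -/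
open Complex ComplexConjugate Finset Polynomial

noncomputable section

lemma unit_infinite : {w : ℂ | ‖w‖ = 1}.Infinite := by
  have : Infinite (Set.Ioo (0:ℝ) 1) := Set.Ioo.infinite one_pos
  apply Set.infinite_of_injective_forall_mem
    (f := fun t : Set.Ioo (0:ℝ) 1 => Complex.exp (↑(t:ℝ) * Complex.I))
  case hi =>
    intro a b hab
    simp only at hab
    rw [Complex.exp_eq_exp_iff_exists_int] at hab
    obtain ⟨n, hn⟩ := hab
    have hre : (a:ℝ) = (b:ℝ) + n * (2 * Real.pi) := by
      have := congrArg Complex.im hn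
      simpa using this
    have ha := a.2; have hb := b.2
    have hpi : (3:ℝ) < Real.pi := Real.pi_gt_three
    have hn0 : n = 0 := by
      rcases lt_trichotomy n 0 with h | h | h
      · exfalso
        have : (n:ℝ) ≤ -1 := by exact_mod_cast Int.le_sub_one_of_lt h
        nlinarith [ha.1, ha.2, hb.1, hb.2]
      · exact h
      · exfalso
        have : (1:ℝ) ≤ n := by exact_mod_cast h
        nlinarith [ha.1, ha.2, hb.1, hb.2]
    have : (a:ℝ) = (b:ℝ) := by rw [hre, hn0]; simp
    exact Subtype.ext this
  case hf =>
    intro a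
    simpa using Complex.norm_exp_ofReal_mul_I (a:ℝ)

lemma kernelA (n m : ℕ) (M : ℕ → ℕ → ℂ)
    (h : ∀ z : ℂ, ∑ j ∈ range n, ∑ k ∈ range n, M j k * z ^ j * (conj z) ^ k = 0)
    (w : ℂ) :
    ∑ j ∈ range n, ∑ k ∈ range n,
      (if j + k = m then M j k * w ^ j * (conj w) ^ k else 0) = 0 := by
  set q : Polynomial ℂ :=
    ∑ j ∈ range n, ∑ k ∈ range n, C (M j k * w ^ j * (conj w) ^ k) * X ^ (j + k) with hq
  have hroot : ∀ t : ℝ, q.IsRoot (t : ℂ) := by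
    intro t
    have := h ((t : ℂ) * w)
    simp only [IsRoot, hq, eval_finset_sum, eval_mul, eval_C, eval_pow, eval_X]
    rw [← this]
    apply Finset.sum_congr rfl; intro j _
    apply Finset.sum_congr rfl; intro k _
    simp only [map_mul, Complex.conj_ofReal, mul_pow]
    ring
  have hq0 : q = 0 := by
    apply Polynomial.eq_zero_of_infinite_isRoot
    apply Set.infinite_of_injective_forall_mem (f := fun t : ℝ => (t : ℂ))
    case hi => exact fun a b hab => Complex.ofReal_injective hab
    case hf => exact fun t => hroot t
  have := congrArg (fun p : Polynomial ℂ => p.coeff m) hq0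
  simp only [hq, finset_sum_coeff, coeff_C_mul_X_pow, coeff_zero] at this
  refine Eq.trans ?_ this
  exact Finset.sum_congr rfl fun j _ => Finset.sum_congr rfl fun k _ => if_congr eq_comm rfl rfl

lemma kernel (n : ℕ) (M : ℕ → ℕ → ℂ)
    (h : ∀ z : ℂ, ∑ j ∈ range n, ∑ k ∈ range n, M j k * z ^ j * (conj z) ^ k = 0)
    {j₀ k₀ : ℕ} (hj : j₀ < n) (hk : k₀ < n) : M j₀ k₀ = 0 := by
  set m := j₀ + k₀ with hm
  set r : Polynomial ℂ :=
    ∑ j ∈ range n, ∑ k ∈ range n, C (if j + k = m then M j k else 0) * X ^ (2 * j) with hr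
  have hroot : ∀ w : ℂ, ‖w‖ = 1 → r.IsRoot w := by
    intro w hw
    have hw1 : w * conj w = 1 := by
      rw [Complex.mul_conj, Complex.normSq_eq_norm_sq]
      norm_cast
      rw [hw]; norm_num
    have hA := kernelA n m M h w
    have : r.eval w = w ^ m * (∑ j ∈ range n, ∑ k ∈ range n,
        (if j + k = m then M j k * w ^ j * (conj w) ^ k else 0)) := by
      simp only [hr, eval_finset_sum, eval_mul, eval_C, eval_pow, eval_X, Finset.mul_sum]
      apply Finset.sum_congr rfl; intro j _
      apply Finset.sum_congr rfl; intro k _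
      by_cases hc : j + k = m
      · simp only [hc, if_true, if_pos]
        have : w ^ m = w ^ j * w ^ k := by rw [← pow_add, hc]
        rw [this]
        have : (conj w) ^ k * w ^ k = 1 := by
          rw [← mul_pow, mul_comm, hw1, one_pow]
        calc M j k * w ^ (2 * j)
            = M j k * (w ^ j * w ^ j) := by rw [two_mul, pow_add]
          _ = w ^ j * w ^ k * (M j k * w ^ j * (conj w) ^ k) := by
              rw [← mul_one (M j k * (w ^ j * w ^ j)), ← this]; ring
      · simp [hc]
    rw [IsRoot, this, hA, mul_zero]
  have hr0 : r = 0 :=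
    Polynomial.eq_zero_of_infinite_isRoot r (unit_infinite.mono (fun w hw => hroot w hw))
  have hc := congrArg (fun p : Polynomial ℂ => p.coeff (2 * j₀)) hr0
  simp only [hr, finset_sum_coeff, coeff_C_mul_X_pow, coeff_zero] at hc
  rw [Finset.sum_eq_single j₀ ?_ ?_] at hc
  · rw [Finset.sum_eq_single k₀ ?_ ?_] at hc
    · simpa [hm] using hc
    · intro k _ hkk
      have : ¬ (j₀ + k = m) := by omega
      simp [this]
    · intro habs; exact absurd (Finset.mem_range.mpr hk) habs
  · intro j _ hjj
    have : ¬ (2 * j₀ = 2 * j) := by omega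
    simp [this]
  · intro habs; exact absurd (Finset.mem_range.mpr hj) habs

lemma L1 (n : ℕ) (a : ℕ → ℂ) (z : ℂ) :
    ((‖∑ j ∈ range n, a j * z ^ j‖ ^ 2 : ℝ) : ℂ) =
      ∑ j ∈ range n, ∑ k ∈ range n, (a j * conj (a k)) * (z ^ j * (conj z) ^ k) := by
  have h1 : ((‖∑ j ∈ range n, a j * z ^ j‖ ^ 2 : ℝ) : ℂ)
      = (∑ j ∈ range n, a j * z ^ j) * conj (∑ k ∈ range n, a k * z ^ k) := by
    rw [Complex.mul_conj, Complex.normSq_eq_norm_sq]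
  rw [h1, map_sum, Finset.sum_mul_sum]
  apply Finset.sum_congr rfl; intro j _
  apply Finset.sum_congr rfl; intro k _
  simp only [map_mul, map_pow]
  ring

lemma L2 (n N : ℕ) (Ac : ℕ → EuclideanSpace ℂ (Fin N)) (z : ℂ) :
    ((‖∑ j ∈ range n, z ^ j • Ac j‖ ^ 2 : ℝ) : ℂ) =
      ∑ j ∈ range n, ∑ k ∈ range n,
        (inner ℂ (Ac k) (Ac j) : ℂ) * (z ^ j * (conj z) ^ k) := by
  have h1 : ((‖∑ j ∈ range n, z ^ j • Ac j‖ ^ 2 : ℝ) : ℂ)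
      = inner ℂ (∑ k ∈ range n, z ^ k • Ac k) (∑ j ∈ range n, z ^ j • Ac j) := by
    rw [inner_self_eq_norm_sq_to_K]; norm_cast
  rw [h1, sum_inner]
  rw [Finset.sum_comm]
  apply Finset.sum_congr rfl; intro j _
  rw [inner_sum]
  apply Finset.sum_congr rfl; intro k _
  rw [inner_smul_left, inner_smul_right]
  simp only [map_pow]
  ring

noncomputable def Bf (d N : ℕ) (Ac : ℕ → EuclideanSpace ℂ (Fin N)) (j k : ℕ) : ℂ :=
  if j < d ∧ k < d then inner ℂ (Ac k) (Ac j) else 0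



lemma sumzero (d N : ℕ) (c : ℕ → ℂ) (Ac : ℕ → EuclideanSpace ℂ (Fin N))
    (hCD : ∀ z : ℂ,
      ‖∑ j ∈ Finset.range (d + 1), c j * z ^ j‖ ^ 2 -
          ‖∑ j ∈ Finset.range (d + 1), conj (c (d - j)) * z ^ j‖ ^ 2 =
        (1 - ‖z‖ ^ 2) * ‖∑ j ∈ Finset.range d, z ^ j • Ac j‖ ^ 2) (z : ℂ) :
    ∑ j ∈ range (d+1), ∑ k ∈ range (d+1),
      (c j * conj (c k) - conj (c (d-j)) * c (d-k) - Bf d N Ac j k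
        + (if 1 ≤ j ∧ 1 ≤ k then Bf d N Ac (j-1) (k-1) else 0)) * (z ^ j * (conj z) ^ k)
      = 0 := by
  have hzz : ((‖z‖ ^ 2 : ℝ) : ℂ) = z * conj z := by
    rw [Complex.mul_conj, Complex.normSq_eq_norm_sq]
  have h0 := congrArg (fun x : ℝ => (x : ℂ)) (hCD z)
  simp only [Complex.ofReal_sub, Complex.ofReal_mul, Complex.ofReal_one] at h0
  rw [L1 (d+1) c z, L1 (d+1) (fun j => conj (c (d-j))) z, L2 d N Ac z, hzz] at h0
  simp only [RingHomCompTriple.comp_apply, RingHom.id_apply, Complex.conj_conj] at h0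
  -- expand the goal sum into four sums
  have expand : ∑ j ∈ range (d+1), ∑ k ∈ range (d+1),
      (c j * conj (c k) - conj (c (d-j)) * c (d-k) - Bf d N Ac j k
        + (if 1 ≤ j ∧ 1 ≤ k then Bf d N Ac (j-1) (k-1) else 0)) * (z ^ j * (conj z) ^ k)
      = (∑ j ∈ range (d+1), ∑ k ∈ range (d+1), (c j * conj (c k)) * (z ^ j * (conj z) ^ k))
      - (∑ j ∈ range (d+1), ∑ k ∈ range (d+1), (conj (c (d-j)) * c (d-k)) * (z ^ j * (conj z) ^ k))
      - (∑ j ∈ range (d+1), ∑ k ∈ range (d+1), Bf d N Ac j k * (z ^ j * (conj z) ^ k))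
      + (∑ j ∈ range (d+1), ∑ k ∈ range (d+1),
          (if 1 ≤ j ∧ 1 ≤ k then Bf d N Ac (j-1) (k-1) else 0) * (z ^ j * (conj z) ^ k)) := by
    simp only [sub_mul, add_mul, Finset.sum_add_distrib, Finset.sum_sub_distrib]
  have hSB : ∑ j ∈ range (d+1), ∑ k ∈ range (d+1), Bf d N Ac j k * (z ^ j * (conj z) ^ k)
      = ∑ j ∈ range d, ∑ k ∈ range d,
          (inner ℂ (Ac k) (Ac j) : ℂ) * (z ^ j * (conj z) ^ k) := by
    rw [Finset.sum_range_succ]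
    have h1 : ∑ k ∈ range (d+1), Bf d N Ac d k * (z ^ d * (conj z) ^ k) = 0 := by
      simp [Bf]
    rw [h1, add_zero]
    apply Finset.sum_congr rfl; intro j hj
    rw [Finset.sum_range_succ]
    have h2 : Bf d N Ac j d * (z ^ j * (conj z) ^ d) = 0 := by simp [Bf]
    rw [h2, add_zero]
    apply Finset.sum_congr rfl; intro k hk
    rw [Bf, if_pos ⟨Finset.mem_range.mp hj, Finset.mem_range.mp hk⟩]
  have hSsh : ∑ j ∈ range (d+1), ∑ k ∈ range (d+1),
      (if 1 ≤ j ∧ 1 ≤ k then Bf d N Ac (j-1) (k-1) else 0) * (z ^ j * (conj z) ^ k)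
      = (z * conj z) * ∑ j ∈ range d, ∑ k ∈ range d,
          (inner ℂ (Ac k) (Ac j) : ℂ) * (z ^ j * (conj z) ^ k) := by
    rw [Finset.sum_range_succ']
    have h1 : ∑ k ∈ range (d+1),
        (if 1 ≤ 0 ∧ 1 ≤ k then Bf d N Ac (0-1) (k-1) else 0) * (z ^ 0 * (conj z) ^ k) = 0 := by
      simp
    rw [h1, add_zero, Finset.mul_sum]
    apply Finset.sum_congr rfl; intro j hj
    rw [Finset.sum_range_succ']
    have h2 : (if 1 ≤ j+1 ∧ 1 ≤ 0 then Bf d N Ac (j+1-1) (0-1) else 0)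
        * (z ^ (j+1) * (conj z) ^ 0) = 0 := by simp
    rw [h2, add_zero, Finset.mul_sum]
    apply Finset.sum_congr rfl; intro k hk
    have hc : (1 ≤ j+1 ∧ 1 ≤ k+1) := ⟨Nat.le_add_left 1 j, Nat.le_add_left 1 k⟩
    rw [if_pos hc]
    simp only [Nat.add_sub_cancel]
    rw [Bf, if_pos ⟨Finset.mem_range.mp hj, Finset.mem_range.mp hk⟩]
    ring
  rw [expand, hSB, hSsh]
  linear_combination h0



lemma coeffEq (d N : ℕ) (c : ℕ → ℂ) (Ac : ℕ → EuclideanSpace ℂ (Fin N))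
    (sz : ∀ z : ℂ, ∑ j ∈ range (d+1), ∑ k ∈ range (d+1),
      (c j * conj (c k) - conj (c (d-j)) * c (d-k) - Bf d N Ac j k
        + (if 1 ≤ j ∧ 1 ≤ k then Bf d N Ac (j-1) (k-1) else 0)) * (z ^ j * (conj z) ^ k)
      = 0) :
    ∀ j k, j ≤ d → k ≤ d →
      Bf d N Ac j k - (if 1 ≤ j ∧ 1 ≤ k then Bf d N Ac (j-1) (k-1) else 0)
        = c j * conj (c k) - conj (c (d-j)) * c (d-k) := by
  intro j k hj hk
  have h := kernel (d+1)
    (fun j k => c j * conj (c k) - conj (c (d-j)) * c (d-k) - Bf d N Ac j k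
        + (if 1 ≤ j ∧ 1 ≤ k then Bf d N Ac (j-1) (k-1) else 0))
    (fun z => Eq.trans
      (Finset.sum_congr rfl fun j _ => Finset.sum_congr rfl fun k _ => by ring) (sz z))
    (Nat.lt_succ_of_le hj) (Nat.lt_succ_of_le hk)
  linear_combination -h

lemma Bsymm (d N : ℕ) (hd : 1 ≤ d) (c : ℕ → ℂ) (Ac : ℕ → EuclideanSpace ℂ (Fin N))
    (ce : ∀ j k, j ≤ d → k ≤ d →
      Bf d N Ac j k - (if 1 ≤ j ∧ 1 ≤ k then Bf d N Ac (j-1) (k-1) else 0)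
        = c j * conj (c k) - conj (c (d-j)) * c (d-k)) :
    ∀ j k, j < d → k < d → Bf d N Ac j k = Bf d N Ac (d-1-k) (d-1-j) := by
  -- the antisymmetric relation
  have R : ∀ j k, j ≤ d → k ≤ d →
      Bf d N Ac j k - (if 1 ≤ j ∧ 1 ≤ k then Bf d N Ac (j-1) (k-1) else 0)
      = -(Bf d N Ac (d-k) (d-j)
          - (if 1 ≤ d-k ∧ 1 ≤ d-j then Bf d N Ac (d-k-1) (d-j-1) else 0)) := by
    intro j k hj hk
    rw [ce j k hj hk, ce (d-k) (d-j) (Nat.sub_le d k) (Nat.sub_le d j),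
      Nat.sub_sub_self hk, Nat.sub_sub_self hj]
    ring
  have base0 : ∀ k, k < d → Bf d N Ac 0 k = Bf d N Ac (d-1-k) (d-1) := by
    intro k hk
    have h := R 0 k (Nat.zero_le d) (le_of_lt hk)
    rw [if_neg (by omega), if_pos (by omega : 1 ≤ d - k ∧ 1 ≤ d - 0)] at h
    have h2 : Bf d N Ac (d-k) (d-0) = 0 := by
      rw [Bf, if_neg (by omega)]
    rw [h2] at h
    have h3 : d - k - 1 = d - 1 - k := by omega
    have h4 : d - 0 - 1 = d - 1 := by omega
    rw [h3, h4] at h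
    linear_combination h
  have base0' : ∀ j, j < d → Bf d N Ac j 0 = Bf d N Ac (d-1) (d-1-j) := by
    intro j hj
    have h := R j 0 (le_of_lt hj) (Nat.zero_le d)
    rw [if_neg (by omega), if_pos (by omega : 1 ≤ d - 0 ∧ 1 ≤ d - j)] at h
    have h2 : Bf d N Ac (d-0) (d-j) = 0 := by
      rw [Bf, if_neg (by omega)]
    rw [h2] at h
    have h3 : d - j - 1 = d - 1 - j := by omega
    have h4 : d - 0 - 1 = d - 1 := by omega
    rw [h3, h4] at h
    linear_combination h
  have step : ∀ j k, j + 1 < d → k + 1 < d →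
      Bf d N Ac (j+1) (k+1) - Bf d N Ac (d-1-(k+1)) (d-1-(j+1))
      = Bf d N Ac j k - Bf d N Ac (d-1-k) (d-1-j) := by
    intro j k hj hk
    have h := R (j+1) (k+1) (by omega) (by omega)
    rw [if_pos (by omega : 1 ≤ j+1 ∧ 1 ≤ k+1),
      if_pos (by omega : 1 ≤ d-(k+1) ∧ 1 ≤ d-(j+1))] at h
    simp only [Nat.add_sub_cancel] at h
    have e1 : d - (k+1) = d - 1 - k := by omega
    have e2 : d - (j+1) = d - 1 - j := by omega
    have e3 : d - (k+1) - 1 = d - 1 - (k+1) := by omega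
    have e4 : d - (j+1) - 1 = d - 1 - (j+1) := by omega
    rw [e3, e4, e1, e2] at h
    linear_combination h
  intro j
  induction j with
  | zero =>
    intro k hj hk
    exact base0 k hk
  | succ j ih =>
    intro k hj hk
    cases k with
    | zero =>
      exact base0' (j+1) hj
    | succ k =>
      have hs := step j k hj hk
      have hi := ih k (by omega) (by omega)
      linear_combination hs + hi

/-- if `p(z) = ∑_{j=0}^d p_j z^j` has degree `d`,
`p̃(z) = ∑_{j=0}^d conj(p_{d−j}) z^j`, and `A(z) = ∑_{j=0}^{d−1} A_j z^j` is a
`ℂ^N`-valued polynomial with `|p(z)|² − |p̃(z)|² = (1 − |z|²)|A(z)|²` for all `z`, then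
`|A(z)|² = |z|^{2(d−1)} |A(1/conj z)|²` for `z ≠ 0`, and
`⟨A_j, A_k⟩ = ⟨A_{d−1−k}, A_{d−1−j}⟩` for `0 ≤ j, k ≤ d−1`. -/


theorem stmt16 (d N : ℕ) (hd : 1 ≤ d) (c : ℕ → ℂ) (hcd : c d ≠ 0)
    (Ac : ℕ → EuclideanSpace ℂ (Fin N))
    (hCD : ∀ z : ℂ,
      ‖∑ j ∈ Finset.range (d + 1), c j * z ^ j‖ ^ 2 -
          ‖∑ j ∈ Finset.range (d + 1), conj (c (d - j)) * z ^ j‖ ^ 2 =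
        (1 - ‖z‖ ^ 2) * ‖∑ j ∈ Finset.range d, z ^ j • Ac j‖ ^ 2) :
    (∀ z : ℂ, z ≠ 0 →
      ‖∑ j ∈ Finset.range d, z ^ j • Ac j‖ ^ 2 =
        ‖z‖ ^ (2 * (d - 1)) *
          ‖∑ j ∈ Finset.range d, ((conj z)⁻¹) ^ j • Ac j‖ ^ 2) ∧
    (∀ j k : ℕ, j ≤ d - 1 → k ≤ d - 1 →
      (inner ℂ (Ac k) (Ac j) : ℂ) = inner ℂ (Ac (d - 1 - j)) (Ac (d - 1 - k))) := by
  have bs := Bsymm d N hd c Ac (coeffEq d N c Ac (sumzero d N c Ac hCD))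
  have binner : ∀ j k, j < d → k < d → (inner ℂ (Ac k) (Ac j) : ℂ)
      = inner ℂ (Ac (d-1-j)) (Ac (d-1-k)) := by
    intro j k hj hk
    have h := bs j k hj hk
    rw [Bf, if_pos ⟨hj, hk⟩, Bf, if_pos ⟨by omega, by omega⟩] at h
    exact h
  constructor
  · intro z hz
    have hzc : conj z ≠ 0 := by
      intro h
      apply hz
      have := congrArg conj h
      simpa using this
    apply Complex.ofReal_injective
    rw [Complex.ofReal_mul, L2 d N Ac z, L2 d N Ac ((conj z)⁻¹)]
    have hzz : ((‖z‖ ^ 2 : ℝ) : ℂ) = z * conj z := by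
      rw [Complex.mul_conj, Complex.normSq_eq_norm_sq]
    have hpow : ((‖z‖ ^ (2*(d-1)) : ℝ) : ℂ) = (z * conj z) ^ (d-1) := by
      rw [pow_mul]
      push_cast
      rw [← hzz]
      push_cast
      ring
    rw [hpow]
    have hcc : conj ((conj z)⁻¹) = z⁻¹ := by
      rw [map_inv₀, Complex.conj_conj]
    rw [hcc]
    -- now pure algebra
    rw [Finset.mul_sum]
    have hterm : ∀ j ∈ range d,
        (z * conj z) ^ (d-1) * (∑ k ∈ range d,
          (inner ℂ (Ac k) (Ac j) : ℂ) * (((conj z)⁻¹) ^ j * (z⁻¹) ^ k))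
        = ∑ k ∈ range d,
          (inner ℂ (Ac k) (Ac j) : ℂ) * (z ^ (d-1-k) * (conj z) ^ (d-1-j)) := by
      intro j hj
      rw [Finset.mul_sum]
      apply Finset.sum_congr rfl; intro k hk
      have hj' := Finset.mem_range.mp hj
      have hk' := Finset.mem_range.mp hk
      have e1 : z ^ (d-1) = z ^ (d-1-k) * z ^ k := by
        rw [← pow_add]; congr 1; omega
      have e2 : (conj z) ^ (d-1) = (conj z) ^ (d-1-j) * (conj z) ^ j := by
        rw [← pow_add]; congr 1; omega
      rw [mul_pow, e1, e2]
      field_simp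
      have h1 : z ^ k * z⁻¹ ^ k = 1 := by rw [← mul_pow, mul_inv_cancel₀ hz, one_pow]
      have h2 : conj z ^ j * (conj z)⁻¹ ^ j = 1 := by rw [← mul_pow, mul_inv_cancel₀ hzc, one_pow]
      linear_combination (inner ℂ (Ac k) (Ac j)) * (z ^ k * z⁻¹ ^ k) * h2 + (inner ℂ (Ac k) (Ac j)) * h1
    rw [Finset.sum_congr rfl hterm]
    rw [← Finset.sum_product' (range d) (range d)
      (fun j k => (inner ℂ (Ac k) (Ac j) : ℂ) * (z ^ j * (conj z) ^ k)),
      ← Finset.sum_product' (range d) (range d)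
      (fun j k => (inner ℂ (Ac k) (Ac j) : ℂ) * (z ^ (d-1-k) * (conj z) ^ (d-1-j)))]
    refine Finset.sum_nbij' (fun p => (d-1-p.2, d-1-p.1)) (fun p => (d-1-p.2, d-1-p.1))
      ?_ ?_ ?_ ?_ ?_
    · rintro ⟨a, b⟩ hab
      simp only [Finset.mem_product, Finset.mem_range] at hab ⊢
      omega
    · rintro ⟨a, b⟩ hab
      simp only [Finset.mem_product, Finset.mem_range] at hab ⊢
      omega
    · rintro ⟨a, b⟩ hab
      simp only [Finset.mem_product, Finset.mem_range] at hab
      simp only [Prod.mk.injEq]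
      omega
    · rintro ⟨a, b⟩ hab
      simp only [Finset.mem_product, Finset.mem_range] at hab
      simp only [Prod.mk.injEq]
      omega
    · rintro ⟨a, b⟩ hab
      simp only [Finset.mem_product, Finset.mem_range] at hab
      simp only
      have e1 : d-1-(d-1-b) = b := by omega
      have e2 : d-1-(d-1-a) = a := by omega
      rw [e1, e2, binner a b (by omega) (by omega)]
  · intro j k hj hk
    exact binner j k (by omega) (by omega)
end
end

section
/- Let p ∈ ℂ[z_1,…,z_n] be an Agler denominator of multidegree (d_1,…,d_n). Then there exists a sums-of-squares decomposition |p(z)|² − |p̃(z)|² = ∑_{j=1}^n (1 − |z_j|²)·SOS_j(z) in which each SOS_j is a sum of squared moduli of at most d_j·∏_{k≠j}(d_k + 1) polynomials, each of degree at most d_j − 1 in z_j and at most d_k in z_k for every k ≠ j. -/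
open MvPolynomial Complex ComplexConjugate Finset

noncomputable section

/-- `pt` is the reflection of `p` at multidegree `d`:
`p̃(z) = z₁^{d₁}⋯zₙ^{dₙ} · conj (p (1/conj z₁, …, 1/conj zₙ))`. -/
def IsReflectionAt {n : ℕ} (d : Fin n → ℕ) (p pt : MvPolynomial (Fin n) ℂ) : Prop :=
  ∀ z : Fin n → ℂ, (∀ i, z i ≠ 0) →
    eval z pt = (∏ i, z i ^ d i) * conj (eval (fun i => (conj (z i))⁻¹) p)

namespace S17

section
open MvPolynomial Complex ComplexConjugate Finset


/-- A multivariate polynomial over ℂ vanishing on a product of infinite sets is zero. -/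
lemma mv_zero_of_vanish : ∀ (n : ℕ) (S : Fin n → Set ℂ), (∀ i, (S i).Infinite) →
    ∀ q : MvPolynomial (Fin n) ℂ,
      (∀ z : Fin n → ℂ, (∀ i, z i ∈ S i) → eval z q = 0) → q = 0 := by
  intro n
  induction n with
  | zero =>
    intro S hS q h
    obtain ⟨c, rfl⟩ := MvPolynomial.C_surjective (Fin 0) q
    have := h (fun i => i.elim0) (fun i => i.elim0)
    simpa using this
  | succ n ih =>
    intro S hS q h
    have hQ : ∀ m, (MvPolynomial.finSuccEquiv ℂ n q).coeff m = 0 := by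
      intro m
      apply ih (fun i => S i.succ) (fun i => hS _)
      intro z hz
      have hpoly : Polynomial.map (eval z) (MvPolynomial.finSuccEquiv ℂ n q) = 0 := by
        apply Polynomial.eq_zero_of_infinite_isRoot
        refine Set.Infinite.mono ?_ (hS 0)
        intro y hy
        show Polynomial.IsRoot _ y
        rw [Polynomial.IsRoot, ← MvPolynomial.eval_eq_eval_mv_eval']
        refine h (Fin.cons y z) ?_
        intro i
        refine Fin.cases ?_ ?_ i
        · simpa using hy
        · intro j; simpa using hz j
      have := congrArg (fun P => Polynomial.coeff P m) hpoly
      simpa [MvPolynomial.coeff_eval_eq_eval_coeff] using this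
    have : MvPolynomial.finSuccEquiv ℂ n q = 0 := Polynomial.ext fun m => by simp [hQ m]
    exact (map_eq_zero_iff _ (AlgEquiv.injective _)).mp this


end

section
open Polynomial Complex ComplexConjugate
open scoped Polynomial.Bivariate


/-- Doubling: a bivariate polynomial vanishing on the "conjugate diagonal" is zero. -/
lemma doubling (p : ℂ[X][Y]) (h : ∀ w : ℂ, p.evalEval w (conj w) = 0) : p = 0 := by
  have hA : ∀ (y : ℝ) (x : ℂ), p.evalEval (x + I*y) (x - I*y) = 0 := by
    intro y
    set f : ℂ[X] →+* ℂ[X] :=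
      (Polynomial.aeval (Polynomial.X + Polynomial.C (I*(y:ℂ)))).toRingHom with hf
    set py : ℂ[X] := Polynomial.eval₂ f (Polynomial.X - Polynomial.C (I*(y:ℂ))) p with hpy
    have key : ∀ x : ℂ, py.eval x = p.evalEval (x + I*y) (x - I*y) := by
      intro x
      have h1 : (Polynomial.evalRingHom x).comp f = Polynomial.evalRingHom (x + I*y) := by
        apply Polynomial.ringHom_ext <;> simp [hf]
      have h2 : (Polynomial.evalRingHom x) (Polynomial.eval₂ f
          (Polynomial.X - Polynomial.C (I*(y:ℂ))) p)
          = Polynomial.eval₂ ((Polynomial.evalRingHom x).comp f)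
            ((Polynomial.evalRingHom x) (Polynomial.X - Polynomial.C (I*(y:ℂ)))) p :=
        Polynomial.hom_eval₂ _ _ _ _
      have h3 : (Polynomial.evalRingHom x) (Polynomial.X - Polynomial.C (I*(y:ℂ)))
          = x - I*y := by simp
      rw [hpy]
      show (Polynomial.evalRingHom x) _ = _
      rw [h2, h1, h3, Polynomial.eval₂_evalRingHom]
    have hpy0 : py = 0 := by
      apply Polynomial.eq_zero_of_infinite_isRoot
      refine Set.Infinite.mono ?_ (Set.infinite_range_of_injective Complex.ofReal_injective)
      rintro - ⟨r, rfl⟩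
      show Polynomial.IsRoot _ _
      rw [Polynomial.IsRoot, key]
      have : conj ((r:ℂ) + I*y) = (r:ℂ) - I*y := by
        simp [map_add, map_mul, Complex.conj_ofReal]
        ring
      rw [← this]
      exact h _
    intro x
    rw [← key, hpy0, Polynomial.eval_zero]
  have hB : ∀ (x t : ℂ), p.evalEval (x + I*t) (x - I*t) = 0 := by
    intro x
    set g : ℂ[X] →+* ℂ[X] :=
      (Polynomial.aeval (Polynomial.C x + Polynomial.C I * Polynomial.X)).toRingHom with hg
    set qx : ℂ[X] := Polynomial.eval₂ g (Polynomial.C x - Polynomial.C I * Polynomial.X) p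
      with hqx
    have key : ∀ t : ℂ, qx.eval t = p.evalEval (x + I*t) (x - I*t) := by
      intro t
      have h1 : (Polynomial.evalRingHom t).comp g = Polynomial.evalRingHom (x + I*t) := by
        apply Polynomial.ringHom_ext <;> simp [hg]
      have h2 : (Polynomial.evalRingHom t) (Polynomial.eval₂ g
          (Polynomial.C x - Polynomial.C I * Polynomial.X) p)
          = Polynomial.eval₂ ((Polynomial.evalRingHom t).comp g)
            ((Polynomial.evalRingHom t) (Polynomial.C x - Polynomial.C I * Polynomial.X)) p :=
        Polynomial.hom_eval₂ _ _ _ _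
      have h3 : (Polynomial.evalRingHom t) (Polynomial.C x - Polynomial.C I * Polynomial.X)
          = x - I*t := by simp
      rw [hqx]
      show (Polynomial.evalRingHom t) _ = _
      rw [h2, h1, h3, Polynomial.eval₂_evalRingHom]
    have hqx0 : qx = 0 := by
      apply Polynomial.eq_zero_of_infinite_isRoot
      refine Set.Infinite.mono ?_ (Set.infinite_range_of_injective Complex.ofReal_injective)
      rintro - ⟨r, rfl⟩
      show Polynomial.IsRoot _ _
      rw [Polynomial.IsRoot, key]
      exact hA r x
    intro t
    rw [← key, hqx0, Polynomial.eval_zero]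
  have hC : ∀ s u : ℂ, p.evalEval s u = 0 := by
    intro s u
    have h1 : I * ((s - u)/(2*I)) = (s-u)/2 := by
      field_simp
    have h2 : (s+u)/2 + I * ((s - u)/(2*I)) = s := by rw [h1]; ring
    have h3 : (s+u)/2 - I * ((s - u)/(2*I)) = u := by rw [h1]; ring
    have := hB ((s+u)/2) ((s - u)/(2*I))
    rwa [h2, h3] at this
  ext m k
  have hmap : ∀ s : ℂ, Polynomial.map (Polynomial.evalRingHom s) p = 0 := by
    intro s
    apply Polynomial.funext
    intro u
    rw [Polynomial.eval_map, Polynomial.eval₂_evalRingHom, hC, Polynomial.eval_zero]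
  have : ∀ s : ℂ, Polynomial.eval s (p.coeff m) = 0 := by
    intro s
    have := congrArg (fun P => Polynomial.coeff P m) (hmap s)
    simpa [Polynomial.coeff_map] using this
  have : p.coeff m = 0 := Polynomial.funext fun s => by rw [this s, Polynomial.eval_zero]
  simp [this]

end

section
open MvPolynomial Complex ComplexConjugate Finset

variable {n : ℕ}

/-- View a multivariate polynomial as a 1-variable polynomial in `X v` with
coefficients multivariate polynomials (in which `v` does not occur). -/
def Φ (v : Fin n) : MvPolynomial (Fin n) ℂ →ₐ[ℂ] Polynomial (MvPolynomial (Fin n) ℂ) :=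
  MvPolynomial.aeval (fun i => if i = v then Polynomial.X else Polynomial.C (MvPolynomial.X i))

/-- The `m`-th coefficient of `q` in the variable `v`. -/
def slice (v : Fin n) (m : ℕ) (q : MvPolynomial (Fin n) ℂ) : MvPolynomial (Fin n) ℂ :=
  (Φ v q).coeff m

lemma Φ_monomial (v : Fin n) (γ : Fin n →₀ ℕ) (c : ℂ) :
    Φ v (monomial γ c) = Polynomial.monomial (γ v) (monomial (γ.erase v) c) := by
  have hsplit : monomial γ c = X v ^ (γ v) * monomial (γ.erase v) c := by
    rw [← monomial_single_add]
    rw [Finsupp.single_add_erase]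
  rw [hsplit, map_mul, map_pow]
  have hX : Φ v (X v) = Polynomial.X := by simp [Φ]
  have hmon : Φ v (monomial (γ.erase v) c) = Polynomial.C (monomial (γ.erase v) c) := by
    rw [monomial_eq, map_mul]
    have h1 : Φ v (C c) = Polynomial.C (C c) := by simp [Φ, algebraMap_eq]
    rw [h1, map_finsuppProd]
    have h2 : ((γ.erase v).prod fun i e => Φ v (X i ^ e))
        = Polynomial.C ((γ.erase v).prod fun i e => (X i ^ e)) := by
      rw [Finsupp.prod, Finsupp.prod, map_prod]
      apply Finset.prod_congr rfl
      intro i hi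
      have hiv : i ≠ v := by
        intro h; subst h
        simp [Finsupp.support_erase] at hi
      rw [map_pow, map_pow]
      refine congrArg (· ^ _) ?_
      simp [Φ, hiv]
    rw [h2, ← map_mul, ← monomial_eq]
  rw [hX, hmon, mul_comm, Polynomial.C_mul_X_pow_eq_monomial]

lemma coeff_slice (v : Fin n) (m : ℕ) (q : MvPolynomial (Fin n) ℂ) (β : Fin n →₀ ℕ) :
    coeff β (slice v m q) =
      if β v = 0 then coeff (β + Finsupp.single v m) q else 0 := by
  induction q using MvPolynomial.induction_on' with
  | add p q hp hq =>
    simp only [slice, map_add, Polynomial.coeff_add, coeff_add] at *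
    rw [hp, hq]
    split <;> simp
  | monomial γ c =>
    rw [slice, Φ_monomial, Polynomial.coeff_monomial]
    by_cases hβ : β v = 0
    · simp only [hβ, if_true]
      by_cases hγ : γ v = m
      · rw [if_pos hγ, coeff_monomial, coeff_monomial]
        congr 1
        apply propext
        constructor
        · rintro rfl
          ext i
          by_cases hiv : i = v
          · subst hiv; simp [hβ, hγ]
          · simp [Finsupp.erase_apply, hiv, Finsupp.single_apply, Ne.symm hiv]
        · rintro rfl
          ext i
          by_cases hiv : i = v
          · subst hiv; simp [Finsupp.single_apply] at hγ ⊢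
            omega
          · simp [Finsupp.erase_apply, hiv, Finsupp.single_apply, Ne.symm hiv]
      · rw [if_neg hγ, coeff_zero, coeff_monomial]
        rw [if_neg]
        intro h
        apply hγ
        have := congrArg (fun f => f v) h
        simp [Finsupp.single_apply, hβ] at this
        omega
    · simp only [hβ, if_false]
      split
      · rw [coeff_monomial, if_neg]
        intro h
        apply hβ
        have := congrArg (fun f => f v) h
        simp [Finsupp.erase_apply] at this
        omega
      · rfl

lemma coeff_eq_coeff_slice (v : Fin n) (q : MvPolynomial (Fin n) ℂ) (α : Fin n →₀ ℕ) :
    coeff α q = coeff (α.erase v) (slice v (α v) q) := by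
  rw [coeff_slice]
  rw [if_pos (by simp [Finsupp.erase_apply])]
  rw [Finsupp.erase_add_single]

lemma slice_eq_zero_of_degreeOf_lt {v : Fin n} {q : MvPolynomial (Fin n) ℂ} {m : ℕ}
    (h : degreeOf v q < m) : slice v m q = 0 := by
  ext β
  rw [coeff_slice, coeff_zero]
  split
  · rw [← notMem_support_iff.mp]
    intro hmem
    have := (degreeOf_le_iff.mp (le_refl (degreeOf v q))) _ hmem
    simp [Finsupp.single_apply] at this
    omega
  · rfl

lemma supp_lt_of_slices {v : Fin n} {q : MvPolynomial (Fin n) ℂ} {m₀ : ℕ}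
    (h : ∀ m, m₀ ≤ m → slice v m q = 0) : ∀ α ∈ q.support, α v < m₀ := by
  intro α hα
  by_contra h'
  push_neg at h'
  have h1 := coeff_eq_coeff_slice v q α
  rw [h _ h', coeff_zero] at h1
  exact (mem_support_iff.mp hα) h1

lemma eval_update (v : Fin n) (z : Fin n → ℂ) (s : ℂ) (q : MvPolynomial (Fin n) ℂ) :
    MvPolynomial.eval (Function.update z v s) q
      = Polynomial.eval s ((Φ v q).map (MvPolynomial.eval z)) := by
  have : MvPolynomial.eval (Function.update z v s)
      = ((Polynomial.evalRingHom s).comp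
          ((Polynomial.mapRingHom (MvPolynomial.eval z)).comp (Φ v).toRingHom)) := by
    apply MvPolynomial.ringHom_ext
    · intro a
      simp [Φ, algebraMap_eq]
    · intro i
      by_cases hiv : i = v
      · subst hiv; simp [Φ]
      · simp [Φ, hiv, Function.update_of_ne hiv]
  rw [this]
  rfl

lemma coeff_map_slice (v : Fin n) (z : Fin n → ℂ) (m : ℕ) (q : MvPolynomial (Fin n) ℂ) :
    ((Φ v q).map (MvPolynomial.eval z)).coeff m = MvPolynomial.eval z (slice v m q) := by
  rw [Polynomial.coeff_map]; rfl



lemma pt_degreeOf {n : ℕ} (p pt : MvPolynomial (Fin n) ℂ) (d : Fin n → ℕ)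
    (hdeg : ∀ i, p.degreeOf i = d i)
    (hpt : ∀ z : Fin n → ℂ, (∀ i, z i ≠ 0) →
      eval z pt = (∏ i, z i ^ d i) * conj (eval (fun i => (conj (z i))⁻¹) p)) :
    ∀ v, degreeOf v pt ≤ d v := by
  classical
  set dd : Fin n →₀ ℕ := Finsupp.equivFunOnFinite.symm d with hdd
  have hddv : ∀ v, dd v = d v := fun v => rfl
  have hle : ∀ α ∈ p.support, ∀ i, α i ≤ d i := by
    intro α hα i
    rw [← hdeg i]
    exact degreeOf_le_iff.mp (le_refl _) _ hα
  set refl : MvPolynomial (Fin n) ℂ :=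
    ∑ α ∈ p.support, monomial (dd - α) (conj (coeff α p)) with hrefl
  have claimA : ∀ z : Fin n → ℂ, (∀ i, z i ≠ 0) → eval z refl = eval z pt := by
    intro z hz
    have hconj : conj (eval (fun i => (conj (z i))⁻¹) p)
        = ∑ α ∈ p.support, conj (coeff α p) * ∏ i, (z i)⁻¹ ^ (α i) := by
      rw [eval_eq', map_sum]
      apply Finset.sum_congr rfl
      intro α _
      rw [map_mul, map_prod]
      congr 1
      apply Finset.prod_congr rfl
      intro i _
      rw [map_pow, map_inv₀, Complex.conj_conj]
    rw [hpt z hz, hrefl, map_sum, hconj, Finset.mul_sum]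
    apply Finset.sum_congr rfl
    intro α hα
    rw [eval_monomial, Finsupp.prod_fintype _ _ (fun i => pow_zero (z i))]
    have hterm : ∀ i, z i ^ ((dd - α) i) = z i ^ d i * ((z i)⁻¹) ^ (α i) := by
      intro i
      rw [Finsupp.tsub_apply, hddv i, pow_sub₀ _ (hz i) (hle α hα i), inv_pow]
    rw [Finset.prod_congr rfl (fun i _ => hterm i), Finset.prod_mul_distrib]
    ring
  have claimB : pt = refl := by
    have h0 : (pt - refl) * ∏ i, (X i : MvPolynomial (Fin n) ℂ) = 0 := by
      apply MvPolynomial.funext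
      intro z
      rw [map_mul, map_sub, map_zero]
      by_cases hz : ∀ i, z i ≠ 0
      · rw [claimA z hz, sub_self, zero_mul]
      · push_neg at hz
        obtain ⟨i, hi⟩ := hz
        rw [map_prod]
        rw [Finset.prod_eq_zero (Finset.mem_univ i) (by simp [hi])]
        ring
    rcases mul_eq_zero.mp h0 with h | h
    · exact sub_eq_zero.mp h
    · exfalso
      exact Finset.prod_ne_zero_iff.mpr (fun i _ => MvPolynomial.X_ne_zero i) h
  intro v
  rw [claimB]
  apply degreeOf_le_iff.mpr
  intro m hm
  have hm' : coeff m refl ≠ 0 := mem_support_iff.mp hm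
  have : ∃ α ∈ p.support, dd - α = m := by
    by_contra hno
    push_neg at hno
    apply hm'
    rw [hrefl, coeff_sum]
    apply Finset.sum_eq_zero
    intro α hα
    rw [coeff_monomial, if_neg (hno α hα)]
  obtain ⟨α, -, rfl⟩ := this
  rw [Finsupp.tsub_apply, hddv v]
  exact Nat.sub_le _ _


end

section
open MvPolynomial Complex ComplexConjugate Finset Polynomial


/-- `g(X) * h(Y)` as a bivariate polynomial. -/
def bb (g h : Polynomial ℂ) : Polynomial (Polynomial ℂ) :=
  Polynomial.C g * h.map Polynomial.C

lemma eval₂_C_C (y : ℂ) (h : Polynomial ℂ) :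
    Polynomial.eval₂ Polynomial.C (Polynomial.C y) h = Polynomial.C (h.eval y) := by
  have := Polynomial.hom_eval₂ h (RingHom.id ℂ) (Polynomial.C : ℂ →+* Polynomial ℂ) y
  simpa using this.symm

lemma bb_evalEval (g h : Polynomial ℂ) (x y : ℂ) :
    (bb g h).evalEval x y = g.eval x * h.eval y := by
  rw [bb, Polynomial.evalEval, Polynomial.eval_mul, Polynomial.eval_C]
  rw [Polynomial.eval_map, eval₂_C_C, Polynomial.eval_mul, Polynomial.eval_C]

lemma eval_map_conj (g : Polynomial ℂ) (w : ℂ) :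
    (g.map (starRingEnd ℂ)).eval (conj w) = conj (g.eval w) := by
  rw [Polynomial.eval_map]
  have := Polynomial.hom_eval₂ g (RingHom.id ℂ) (starRingEnd ℂ : ℂ →+* ℂ) w
  simpa using this.symm

/-- diagonal coefficient of a bivariate polynomial -/
def dcoeff (m : ℕ) (P : Polynomial (Polynomial ℂ)) : ℂ := (P.coeff m).coeff m

lemma dcoeff_bb (m : ℕ) (g h : Polynomial ℂ) :
    dcoeff m (bb g h) = g.coeff m * h.coeff m := by
  rw [dcoeff, bb, Polynomial.coeff_C_mul, Polynomial.coeff_map]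
  rw [Polynomial.coeff_mul_C]

lemma dcoeff_add (m : ℕ) (P Q : Polynomial (Polynomial ℂ)) :
    dcoeff m (P + Q) = dcoeff m P + dcoeff m Q := by
  simp [dcoeff]

lemma dcoeff_sum {ι : Type*} (s : Finset ι) (m : ℕ) (f : ι → Polynomial (Polynomial ℂ)) :
    dcoeff m (∑ i ∈ s, f i) = ∑ i ∈ s, dcoeff m (f i) := by
  simp [dcoeff, Polynomial.finset_sum_coeff]

lemma dcoeff_CC_mul (m : ℕ) (a : ℂ) (P : Polynomial (Polynomial ℂ)) :
    dcoeff m (Polynomial.C (Polynomial.C a) * P) = a * dcoeff m P := by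
  rw [dcoeff, Polynomial.coeff_C_mul, Polynomial.coeff_C_mul]; rfl

lemma dcoeff_shift (m : ℕ) (P : Polynomial (Polynomial ℂ)) :
    dcoeff (m+1) ((Polynomial.C Polynomial.X * Polynomial.X) * P) = dcoeff m P := by
  rw [mul_assoc, dcoeff, Polynomial.coeff_C_mul, Polynomial.coeff_X_mul,
    Polynomial.coeff_X_mul]
  rfl

lemma dcoeff_one_sub_shift_mul (m : ℕ) (P : Polynomial (Polynomial ℂ)) :
    dcoeff (m+1) ((1 - Polynomial.C Polynomial.X * Polynomial.X) * P)
      = dcoeff (m+1) P - dcoeff m P := by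
  rw [sub_mul, one_mul]
  have hsub : ∀ (Q R : Polynomial (Polynomial ℂ)) (j : ℕ),
      dcoeff j (Q - R) = dcoeff j Q - dcoeff j R := by
    intro Q R j; simp [dcoeff]
  rw [hsub, dcoeff_shift]


lemma phase1 {N : ℕ} (p pt : MvPolynomial (Fin n) ℂ) (d : Fin n → ℕ)
    (A : Fin n → Fin N → MvPolynomial (Fin n) ℂ)
    (hdegp : ∀ v, degreeOf v p ≤ d v)
    (hdegpt : ∀ v, degreeOf v pt ≤ d v)
    (hAgler : ∀ z : Fin n → ℂ,
      ‖MvPolynomial.eval z p‖ ^ 2 - ‖MvPolynomial.eval z pt‖ ^ 2 =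
        ∑ j, (1 - ‖z j‖ ^ 2) * ∑ k, ‖MvPolynomial.eval z (A j k)‖ ^ 2) :
    ∀ (v i : Fin n) (k : Fin N) (m : ℕ),
      (d v < m ∨ (i = v ∧ d v ≤ m)) → slice v m (A i k) = 0 := by
  intro v
  have hA' : ∀ Z : Fin n → ℂ,
      normSq (MvPolynomial.eval Z p) - normSq (MvPolynomial.eval Z pt) =
        ∑ j, (1 - normSq (Z j)) * ∑ k, normSq (MvPolynomial.eval Z (A j k)) := by
    intro Z
    have h := hAgler Z
    simpa only [← Complex.normSq_eq_norm_sq] using h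
  set Dm : ℕ := 1 + (Finset.univ.sup (fun ik : Fin n × Fin N => degreeOf v (A ik.1 ik.2)))
    with hDm
  have hDm1 : 1 ≤ Dm := by omega
  have hslicebig : ∀ (i : Fin n) (k : Fin N) (m : ℕ), Dm ≤ m → slice v m (A i k) = 0 := by
    intro i k m hm
    apply slice_eq_zero_of_degreeOf_lt
    have : degreeOf v (A i k) ≤ Finset.univ.sup
        (fun ik : Fin n × Fin N => degreeOf v (A ik.1 ik.2)) :=
      Finset.le_sup (f := fun ik : Fin n × Fin N => degreeOf v (A ik.1 ik.2))
        (Finset.mem_univ (i,k))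
    omega
  have key : ∀ (z : Fin n → ℂ), (∀ i, i ≠ v → 1 < normSq (z i)) → ∀ m₀, d v ≤ m₀ →
      ((∀ k, MvPolynomial.eval z (slice v m₀ (A v k)) = 0) ∧
       (∀ i, i ≠ v → ∀ k, ∀ m, m₀ < m → m ≤ m₀ + Dm →
          MvPolynomial.eval z (slice v m (A i k)) = 0)) := by
    intro z hz m₀ hm₀
    set g : MvPolynomial (Fin n) ℂ → Polynomial ℂ :=
      fun q => (Φ v q).map (MvPolynomial.eval z) with hg
    have hgeval : ∀ q w, (g q).eval w = MvPolynomial.eval (Function.update z v w) q :=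
      fun q w => (eval_update v z w q).symm
    have hgcoeff : ∀ q m, (g q).coeff m = MvPolynomial.eval z (slice v m q) :=
      fun q m => coeff_map_slice v z m q
    set G : Fin n → Polynomial (Polynomial ℂ) :=
      fun i => ∑ k, bb (g (A i k)) ((g (A i k)).map (starRingEnd ℂ)) with hG
    have master : bb (g p) ((g p).map (starRingEnd ℂ)) =
        bb (g pt) ((g pt).map (starRingEnd ℂ))
        + (1 - Polynomial.C Polynomial.X * Polynomial.X) * G v
        + ∑ i ∈ Finset.univ.erase v,
            Polynomial.C (Polynomial.C ((1:ℂ) - z i * conj (z i))) * G i := by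
      rw [← sub_eq_zero]
      apply doubling
      intro w
      set Z := Function.update z v w with hZ
      have hbbq : ∀ q, (bb (g q) ((g q).map (starRingEnd ℂ))).evalEval w (conj w)
          = ((normSq (MvPolynomial.eval Z q) : ℝ) : ℂ) := by
        intro q
        rw [bb_evalEval, eval_map_conj, hgeval]
        exact Complex.mul_conj _
      have hGeval : ∀ i, (G i).evalEval w (conj w)
          = ((∑ k, normSq (MvPolynomial.eval Z (A i k)) : ℝ) : ℂ) := by
        intro i
        rw [hG]
        rw [Polynomial.evalEval_finset_sum]
        push_cast
        exact Finset.sum_congr rfl fun k _ => hbbq _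
      have hterm : ∀ i ∈ Finset.univ.erase v,
          (Polynomial.C (Polynomial.C ((1:ℂ) - z i * conj (z i))) * G i).evalEval w (conj w)
          = (((1 - normSq (z i)) * (∑ k, normSq (MvPolynomial.eval Z (A i k))) : ℝ) : ℂ) := by
        intro i hi
        rw [Polynomial.evalEval_mul, hGeval i]
        have hc : (Polynomial.C (Polynomial.C ((1:ℂ) - z i * conj (z i)))).evalEval w (conj w)
            = ((1 - normSq (z i) : ℝ) : ℂ) := by
          rw [Polynomial.evalEval_C, Polynomial.eval_C, Complex.mul_conj]
          push_cast
          ring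
        rw [hc]
        push_cast
        ring
      rw [Polynomial.evalEval_sub, Polynomial.evalEval_add, Polynomial.evalEval_add,
        Polynomial.evalEval_mul, Polynomial.evalEval_sub, Polynomial.evalEval_one,
        Polynomial.evalEval_mul, Polynomial.evalEval_C, Polynomial.eval_X,
        Polynomial.evalEval_X, hGeval v, Polynomial.evalEval_finset_sum]
      rw [hbbq p, hbbq pt, Finset.sum_congr rfl hterm]
      have hreal := hA' Z
      have hsplit : ∑ j, (1 - normSq (Z j)) * ∑ k, normSq (MvPolynomial.eval Z (A j k))
          = (1 - normSq w) * (∑ k, normSq (MvPolynomial.eval Z (A v k)))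
            + ∑ i ∈ Finset.univ.erase v,
                (1 - normSq (z i)) * ∑ k, normSq (MvPolynomial.eval Z (A i k)) := by
        rw [← Finset.add_sum_erase _ _ (Finset.mem_univ v)]
        congr 1
        · have hZv : Z v = w := Function.update_self v w z
          rw [hZv]
        · apply Finset.sum_congr rfl
          intro i hi
          have hZi : Z i = z i := Function.update_of_ne (Finset.mem_erase.mp hi).1 w z
          rw [hZi]
      rw [hsplit] at hreal
      rw [Complex.mul_conj]
      rw [show ((1:ℂ) - ((normSq w : ℝ) : ℂ)) = ((1 - normSq w : ℝ) : ℂ) by push_cast; ring]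
      rw [← Complex.ofReal_mul, ← Complex.ofReal_sum, ← Complex.ofReal_add,
        ← Complex.ofReal_add, ← Complex.ofReal_sub, Complex.ofReal_eq_zero]
      linarith [hreal]
    -- coefficient extraction
    have hGd : ∀ (i : Fin n) (m' : ℕ), dcoeff m' (G i)
        = ((∑ k, normSq (MvPolynomial.eval z (slice v m' (A i k))) : ℝ) : ℂ) := by
      intro i m'
      rw [hG, dcoeff_sum]
      push_cast
      apply Finset.sum_congr rfl
      intro k _
      rw [dcoeff_bb, hgcoeff, Polynomial.coeff_map, hgcoeff, Complex.mul_conj]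
    have hL : ∀ (q : MvPolynomial (Fin n) ℂ) (m : ℕ), degreeOf v q < m →
        dcoeff m (bb (g q) ((g q).map (starRingEnd ℂ))) = 0 := by
      intro q m hq
      rw [dcoeff_bb, hgcoeff, slice_eq_zero_of_degreeOf_lt hq, map_zero, zero_mul]
    have hiter : ∀ m, d v ≤ m →
        (∑ k, normSq (MvPolynomial.eval z (slice v (m+1) (A v k))))
          - (∑ k, normSq (MvPolynomial.eval z (slice v m (A v k))))
          + ∑ i ∈ Finset.univ.erase v,
              (1 - normSq (z i)) * ∑ k, normSq (MvPolynomial.eval z (slice v (m+1) (A i k)))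
          = 0 := by
      intro m hm
      have e3 : dcoeff (m+1) (∑ i ∈ Finset.univ.erase v,
            Polynomial.C (Polynomial.C ((1:ℂ) - z i * conj (z i))) * G i)
          = ∑ i ∈ Finset.univ.erase v, ((1:ℂ) - z i * conj (z i)) *
              ((∑ k, normSq (MvPolynomial.eval z (slice v (m+1) (A i k))) : ℝ) : ℂ) := by
        rw [dcoeff_sum]
        exact Finset.sum_congr rfl fun i _ => by rw [dcoeff_CC_mul, hGd]
      have hd : (0:ℂ) =
          ((∑ k, normSq (MvPolynomial.eval z (slice v (m+1) (A v k))) : ℝ) : ℂ)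
          - ((∑ k, normSq (MvPolynomial.eval z (slice v m (A v k))) : ℝ) : ℂ)
          + ∑ i ∈ Finset.univ.erase v, ((1:ℂ) - z i * conj (z i)) *
              ((∑ k, normSq (MvPolynomial.eval z (slice v (m+1) (A i k))) : ℝ) : ℂ) := by
        calc (0:ℂ) = dcoeff (m+1) (bb (g p) ((g p).map (starRingEnd ℂ))) :=
              (hL p (m+1) (lt_of_le_of_lt (hdegp v) (Nat.lt_succ_of_le hm))).symm
          _ = dcoeff (m+1) (bb (g pt) ((g pt).map (starRingEnd ℂ))
                + (1 - Polynomial.C Polynomial.X * Polynomial.X) * G v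
                + ∑ i ∈ Finset.univ.erase v,
                    Polynomial.C (Polynomial.C ((1:ℂ) - z i * conj (z i))) * G i) := by
              rw [← master]
          _ = dcoeff (m+1) (bb (g pt) ((g pt).map (starRingEnd ℂ)))
                + (dcoeff (m+1) (G v) - dcoeff m (G v))
                + dcoeff (m+1) (∑ i ∈ Finset.univ.erase v,
                    Polynomial.C (Polynomial.C ((1:ℂ) - z i * conj (z i))) * G i) := by
              rw [dcoeff_add, dcoeff_add, dcoeff_one_sub_shift_mul]
          _ = _ := by
              rw [hL pt (m+1) (lt_of_le_of_lt (hdegpt v) (Nat.lt_succ_of_le hm)),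
                hGd v (m+1), hGd v m, e3]
              ring
      have hd' : (0:ℂ) = ((
          (∑ k, normSq (MvPolynomial.eval z (slice v (m+1) (A v k))))
          - (∑ k, normSq (MvPolynomial.eval z (slice v m (A v k))))
          + ∑ i ∈ Finset.univ.erase v,
              (1 - normSq (z i)) * ∑ k, normSq (MvPolynomial.eval z (slice v (m+1) (A i k)))
          : ℝ) : ℂ) := by
        rw [hd]
        simp only [Complex.mul_conj]
        push_cast
        ring
      exact_mod_cast hd'.symm
    -- telescoping
    set F : Fin n → ℕ → ℝ :=
      fun i m => ∑ k, normSq (MvPolynomial.eval z (slice v m (A i k))) with hF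
    have htel : F v m₀ = ∑ i ∈ Finset.univ.erase v, (1 - normSq (z i)) *
        ∑ t ∈ Finset.range Dm, F i (m₀+t+1) := by
      have h1 : ∀ t ∈ Finset.range Dm,
          F v (m₀+(t+1)) - F v (m₀+t)
            = -(∑ i ∈ Finset.univ.erase v, (1 - normSq (z i)) * F i (m₀+t+1)) := by
        intro t ht
        have h := hiter (m₀+t) (hm₀.trans (Nat.le_add_right _ _))
        simp only [hF, Nat.add_succ] at h ⊢
        linarith [h]
      have h2 := Finset.sum_range_sub (fun t => F v (m₀+t)) Dm
      rw [Finset.sum_congr rfl h1] at h2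
      have h3 : F v (m₀+Dm) = 0 := by
        rw [hF]
        apply Finset.sum_eq_zero
        intro k _
        rw [hslicebig v k _ (Nat.le_add_left _ _), map_zero, Complex.normSq_zero]
      rw [h3] at h2
      have h4 : ∑ t ∈ Finset.range Dm, ∑ i ∈ Finset.univ.erase v,
            (1 - normSq (z i)) * F i (m₀+t+1)
          = ∑ i ∈ Finset.univ.erase v, (1 - normSq (z i)) *
              ∑ t ∈ Finset.range Dm, F i (m₀+t+1) := by
        rw [Finset.sum_comm]
        exact Finset.sum_congr rfl fun i _ => by rw [Finset.mul_sum]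
      rw [← h4]
      rw [Finset.sum_neg_distrib] at h2
      simp only [Nat.add_zero] at h2
      linarith [h2]
    -- positivity
    have hFnn : ∀ (i : Fin n) (m : ℕ), 0 ≤ F i m :=
      fun i m => Finset.sum_nonneg fun k _ => normSq_nonneg _
    have hTnn : ∀ i : Fin n, 0 ≤ ∑ t ∈ Finset.range Dm, F i (m₀+t+1) :=
      fun i => Finset.sum_nonneg fun t _ => hFnn i _
    have hfac : ∀ i ∈ Finset.univ.erase v,
        (1 - normSq (z i)) * (∑ t ∈ Finset.range Dm, F i (m₀+t+1)) ≤ 0 := by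
      intro i hi
      have h5 := hz i (Finset.mem_erase.mp hi).1
      exact mul_nonpos_iff.mpr (Or.inr ⟨by linarith, hTnn i⟩)
    have hF0 : F v m₀ = 0 := le_antisymm (htel ▸ Finset.sum_nonpos hfac) (hFnn v m₀)
    have hsum0 : ∑ i ∈ Finset.univ.erase v,
        (1 - normSq (z i)) * (∑ t ∈ Finset.range Dm, F i (m₀+t+1)) = 0 := by
      rw [← htel, hF0]
    have hT0 : ∀ i : Fin n, i ≠ v → ∑ t ∈ Finset.range Dm, F i (m₀+t+1) = 0 := by
      intro i hiv
      have h6 := (Finset.sum_eq_zero_iff_of_nonpos hfac).mp hsum0 i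
        (Finset.mem_erase.mpr ⟨hiv, Finset.mem_univ i⟩)
      rcases mul_eq_zero.mp h6 with h7 | h7
      · exfalso
        have h8 := hz i hiv
        have : normSq (z i) = 1 := by linarith
        linarith
      · exact h7
    constructor
    · intro k
      have h8 := (Finset.sum_eq_zero_iff_of_nonneg
        (fun k _ => normSq_nonneg _)).mp hF0 k (Finset.mem_univ k)
      exact Complex.normSq_eq_zero.mp h8
    · intro i hiv k m hm1 hm2
      have h9 : ∀ t ∈ Finset.range Dm, F i (m₀+t+1) = 0 :=
        (Finset.sum_eq_zero_iff_of_nonneg (fun t _ => hFnn i _)).mp (hT0 i hiv)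
      have ht : m - m₀ - 1 ∈ Finset.range Dm := by
        rw [Finset.mem_range]; omega
      have h10 := h9 _ ht
      have hidx : m₀ + (m - m₀ - 1) + 1 = m := by omega
      rw [hidx] at h10
      have h11 := (Finset.sum_eq_zero_iff_of_nonneg
        (fun k _ => normSq_nonneg _)).mp h10 k (Finset.mem_univ k)
      exact Complex.normSq_eq_zero.mp h11
  -- endgame: use key + vanishing on product of infinite sets
  intro i k m hm
  have hset : ∀ j : Fin n,
      ((fun j => if j = v then (Set.univ : Set ℂ) else {w : ℂ | 1 < normSq w}) j).Infinite := by
    intro j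
    by_cases hj : j = v
    · simp [hj, Set.infinite_univ]
    · simp only [hj, if_false]
      apply Set.infinite_of_injective_forall_mem (f := fun k : ℕ => (((k:ℝ)+2 : ℝ) : ℂ))
      · intro a b hab
        have h1 : (((a:ℝ)+2 : ℝ) : ℂ) = (((b:ℝ)+2 : ℝ) : ℂ) := hab
        rw [Complex.ofReal_inj] at h1
        have h2 : (a:ℝ) = (b:ℝ) := by linarith
        exact_mod_cast h2
      · intro a
        show 1 < normSq _
        rw [Complex.normSq_ofReal]
        have : (0:ℝ) ≤ a := Nat.cast_nonneg a
        nlinarith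
  apply mv_zero_of_vanish n (fun j => if j = v then Set.univ else {w : ℂ | 1 < normSq w}) hset
  intro z hzmem
  have hz' : ∀ j, j ≠ v → 1 < normSq (z j) := by
    intro j hj
    have := hzmem j
    simp only [if_neg hj] at this
    exact this
  rcases hm with hm | ⟨rfl, hm⟩
  · by_cases hiv : i = v
    · subst hiv
      exact (key z hz' m (le_of_lt hm)).1 k
    · exact (key z hz' (m-1) (by omega)).2 i hiv k m (by omega) (by omega)
  · exact (key z hz' m hm).1 k


end

section
open MvPolynomial Complex ComplexConjugate Finset
open scoped ComplexOrder


abbrev Dt {n : ℕ} (e : Fin n → ℕ) := (i : Fin n) → Fin (e i)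

lemma gram {n N : ℕ} (B : Fin N → MvPolynomial (Fin n) ℂ) (e : Fin n → ℕ)
    (hsupp : ∀ k, ∀ α ∈ (B k).support, ∀ i, α i < e i) :
    ∃ C : Fin (∏ i, e i) → MvPolynomial (Fin n) ℂ,
      (∀ l, ∀ α ∈ (C l).support, ∀ i, α i < e i) ∧
      (∀ z : Fin n → ℂ, ∑ l, normSq (MvPolynomial.eval z (C l))
          = ∑ k, normSq (MvPolynomial.eval z (B k))) := by
  classical
  set mm : Dt e → (Fin n →₀ ℕ) := fun t => Finsupp.equivFunOnFinite.symm (fun i => (t i : ℕ))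
    with hmm
  have hmm_apply : ∀ (t : Dt e) (i : Fin n), mm t i = t i := fun t i => rfl
  have hmm_inj : Function.Injective mm := by
    intro t s hts
    funext i
    have := congrArg (fun f => f i) hts
    simpa [hmm_apply, Fin.val_injective.eq_iff] using this
  -- reconstruction of any polynomial with support bounds
  have hrecon : ∀ q : MvPolynomial (Fin n) ℂ, (∀ α ∈ q.support, ∀ i, α i < e i) →
      (∑ t : Dt e, monomial (mm t) (coeff (mm t) q)) = q := by
    intro q hq
    have himg : q.support ⊆ Finset.image mm Finset.univ := by
      intro α hα
      refine Finset.mem_image.mpr ⟨fun i => ⟨α i, hq α hα i⟩, Finset.mem_univ _, ?_⟩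
      ext i
      rfl
    calc (∑ t : Dt e, monomial (mm t) (coeff (mm t) q))
        = ∑ α ∈ Finset.image mm Finset.univ, monomial α (coeff α q) := by
          rw [Finset.sum_image (fun a _ b _ h => hmm_inj h)]
      _ = ∑ α ∈ q.support, monomial α (coeff α q) := by
          refine (Finset.sum_subset himg ?_).symm
          intro α _ hα
          rw [notMem_support_iff.mp hα, map_zero]
      _ = q := support_sum_monomial_coeff q
  -- evaluation of coefficient families
  have heval : ∀ (c : Dt e → ℂ) (z : Fin n → ℂ),
      MvPolynomial.eval z (∑ t : Dt e, monomial (mm t) (c t))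
        = ∑ t : Dt e, c t * MvPolynomial.eval z (monomial (mm t) 1) := by
    intro c z
    rw [map_sum]
    apply Finset.sum_congr rfl
    intro t _
    rw [eval_monomial, eval_monomial, one_mul]
  -- Gram matrix
  set M : Matrix (Fin N) (Dt e) ℂ := Matrix.of (fun k t => conj (coeff (mm t) (B k))) with hM
  obtain ⟨U, hU⟩ : ∃ U : Matrix (Dt e) (Dt e) ℂ, M.conjTranspose * M = U.conjTranspose * U := by
    open scoped MatrixOrder Matrix.Norms.L2Operator in
    exact CStarAlgebra.nonneg_iff_eq_star_mul_self.mp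
      (Matrix.posSemidef_conjTranspose_mul_self M).nonneg
  set Cpoly : Dt e → MvPolynomial (Fin n) ℂ :=
    fun l => ∑ t : Dt e, monomial (mm t) (conj (U l t)) with hC
  -- key complex identity
  have hkey : ∀ z : Fin n → ℂ,
      ∑ l : Dt e, (MvPolynomial.eval z (Cpoly l)) * conj (MvPolynomial.eval z (Cpoly l))
        = ∑ k, (MvPolynomial.eval z (B k)) * conj (MvPolynomial.eval z (B k)) := by
    intro z
    set Ez : Dt e → ℂ := fun t => MvPolynomial.eval z (monomial (mm t) 1) with hEz
    have hBk : ∀ k, MvPolynomial.eval z (B k) = ∑ t : Dt e, (coeff (mm t) (B k)) * Ez t := by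
      intro k
      conv_lhs => rw [← hrecon (B k) (hsupp k)]
      exact heval _ z
    have hCl : ∀ l, MvPolynomial.eval z (Cpoly l) = ∑ t : Dt e, (conj (U l t)) * Ez t :=
      fun l => heval _ z
    have expand : ∀ (c : Dt e → ℂ),
        (∑ t : Dt e, c t * Ez t) * conj (∑ s : Dt e, c s * Ez s)
          = ∑ t : Dt e, ∑ s : Dt e, c t * conj (c s) * (Ez t * conj (Ez s)) := by
      intro c
      rw [map_sum, Finset.sum_mul_sum]
      apply Finset.sum_congr rfl; intro t _
      apply Finset.sum_congr rfl; intro s _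
      rw [map_mul]
      ring
    have h1 : ∑ l : Dt e, (MvPolynomial.eval z (Cpoly l)) * conj (MvPolynomial.eval z (Cpoly l))
        = ∑ t : Dt e, ∑ s : Dt e, (U.conjTranspose * U) t s * (Ez t * conj (Ez s)) := by
      rw [Finset.sum_congr rfl (fun l _ => by rw [hCl l, expand] :
        ∀ l ∈ Finset.univ, (MvPolynomial.eval z (Cpoly l)) * conj (MvPolynomial.eval z (Cpoly l))
          = ∑ t : Dt e, ∑ s : Dt e, (conj (U l t)) * conj (conj (U l s)) * (Ez t * conj (Ez s)))]
      rw [Finset.sum_comm]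
      apply Finset.sum_congr rfl; intro t _
      rw [Finset.sum_comm]
      apply Finset.sum_congr rfl; intro s _
      rw [Matrix.mul_apply, Finset.sum_mul]
      apply Finset.sum_congr rfl; intro l _
      rw [Matrix.conjTranspose_apply]
      simp only [Complex.conj_conj, RCLike.star_def]
    have h2 : ∑ k, (MvPolynomial.eval z (B k)) * conj (MvPolynomial.eval z (B k))
        = ∑ t : Dt e, ∑ s : Dt e, (M.conjTranspose * M) t s * (Ez t * conj (Ez s)) := by
      rw [Finset.sum_congr rfl (fun k _ => by rw [hBk k, expand] :
        ∀ k ∈ Finset.univ, (MvPolynomial.eval z (B k)) * conj (MvPolynomial.eval z (B k))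
          = ∑ t : Dt e, ∑ s : Dt e,
              (coeff (mm t) (B k)) * conj (coeff (mm s) (B k)) * (Ez t * conj (Ez s)))]
      rw [Finset.sum_comm]
      apply Finset.sum_congr rfl; intro t _
      rw [Finset.sum_comm]
      apply Finset.sum_congr rfl; intro s _
      rw [Matrix.mul_apply, Finset.sum_mul]
      apply Finset.sum_congr rfl; intro k _
      rw [Matrix.conjTranspose_apply]
      simp only [hM, Matrix.of_apply, Complex.conj_conj, RCLike.star_def]
    rw [h1, h2, hU]
  -- real version
  have hreal : ∀ z : Fin n → ℂ, ∑ l : Dt e, normSq (MvPolynomial.eval z (Cpoly l))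
      = ∑ k, normSq (MvPolynomial.eval z (B k)) := by
    intro z
    have hc := hkey z
    simp only [Complex.mul_conj] at hc
    exact_mod_cast hc
  -- support bounds for Cpoly
  have hCsupp : ∀ l, ∀ α ∈ (Cpoly l).support, ∀ i, α i < e i := by
    intro l α hα i
    have hne : coeff α (Cpoly l) ≠ 0 := mem_support_iff.mp hα
    have : ∃ t : Dt e, mm t = α := by
      by_contra hno
      push_neg at hno
      apply hne
      rw [hC, coeff_sum]
      apply Finset.sum_eq_zero
      intro t _
      rw [coeff_monomial, if_neg (hno t)]
    obtain ⟨t, rfl⟩ := this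
    rw [hmm_apply]
    exact (t i).isLt
  -- transport index type
  have hcard : Fintype.card (Dt e) = ∏ i, e i := by
    simp [Dt, Fintype.card_pi]
  set eqv : Fin (∏ i, e i) ≃ Dt e := (Fintype.equivFinOfCardEq hcard).symm with heqv
  refine ⟨fun l => Cpoly (eqv l), ?_, ?_⟩
  · intro l α hα i
    exact hCsupp (eqv l) α hα i
  · intro z
    rw [← hreal z]
    exact Fintype.sum_equiv eqv _ _ (fun l => rfl)

end

end S17

/-- if `p` is an Agler denominator of multidegree `(d₁,…,dₙ)`, then there
is a sums-of-squares decomposition in which the `j`-th term is a sum of at most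
`dⱼ ∏_{k≠j} (dₖ + 1)` squared moduli of polynomials of degree at most `dⱼ − 1` in `zⱼ`
and at most `dₖ` in `zₖ` for `k ≠ j`. -/
theorem stmt17 (n : ℕ) (p : MvPolynomial (Fin n) ℂ) (d : Fin n → ℕ)
    (hdeg : ∀ i, p.degreeOf i = d i)
    (hst : IsStable p)
    (pt : MvPolynomial (Fin n) ℂ) (hpt : IsReflectionAt d p pt)
    (hAgler : ∃ (N : ℕ) (A : Fin n → Fin N → MvPolynomial (Fin n) ℂ),
      ∀ z : Fin n → ℂ,
        ‖eval z p‖ ^ 2 - ‖eval z pt‖ ^ 2 =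
          ∑ j, (1 - ‖z j‖ ^ 2) * ∑ k, ‖eval z (A j k)‖ ^ 2) :
    ∃ A : (j : Fin n) → Fin (d j * ∏ k ∈ Finset.univ.erase j, (d k + 1)) →
        MvPolynomial (Fin n) ℂ,
      (∀ j l, (A j l).degreeOf j ≤ d j - 1) ∧
      (∀ j l, ∀ i, i ≠ j → (A j l).degreeOf i ≤ d i) ∧
      ∀ z : Fin n → ℂ,
        ‖eval z p‖ ^ 2 - ‖eval z pt‖ ^ 2 =
          ∑ j, (1 - ‖z j‖ ^ 2) * ∑ l, ‖eval z (A j l)‖ ^ 2 := by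
  classical
  obtain ⟨N, A, hA⟩ := hAgler
  have hdegp : ∀ v, p.degreeOf v ≤ d v := fun v => (hdeg v).le
  have hdegpt : ∀ v, pt.degreeOf v ≤ d v := S17.pt_degreeOf p pt d hdeg hpt
  have hslices := S17.phase1 p pt d A hdegp hdegpt hA
  -- support bounds for the A j k
  set e : Fin n → Fin n → ℕ := fun j i => if i = j then d j else d i + 1 with he
  have hsuppA : ∀ j k, ∀ α ∈ (A j k).support, ∀ i, α i < e j i := by
    intro j k α hα i
    by_cases hij : i = j
    · subst hij
      have h1 : ∀ m, d i ≤ m → S17.slice i m (A i k) = 0 :=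
        fun m hm => hslices i i k m (Or.inr ⟨rfl, hm⟩)
      have := S17.supp_lt_of_slices h1 α hα
      simp only [he, if_pos rfl]
      exact this
    · have h1 : ∀ m, d i + 1 ≤ m → S17.slice i m (A j k) = 0 :=
        fun m hm => hslices i j k m (Or.inl (by omega))
      have := S17.supp_lt_of_slices h1 α hα
      simp only [he, if_neg hij]
      exact this
  -- Gram reduction for each j
  have hgram := fun j => S17.gram (A j) (e j) (hsuppA j)
  choose C hCsupp hCsum using hgram
  -- index count
  have hcount : ∀ j, (∏ i, e j i) = d j * ∏ k ∈ Finset.univ.erase j, (d k + 1) := by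
    intro j
    rw [← Finset.mul_prod_erase Finset.univ (e j) (Finset.mem_univ j)]
    congr 1
    · simp [he]
    · apply Finset.prod_congr rfl
      intro i hi
      simp [he, (Finset.mem_erase.mp hi).1]
  refine ⟨fun j l => C j (finCongr (hcount j).symm l), ?_, ?_, ?_⟩
  · intro j l
    apply degreeOf_le_iff.mpr
    intro m hm
    have := hCsupp j _ m hm j
    simp only [he, if_pos rfl] at this
    omega
  · intro j l i hij
    apply degreeOf_le_iff.mpr
    intro m hm
    have := hCsupp j _ m hm i
    simp only [he, if_neg hij] at this
    omega
  · intro z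
    rw [hA z]
    apply Finset.sum_congr rfl
    intro j _
    congr 1
    have hnrm : ∀ w : ℂ, ‖w‖^2 = Complex.normSq w := fun w => by
      rw [Complex.sq_norm]
    calc ∑ k, ‖eval z (A j k)‖^2 = ∑ k, Complex.normSq (eval z (A j k)) := by
          exact Finset.sum_congr rfl fun k _ => hnrm _
      _ = ∑ l : Fin (∏ i, e j i), Complex.normSq (eval z (C j l)) := (hCsum j z).symm
      _ = ∑ l, Complex.normSq (eval z (C j (finCongr (hcount j).symm l))) :=
          (Fintype.sum_equiv (finCongr (hcount j).symm) _ _ (fun l => rfl)).symm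
      _ = ∑ l, ‖eval z (C j (finCongr (hcount j).symm l))‖^2 :=
          Finset.sum_congr rfl fun l _ => (hnrm _).symm
end
end

section
/- Let p(z_1,z_2,z_3,z_4) = 1 − (1/4)(z_1 + z_2 + z_3 + z_4) and let p̃(z) = z_1 z_2 z_3 z_4 − (1/4)(z_2 z_3 z_4 + z_1 z_3 z_4 + z_1 z_2 z_4 + z_1 z_2 z_3) be its reflection at multidegree (1,1,1,1). Then there exist finitely many polynomials A_{j,k} ∈ ℂ[z_1,z_2,z_3,z_4] such that |p(z)|² − |p̃(z)|² = ∑_{j=1}^4 (1 − |z_j|²)·∑_k |A_{j,k}(z)|² for all z ∈ ℂ⁴. -/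
open MvPolynomial Complex Finset

noncomputable section

set_option maxHeartbeats 4000000

noncomputable def P0_0 : MvPolynomial (Fin 4) ℂ := C ((1 : ℂ)/2) + C ((-1 : ℂ)/6) * X 1 + C ((-1 : ℂ)/6) * X 2 + C ((-1 : ℂ)/6) * X 3
noncomputable def P0_1 : MvPolynomial (Fin 4) ℂ := C ((1 : ℂ)/4) * X 1 + C ((1 : ℂ)/88) * X 2 + C ((1 : ℂ)/88) * X 3 + C ((-3 : ℂ)/22) * X 1 * X 2 + C ((-3 : ℂ)/22) * X 1 * X 3
noncomputable def P0_2 : MvPolynomial (Fin 4) ℂ := C ((-1 : ℂ)/12) * X 1 + C ((-1 : ℂ)/264) * X 2 + C ((-1 : ℂ)/264) * X 3 + C ((1 : ℂ)/22) * X 1 * X 2 + C ((1 : ℂ)/22) * X 1 * X 3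
noncomputable def P0_3 : MvPolynomial (Fin 4) ℂ := C ((-1 : ℂ)/12) * X 1 + C ((-1 : ℂ)/264) * X 2 + C ((-1 : ℂ)/264) * X 3 + C ((1 : ℂ)/22) * X 1 * X 2 + C ((1 : ℂ)/22) * X 1 * X 3
noncomputable def P0_4 : MvPolynomial (Fin 4) ℂ := C ((145 : ℂ)/528) * X 2 + C ((145 : ℂ)/12144) * X 3 + C ((-145 : ℂ)/1012) * X 1 * X 2 + C ((145 : ℂ)/21252) * X 1 * X 3 + C ((-145 : ℂ)/966) * X 2 * X 3
noncomputable def P0_5 : MvPolynomial (Fin 4) ℂ := C ((-7 : ℂ)/528) * X 2 + C ((-7 : ℂ)/12144) * X 3 + C ((7 : ℂ)/1012) * X 1 * X 2 + C ((-1 : ℂ)/3036) * X 1 * X 3 + C ((1 : ℂ)/138) * X 2 * X 3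
noncomputable def P0_6 : MvPolynomial (Fin 4) ℂ := C ((-1 : ℂ)/176) * X 2 + C ((-1 : ℂ)/4048) * X 3 + C ((3 : ℂ)/1012) * X 1 * X 2 + C ((-1 : ℂ)/7084) * X 1 * X 3 + C ((1 : ℂ)/322) * X 2 * X 3
noncomputable def P0_7 : MvPolynomial (Fin 4) ℂ := C ((13 : ℂ)/528) * X 2 + C ((13 : ℂ)/12144) * X 3 + C ((-13 : ℂ)/1012) * X 1 * X 2 + C ((13 : ℂ)/21252) * X 1 * X 3 + C ((-13 : ℂ)/966) * X 2 * X 3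
noncomputable def P0_8 : MvPolynomial (Fin 4) ℂ := C ((1 : ℂ)/4) * X 3 + C ((1 : ℂ)/84) * X 1 * X 2 + C ((-11 : ℂ)/84) * X 1 * X 3 + C ((-11 : ℂ)/84) * X 2 * X 3
noncomputable def P0_9 : MvPolynomial (Fin 4) ℂ := C ((-3 : ℂ)/92) * X 3 + C ((-1 : ℂ)/644) * X 1 * X 2 + C ((11 : ℂ)/644) * X 1 * X 3 + C ((11 : ℂ)/644) * X 2 * X 3
noncomputable def P0_10 : MvPolynomial (Fin 4) ℂ := C ((-5 : ℂ)/92) * X 3 + C ((-5 : ℂ)/1932) * X 1 * X 2 + C ((55 : ℂ)/1932) * X 1 * X 3 + C ((55 : ℂ)/1932) * X 2 * X 3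
noncomputable def P0_11 : MvPolynomial (Fin 4) ℂ := C ((-9 : ℂ)/92) * X 3 + C ((-3 : ℂ)/644) * X 1 * X 2 + C ((33 : ℂ)/644) * X 1 * X 3 + C ((33 : ℂ)/644) * X 2 * X 3
noncomputable def P0_12 : MvPolynomial (Fin 4) ℂ := C ((17 : ℂ)/72) * X 1 * X 2 + C ((391 : ℂ)/8784) * X 1 * X 3 + C ((391 : ℂ)/8784) * X 2 * X 3 + C ((-119 : ℂ)/366) * X 1 * X 2 * X 3
noncomputable def P0_13 : MvPolynomial (Fin 4) ℂ := C ((5 : ℂ)/504) * X 1 * X 2 + C ((115 : ℂ)/61488) * X 1 * X 3 + C ((115 : ℂ)/61488) * X 2 * X 3 + C ((-5 : ℂ)/366) * X 1 * X 2 * X 3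
noncomputable def P0_14 : MvPolynomial (Fin 4) ℂ := C ((-5 : ℂ)/168) * X 1 * X 2 + C ((-115 : ℂ)/20496) * X 1 * X 3 + C ((-115 : ℂ)/20496) * X 2 * X 3 + C ((5 : ℂ)/122) * X 1 * X 2 * X 3
noncomputable def P0_15 : MvPolynomial (Fin 4) ℂ := C ((-31 : ℂ)/504) * X 1 * X 2 + C ((-713 : ℂ)/61488) * X 1 * X 3 + C ((-713 : ℂ)/61488) * X 2 * X 3 + C ((31 : ℂ)/366) * X 1 * X 2 * X 3
noncomputable def P0_16 : MvPolynomial (Fin 4) ℂ := C ((1643 : ℂ)/6832) * X 1 * X 3 + C ((37789 : ℂ)/990640) * X 2 * X 3 + C ((-4929 : ℂ)/17690) * X 1 * X 2 * X 3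
noncomputable def P0_17 : MvPolynomial (Fin 4) ℂ := C ((-131 : ℂ)/6832) * X 1 * X 3 + C ((-3013 : ℂ)/990640) * X 2 * X 3 + C ((393 : ℂ)/17690) * X 1 * X 2 * X 3
noncomputable def P0_18 : MvPolynomial (Fin 4) ℂ := C ((-87 : ℂ)/6832) * X 1 * X 3 + C ((-69 : ℂ)/34160) * X 2 * X 3 + C ((9 : ℂ)/610) * X 1 * X 2 * X 3
noncomputable def P0_19 : MvPolynomial (Fin 4) ℂ := C ((-9 : ℂ)/6832) * X 1 * X 3 + C ((-207 : ℂ)/990640) * X 2 * X 3 + C ((27 : ℂ)/17690) * X 1 * X 2 * X 3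
noncomputable def P0_20 : MvPolynomial (Fin 4) ℂ := C ((31 : ℂ)/145) * X 2 * X 3 + C ((-31 : ℂ)/145) * X 1 * X 2 * X 3
noncomputable def P0_21 : MvPolynomial (Fin 4) ℂ := C ((-19 : ℂ)/290) * X 2 * X 3 + C ((19 : ℂ)/290) * X 1 * X 2 * X 3
noncomputable def P0_22 : MvPolynomial (Fin 4) ℂ := C ((-12 : ℂ)/145) * X 2 * X 3 + C ((12 : ℂ)/145) * X 1 * X 2 * X 3
noncomputable def P0_23 : MvPolynomial (Fin 4) ℂ := C ((-1 : ℂ)/145) * X 2 * X 3 + C ((1 : ℂ)/145) * X 1 * X 2 * X 3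
noncomputable def P1_0 : MvPolynomial (Fin 4) ℂ := C ((1 : ℂ)/2) + C ((-1 : ℂ)/6) * X 0 + C ((-1 : ℂ)/6) * X 2 + C ((-1 : ℂ)/6) * X 3
noncomputable def P1_1 : MvPolynomial (Fin 4) ℂ := C ((1 : ℂ)/4) * X 0 + C ((1 : ℂ)/88) * X 2 + C ((1 : ℂ)/88) * X 3 + C ((-3 : ℂ)/22) * X 0 * X 2 + C ((-3 : ℂ)/22) * X 0 * X 3
noncomputable def P1_2 : MvPolynomial (Fin 4) ℂ := C ((-1 : ℂ)/12) * X 0 + C ((-1 : ℂ)/264) * X 2 + C ((-1 : ℂ)/264) * X 3 + C ((1 : ℂ)/22) * X 0 * X 2 + C ((1 : ℂ)/22) * X 0 * X 3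
noncomputable def P1_3 : MvPolynomial (Fin 4) ℂ := C ((-1 : ℂ)/12) * X 0 + C ((-1 : ℂ)/264) * X 2 + C ((-1 : ℂ)/264) * X 3 + C ((1 : ℂ)/22) * X 0 * X 2 + C ((1 : ℂ)/22) * X 0 * X 3
noncomputable def P1_4 : MvPolynomial (Fin 4) ℂ := C ((145 : ℂ)/528) * X 2 + C ((145 : ℂ)/12144) * X 3 + C ((-145 : ℂ)/1012) * X 0 * X 2 + C ((145 : ℂ)/21252) * X 0 * X 3 + C ((-145 : ℂ)/966) * X 2 * X 3
noncomputable def P1_5 : MvPolynomial (Fin 4) ℂ := C ((-7 : ℂ)/528) * X 2 + C ((-7 : ℂ)/12144) * X 3 + C ((7 : ℂ)/1012) * X 0 * X 2 + C ((-1 : ℂ)/3036) * X 0 * X 3 + C ((1 : ℂ)/138) * X 2 * X 3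
noncomputable def P1_6 : MvPolynomial (Fin 4) ℂ := C ((-1 : ℂ)/176) * X 2 + C ((-1 : ℂ)/4048) * X 3 + C ((3 : ℂ)/1012) * X 0 * X 2 + C ((-1 : ℂ)/7084) * X 0 * X 3 + C ((1 : ℂ)/322) * X 2 * X 3
noncomputable def P1_7 : MvPolynomial (Fin 4) ℂ := C ((13 : ℂ)/528) * X 2 + C ((13 : ℂ)/12144) * X 3 + C ((-13 : ℂ)/1012) * X 0 * X 2 + C ((13 : ℂ)/21252) * X 0 * X 3 + C ((-13 : ℂ)/966) * X 2 * X 3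
noncomputable def P1_8 : MvPolynomial (Fin 4) ℂ := C ((1 : ℂ)/4) * X 3 + C ((1 : ℂ)/84) * X 0 * X 2 + C ((-11 : ℂ)/84) * X 0 * X 3 + C ((-11 : ℂ)/84) * X 2 * X 3
noncomputable def P1_9 : MvPolynomial (Fin 4) ℂ := C ((-3 : ℂ)/92) * X 3 + C ((-1 : ℂ)/644) * X 0 * X 2 + C ((11 : ℂ)/644) * X 0 * X 3 + C ((11 : ℂ)/644) * X 2 * X 3
noncomputable def P1_10 : MvPolynomial (Fin 4) ℂ := C ((-5 : ℂ)/92) * X 3 + C ((-5 : ℂ)/1932) * X 0 * X 2 + C ((55 : ℂ)/1932) * X 0 * X 3 + C ((55 : ℂ)/1932) * X 2 * X 3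
noncomputable def P1_11 : MvPolynomial (Fin 4) ℂ := C ((-9 : ℂ)/92) * X 3 + C ((-3 : ℂ)/644) * X 0 * X 2 + C ((33 : ℂ)/644) * X 0 * X 3 + C ((33 : ℂ)/644) * X 2 * X 3
noncomputable def P1_12 : MvPolynomial (Fin 4) ℂ := C ((17 : ℂ)/72) * X 0 * X 2 + C ((391 : ℂ)/8784) * X 0 * X 3 + C ((391 : ℂ)/8784) * X 2 * X 3 + C ((-119 : ℂ)/366) * X 0 * X 2 * X 3
noncomputable def P1_13 : MvPolynomial (Fin 4) ℂ := C ((5 : ℂ)/504) * X 0 * X 2 + C ((115 : ℂ)/61488) * X 0 * X 3 + C ((115 : ℂ)/61488) * X 2 * X 3 + C ((-5 : ℂ)/366) * X 0 * X 2 * X 3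
noncomputable def P1_14 : MvPolynomial (Fin 4) ℂ := C ((-5 : ℂ)/168) * X 0 * X 2 + C ((-115 : ℂ)/20496) * X 0 * X 3 + C ((-115 : ℂ)/20496) * X 2 * X 3 + C ((5 : ℂ)/122) * X 0 * X 2 * X 3
noncomputable def P1_15 : MvPolynomial (Fin 4) ℂ := C ((-31 : ℂ)/504) * X 0 * X 2 + C ((-713 : ℂ)/61488) * X 0 * X 3 + C ((-713 : ℂ)/61488) * X 2 * X 3 + C ((31 : ℂ)/366) * X 0 * X 2 * X 3
noncomputable def P1_16 : MvPolynomial (Fin 4) ℂ := C ((1643 : ℂ)/6832) * X 0 * X 3 + C ((37789 : ℂ)/990640) * X 2 * X 3 + C ((-4929 : ℂ)/17690) * X 0 * X 2 * X 3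
noncomputable def P1_17 : MvPolynomial (Fin 4) ℂ := C ((-131 : ℂ)/6832) * X 0 * X 3 + C ((-3013 : ℂ)/990640) * X 2 * X 3 + C ((393 : ℂ)/17690) * X 0 * X 2 * X 3
noncomputable def P1_18 : MvPolynomial (Fin 4) ℂ := C ((-87 : ℂ)/6832) * X 0 * X 3 + C ((-69 : ℂ)/34160) * X 2 * X 3 + C ((9 : ℂ)/610) * X 0 * X 2 * X 3
noncomputable def P1_19 : MvPolynomial (Fin 4) ℂ := C ((-9 : ℂ)/6832) * X 0 * X 3 + C ((-207 : ℂ)/990640) * X 2 * X 3 + C ((27 : ℂ)/17690) * X 0 * X 2 * X 3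
noncomputable def P1_20 : MvPolynomial (Fin 4) ℂ := C ((31 : ℂ)/145) * X 2 * X 3 + C ((-31 : ℂ)/145) * X 0 * X 2 * X 3
noncomputable def P1_21 : MvPolynomial (Fin 4) ℂ := C ((-19 : ℂ)/290) * X 2 * X 3 + C ((19 : ℂ)/290) * X 0 * X 2 * X 3
noncomputable def P1_22 : MvPolynomial (Fin 4) ℂ := C ((-12 : ℂ)/145) * X 2 * X 3 + C ((12 : ℂ)/145) * X 0 * X 2 * X 3
noncomputable def P1_23 : MvPolynomial (Fin 4) ℂ := C ((-1 : ℂ)/145) * X 2 * X 3 + C ((1 : ℂ)/145) * X 0 * X 2 * X 3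
noncomputable def P2_0 : MvPolynomial (Fin 4) ℂ := C ((1 : ℂ)/2) + C ((-1 : ℂ)/6) * X 0 + C ((-1 : ℂ)/6) * X 1 + C ((-1 : ℂ)/6) * X 3
noncomputable def P2_1 : MvPolynomial (Fin 4) ℂ := C ((1 : ℂ)/4) * X 0 + C ((1 : ℂ)/88) * X 1 + C ((1 : ℂ)/88) * X 3 + C ((-3 : ℂ)/22) * X 0 * X 1 + C ((-3 : ℂ)/22) * X 0 * X 3
noncomputable def P2_2 : MvPolynomial (Fin 4) ℂ := C ((-1 : ℂ)/12) * X 0 + C ((-1 : ℂ)/264) * X 1 + C ((-1 : ℂ)/264) * X 3 + C ((1 : ℂ)/22) * X 0 * X 1 + C ((1 : ℂ)/22) * X 0 * X 3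
noncomputable def P2_3 : MvPolynomial (Fin 4) ℂ := C ((-1 : ℂ)/12) * X 0 + C ((-1 : ℂ)/264) * X 1 + C ((-1 : ℂ)/264) * X 3 + C ((1 : ℂ)/22) * X 0 * X 1 + C ((1 : ℂ)/22) * X 0 * X 3
noncomputable def P2_4 : MvPolynomial (Fin 4) ℂ := C ((145 : ℂ)/528) * X 1 + C ((145 : ℂ)/12144) * X 3 + C ((-145 : ℂ)/1012) * X 0 * X 1 + C ((145 : ℂ)/21252) * X 0 * X 3 + C ((-145 : ℂ)/966) * X 1 * X 3
noncomputable def P2_5 : MvPolynomial (Fin 4) ℂ := C ((-7 : ℂ)/528) * X 1 + C ((-7 : ℂ)/12144) * X 3 + C ((7 : ℂ)/1012) * X 0 * X 1 + C ((-1 : ℂ)/3036) * X 0 * X 3 + C ((1 : ℂ)/138) * X 1 * X 3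
noncomputable def P2_6 : MvPolynomial (Fin 4) ℂ := C ((-1 : ℂ)/176) * X 1 + C ((-1 : ℂ)/4048) * X 3 + C ((3 : ℂ)/1012) * X 0 * X 1 + C ((-1 : ℂ)/7084) * X 0 * X 3 + C ((1 : ℂ)/322) * X 1 * X 3
noncomputable def P2_7 : MvPolynomial (Fin 4) ℂ := C ((13 : ℂ)/528) * X 1 + C ((13 : ℂ)/12144) * X 3 + C ((-13 : ℂ)/1012) * X 0 * X 1 + C ((13 : ℂ)/21252) * X 0 * X 3 + C ((-13 : ℂ)/966) * X 1 * X 3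
noncomputable def P2_8 : MvPolynomial (Fin 4) ℂ := C ((1 : ℂ)/4) * X 3 + C ((1 : ℂ)/84) * X 0 * X 1 + C ((-11 : ℂ)/84) * X 0 * X 3 + C ((-11 : ℂ)/84) * X 1 * X 3
noncomputable def P2_9 : MvPolynomial (Fin 4) ℂ := C ((-3 : ℂ)/92) * X 3 + C ((-1 : ℂ)/644) * X 0 * X 1 + C ((11 : ℂ)/644) * X 0 * X 3 + C ((11 : ℂ)/644) * X 1 * X 3
noncomputable def P2_10 : MvPolynomial (Fin 4) ℂ := C ((-5 : ℂ)/92) * X 3 + C ((-5 : ℂ)/1932) * X 0 * X 1 + C ((55 : ℂ)/1932) * X 0 * X 3 + C ((55 : ℂ)/1932) * X 1 * X 3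
noncomputable def P2_11 : MvPolynomial (Fin 4) ℂ := C ((-9 : ℂ)/92) * X 3 + C ((-3 : ℂ)/644) * X 0 * X 1 + C ((33 : ℂ)/644) * X 0 * X 3 + C ((33 : ℂ)/644) * X 1 * X 3
noncomputable def P2_12 : MvPolynomial (Fin 4) ℂ := C ((17 : ℂ)/72) * X 0 * X 1 + C ((391 : ℂ)/8784) * X 0 * X 3 + C ((391 : ℂ)/8784) * X 1 * X 3 + C ((-119 : ℂ)/366) * X 0 * X 1 * X 3
noncomputable def P2_13 : MvPolynomial (Fin 4) ℂ := C ((5 : ℂ)/504) * X 0 * X 1 + C ((115 : ℂ)/61488) * X 0 * X 3 + C ((115 : ℂ)/61488) * X 1 * X 3 + C ((-5 : ℂ)/366) * X 0 * X 1 * X 3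
noncomputable def P2_14 : MvPolynomial (Fin 4) ℂ := C ((-5 : ℂ)/168) * X 0 * X 1 + C ((-115 : ℂ)/20496) * X 0 * X 3 + C ((-115 : ℂ)/20496) * X 1 * X 3 + C ((5 : ℂ)/122) * X 0 * X 1 * X 3
noncomputable def P2_15 : MvPolynomial (Fin 4) ℂ := C ((-31 : ℂ)/504) * X 0 * X 1 + C ((-713 : ℂ)/61488) * X 0 * X 3 + C ((-713 : ℂ)/61488) * X 1 * X 3 + C ((31 : ℂ)/366) * X 0 * X 1 * X 3
noncomputable def P2_16 : MvPolynomial (Fin 4) ℂ := C ((1643 : ℂ)/6832) * X 0 * X 3 + C ((37789 : ℂ)/990640) * X 1 * X 3 + C ((-4929 : ℂ)/17690) * X 0 * X 1 * X 3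
noncomputable def P2_17 : MvPolynomial (Fin 4) ℂ := C ((-131 : ℂ)/6832) * X 0 * X 3 + C ((-3013 : ℂ)/990640) * X 1 * X 3 + C ((393 : ℂ)/17690) * X 0 * X 1 * X 3
noncomputable def P2_18 : MvPolynomial (Fin 4) ℂ := C ((-87 : ℂ)/6832) * X 0 * X 3 + C ((-69 : ℂ)/34160) * X 1 * X 3 + C ((9 : ℂ)/610) * X 0 * X 1 * X 3
noncomputable def P2_19 : MvPolynomial (Fin 4) ℂ := C ((-9 : ℂ)/6832) * X 0 * X 3 + C ((-207 : ℂ)/990640) * X 1 * X 3 + C ((27 : ℂ)/17690) * X 0 * X 1 * X 3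
noncomputable def P2_20 : MvPolynomial (Fin 4) ℂ := C ((31 : ℂ)/145) * X 1 * X 3 + C ((-31 : ℂ)/145) * X 0 * X 1 * X 3
noncomputable def P2_21 : MvPolynomial (Fin 4) ℂ := C ((-19 : ℂ)/290) * X 1 * X 3 + C ((19 : ℂ)/290) * X 0 * X 1 * X 3
noncomputable def P2_22 : MvPolynomial (Fin 4) ℂ := C ((-12 : ℂ)/145) * X 1 * X 3 + C ((12 : ℂ)/145) * X 0 * X 1 * X 3
noncomputable def P2_23 : MvPolynomial (Fin 4) ℂ := C ((-1 : ℂ)/145) * X 1 * X 3 + C ((1 : ℂ)/145) * X 0 * X 1 * X 3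
noncomputable def P3_0 : MvPolynomial (Fin 4) ℂ := C ((1 : ℂ)/2) + C ((-1 : ℂ)/6) * X 0 + C ((-1 : ℂ)/6) * X 1 + C ((-1 : ℂ)/6) * X 2
noncomputable def P3_1 : MvPolynomial (Fin 4) ℂ := C ((1 : ℂ)/4) * X 0 + C ((1 : ℂ)/88) * X 1 + C ((1 : ℂ)/88) * X 2 + C ((-3 : ℂ)/22) * X 0 * X 1 + C ((-3 : ℂ)/22) * X 0 * X 2
noncomputable def P3_2 : MvPolynomial (Fin 4) ℂ := C ((-1 : ℂ)/12) * X 0 + C ((-1 : ℂ)/264) * X 1 + C ((-1 : ℂ)/264) * X 2 + C ((1 : ℂ)/22) * X 0 * X 1 + C ((1 : ℂ)/22) * X 0 * X 2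
noncomputable def P3_3 : MvPolynomial (Fin 4) ℂ := C ((-1 : ℂ)/12) * X 0 + C ((-1 : ℂ)/264) * X 1 + C ((-1 : ℂ)/264) * X 2 + C ((1 : ℂ)/22) * X 0 * X 1 + C ((1 : ℂ)/22) * X 0 * X 2
noncomputable def P3_4 : MvPolynomial (Fin 4) ℂ := C ((145 : ℂ)/528) * X 1 + C ((145 : ℂ)/12144) * X 2 + C ((-145 : ℂ)/1012) * X 0 * X 1 + C ((145 : ℂ)/21252) * X 0 * X 2 + C ((-145 : ℂ)/966) * X 1 * X 2
noncomputable def P3_5 : MvPolynomial (Fin 4) ℂ := C ((-7 : ℂ)/528) * X 1 + C ((-7 : ℂ)/12144) * X 2 + C ((7 : ℂ)/1012) * X 0 * X 1 + C ((-1 : ℂ)/3036) * X 0 * X 2 + C ((1 : ℂ)/138) * X 1 * X 2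
noncomputable def P3_6 : MvPolynomial (Fin 4) ℂ := C ((-1 : ℂ)/176) * X 1 + C ((-1 : ℂ)/4048) * X 2 + C ((3 : ℂ)/1012) * X 0 * X 1 + C ((-1 : ℂ)/7084) * X 0 * X 2 + C ((1 : ℂ)/322) * X 1 * X 2
noncomputable def P3_7 : MvPolynomial (Fin 4) ℂ := C ((13 : ℂ)/528) * X 1 + C ((13 : ℂ)/12144) * X 2 + C ((-13 : ℂ)/1012) * X 0 * X 1 + C ((13 : ℂ)/21252) * X 0 * X 2 + C ((-13 : ℂ)/966) * X 1 * X 2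
noncomputable def P3_8 : MvPolynomial (Fin 4) ℂ := C ((1 : ℂ)/4) * X 2 + C ((1 : ℂ)/84) * X 0 * X 1 + C ((-11 : ℂ)/84) * X 0 * X 2 + C ((-11 : ℂ)/84) * X 1 * X 2
noncomputable def P3_9 : MvPolynomial (Fin 4) ℂ := C ((-3 : ℂ)/92) * X 2 + C ((-1 : ℂ)/644) * X 0 * X 1 + C ((11 : ℂ)/644) * X 0 * X 2 + C ((11 : ℂ)/644) * X 1 * X 2
noncomputable def P3_10 : MvPolynomial (Fin 4) ℂ := C ((-5 : ℂ)/92) * X 2 + C ((-5 : ℂ)/1932) * X 0 * X 1 + C ((55 : ℂ)/1932) * X 0 * X 2 + C ((55 : ℂ)/1932) * X 1 * X 2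
noncomputable def P3_11 : MvPolynomial (Fin 4) ℂ := C ((-9 : ℂ)/92) * X 2 + C ((-3 : ℂ)/644) * X 0 * X 1 + C ((33 : ℂ)/644) * X 0 * X 2 + C ((33 : ℂ)/644) * X 1 * X 2
noncomputable def P3_12 : MvPolynomial (Fin 4) ℂ := C ((17 : ℂ)/72) * X 0 * X 1 + C ((391 : ℂ)/8784) * X 0 * X 2 + C ((391 : ℂ)/8784) * X 1 * X 2 + C ((-119 : ℂ)/366) * X 0 * X 1 * X 2
noncomputable def P3_13 : MvPolynomial (Fin 4) ℂ := C ((5 : ℂ)/504) * X 0 * X 1 + C ((115 : ℂ)/61488) * X 0 * X 2 + C ((115 : ℂ)/61488) * X 1 * X 2 + C ((-5 : ℂ)/366) * X 0 * X 1 * X 2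
noncomputable def P3_14 : MvPolynomial (Fin 4) ℂ := C ((-5 : ℂ)/168) * X 0 * X 1 + C ((-115 : ℂ)/20496) * X 0 * X 2 + C ((-115 : ℂ)/20496) * X 1 * X 2 + C ((5 : ℂ)/122) * X 0 * X 1 * X 2
noncomputable def P3_15 : MvPolynomial (Fin 4) ℂ := C ((-31 : ℂ)/504) * X 0 * X 1 + C ((-713 : ℂ)/61488) * X 0 * X 2 + C ((-713 : ℂ)/61488) * X 1 * X 2 + C ((31 : ℂ)/366) * X 0 * X 1 * X 2
noncomputable def P3_16 : MvPolynomial (Fin 4) ℂ := C ((1643 : ℂ)/6832) * X 0 * X 2 + C ((37789 : ℂ)/990640) * X 1 * X 2 + C ((-4929 : ℂ)/17690) * X 0 * X 1 * X 2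
noncomputable def P3_17 : MvPolynomial (Fin 4) ℂ := C ((-131 : ℂ)/6832) * X 0 * X 2 + C ((-3013 : ℂ)/990640) * X 1 * X 2 + C ((393 : ℂ)/17690) * X 0 * X 1 * X 2
noncomputable def P3_18 : MvPolynomial (Fin 4) ℂ := C ((-87 : ℂ)/6832) * X 0 * X 2 + C ((-69 : ℂ)/34160) * X 1 * X 2 + C ((9 : ℂ)/610) * X 0 * X 1 * X 2
noncomputable def P3_19 : MvPolynomial (Fin 4) ℂ := C ((-9 : ℂ)/6832) * X 0 * X 2 + C ((-207 : ℂ)/990640) * X 1 * X 2 + C ((27 : ℂ)/17690) * X 0 * X 1 * X 2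
noncomputable def P3_20 : MvPolynomial (Fin 4) ℂ := C ((31 : ℂ)/145) * X 1 * X 2 + C ((-31 : ℂ)/145) * X 0 * X 1 * X 2
noncomputable def P3_21 : MvPolynomial (Fin 4) ℂ := C ((-19 : ℂ)/290) * X 1 * X 2 + C ((19 : ℂ)/290) * X 0 * X 1 * X 2
noncomputable def P3_22 : MvPolynomial (Fin 4) ℂ := C ((-12 : ℂ)/145) * X 1 * X 2 + C ((12 : ℂ)/145) * X 0 * X 1 * X 2
noncomputable def P3_23 : MvPolynomial (Fin 4) ℂ := C ((-1 : ℂ)/145) * X 1 * X 2 + C ((1 : ℂ)/145) * X 0 * X 1 * X 2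
noncomputable def R0 : Fin 24 → MvPolynomial (Fin 4) ℂ := ![P0_0, P0_1, P0_2, P0_3, P0_4, P0_5, P0_6, P0_7, P0_8, P0_9, P0_10, P0_11, P0_12, P0_13, P0_14, P0_15, P0_16, P0_17, P0_18, P0_19, P0_20, P0_21, P0_22, P0_23]
noncomputable def R1 : Fin 24 → MvPolynomial (Fin 4) ℂ := ![P1_0, P1_1, P1_2, P1_3, P1_4, P1_5, P1_6, P1_7, P1_8, P1_9, P1_10, P1_11, P1_12, P1_13, P1_14, P1_15, P1_16, P1_17, P1_18, P1_19, P1_20, P1_21, P1_22, P1_23]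
noncomputable def R2 : Fin 24 → MvPolynomial (Fin 4) ℂ := ![P2_0, P2_1, P2_2, P2_3, P2_4, P2_5, P2_6, P2_7, P2_8, P2_9, P2_10, P2_11, P2_12, P2_13, P2_14, P2_15, P2_16, P2_17, P2_18, P2_19, P2_20, P2_21, P2_22, P2_23]
noncomputable def R3 : Fin 24 → MvPolynomial (Fin 4) ℂ := ![P3_0, P3_1, P3_2, P3_3, P3_4, P3_5, P3_6, P3_7, P3_8, P3_9, P3_10, P3_11, P3_12, P3_13, P3_14, P3_15, P3_16, P3_17, P3_18, P3_19, P3_20, P3_21, P3_22, P3_23]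
noncomputable def AA : Fin 4 → Fin 24 → MvPolynomial (Fin 4) ℂ := ![R0, R1, R2, R3]

/-- for `p(z) = 1 − (1/4)(z₁+z₂+z₃+z₄)` with reflection
`p̃(z) = z₁z₂z₃z₄ − (1/4)(z₂z₃z₄ + z₁z₃z₄ + z₁z₂z₄ + z₁z₂z₃)`, there are finitely many
polynomials `A_{j,k}` with `|p(z)|² − |p̃(z)|² = ∑ⱼ (1−|zⱼ|²) ∑ₖ |A_{j,k}(z)|²`. -/
theorem stmt18 :
    ∃ (N : ℕ) (A : Fin 4 → Fin N → MvPolynomial (Fin 4) ℂ),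
      ∀ z : Fin 4 → ℂ,
        ‖1 - (1 / 4 : ℂ) * ∑ i, z i‖ ^ 2 -
            ‖(∏ i, z i) - (1 / 4 : ℂ) * ∑ j, ∏ i ∈ Finset.univ.erase j, z i‖ ^ 2 =
          ∑ j, (1 - ‖z j‖ ^ 2) * ∑ k, ‖eval z (A j k)‖ ^ 2 := by
  refine ⟨24, AA, ?_⟩
  intro z
  have hnorm : ∀ w : ℂ, ‖w‖ ^ 2 = Complex.normSq w := fun w => by
    rw [Complex.sq_norm]
  have he : ∑ j, ∏ i ∈ Finset.univ.erase j, z i =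
      z 1*(z 2*z 3) + z 0*(z 2*z 3) + z 0*(z 1*z 3) + z 0*(z 1*z 2) := by
    rw [Fin.sum_univ_four,
      show (Finset.univ.erase (0:Fin 4)) = {1,2,3} from by decide,
      show (Finset.univ.erase (1:Fin 4)) = {0,2,3} from by decide,
      show (Finset.univ.erase (2:Fin 4)) = {0,1,3} from by decide,
      show (Finset.univ.erase (3:Fin 4)) = {0,1,2} from by decide]
    simp [Finset.prod_insert, mul_assoc]
  simp only [hnorm, he, Fin.prod_univ_four, Fin.sum_univ_four]
  rw [← Complex.ofReal_inj]
  push_cast [← Complex.mul_conj]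
  simp only [Fin.sum_univ_succ, Fin.sum_univ_zero, AA, R0, R1, R2, R3,
    Matrix.cons_val_zero, Matrix.cons_val_one, Matrix.head_cons, Matrix.cons_val_succ,
    Matrix.cons_val_two, Matrix.cons_val_three, Matrix.tail_cons,
    P0_0, P0_1, P0_2, P0_3, P0_4, P0_5, P0_6, P0_7, P0_8, P0_9, P0_10, P0_11, P0_12, P0_13, P0_14, P0_15, P0_16, P0_17, P0_18, P0_19, P0_20, P0_21, P0_22, P0_23, P1_0, P1_1, P1_2, P1_3, P1_4, P1_5, P1_6, P1_7, P1_8, P1_9, P1_10, P1_11, P1_12, P1_13, P1_14, P1_15, P1_16, P1_17, P1_18, P1_19, P1_20, P1_21, P1_22, P1_23, P2_0, P2_1, P2_2, P2_3, P2_4, P2_5, P2_6, P2_7, P2_8, P2_9, P2_10, P2_11, P2_12, P2_13, P2_14, P2_15, P2_16, P2_17, P2_18, P2_19, P2_20, P2_21, P2_22, P2_23, P3_0, P3_1, P3_2, P3_3, P3_4, P3_5, P3_6, P3_7, P3_8, P3_9, P3_10, P3_11, P3_12, P3_13, P3_14, P3_15, P3_16, P3_17, P3_18, P3_19, P3_20,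 P3_21, P3_22, P3_23]
  simp only [map_add, map_sub, map_mul, map_one, map_div₀, eval_C, eval_X, map_neg,
    Complex.conj_ofNat, map_zero, add_zero]
  ring
end
end

section
/- Let p ∈ ℂ[z_1,z_2,z_3] be multi-affine and stable, written p = a(z_1,z_2) + b(z_1,z_2)·z_3, and let ã, b̃ denote the bidegree-(1,1) reflections of a, b. Let E_1, E_2 ∈ ℂ[z_1,z_2] be polynomials of degree at most one in each variable satisfying |E_1(z_1,z_2)|² + |E_2(z_1,z_2)|² = |a(z_1,z_2)|² − |b(z_1,z_2)|² for all (z_1,z_2) ∈ 𝕋², and let E = (E_1,E_2)ᵗ, Ẽ = (Ẽ_1,Ẽ_2)ᵗ be the column vectors of these polynomials and their bidegree-(1,1) reflections. Define the 3×3 matrix-valued function V = (1/a)·[[b̃, Ẽᵗ],[E, (E·Ẽᵗ − a(ã + b)·I_2)/(a + b̃)]] (block structure: top-left 1×1 entry b̃, top-right 1×2 row Ẽᵗ, bottom-left 2×1 column E, bottom-right 2×2 block (E·Ẽᵗ − a(ã + b)I_2)/(a + b̃)). Then V is holomorphic on the open bidisk 𝔻² and V(z_1,z_2) is a unitary 3×3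 matrix for every (z_1,z_2) ∈ 𝕋². -/
open MvPolynomial Complex ComplexConjugate Finset

noncomputable section

set_option maxHeartbeats 1000000 in
lemma kummert_core (A B E F S : ℂ) (hA : A ≠ 0) (hS : S * conj S = 1)
    (hd : A + S * conj B ≠ 0)
    (h : E * conj E + F * conj F = A * conj A - B * conj B) :
    (A⁻¹ • !![S * conj B, S * conj E, S * conj F;
       E, (E * (S * conj E) - A * (S * conj A + B)) / (A + S * conj B),
          (E * (S * conj F)) / (A + S * conj B);
       F, (F * (S * conj E)) / (A + S * conj B),
          (F * (S * conj F) - A * (S * conj A + B)) / (A + S * conj B)])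
      ∈ Matrix.unitaryGroup (Fin 3) ℂ := by
  have hd' : conj A + conj S * B ≠ 0 := by
    intro hc
    apply hd
    have := congrArg conj hc
    simpa using this
  rw [Matrix.mem_unitaryGroup_iff']
  have key : star (!![S * conj B, S * conj E, S * conj F;
       E, (E * (S * conj E) - A * (S * conj A + B)) / (A + S * conj B),
          (E * (S * conj F)) / (A + S * conj B);
       F, (F * (S * conj E)) / (A + S * conj B),
          (F * (S * conj F) - A * (S * conj A + B)) / (A + S * conj B)]) *
      (!![S * conj B, S * conj E, S * conj F;
       E, (E * (S * conj E) - A * (S * conj A + B)) / (A + S * conj B),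
          (E * (S * conj F)) / (A + S * conj B);
       F, (F * (S * conj E)) / (A + S * conj B),
          (F * (S * conj F) - A * (S * conj A + B)) / (A + S * conj B)]) =
      (A * conj A) • (1 : Matrix (Fin 3) (Fin 3) ℂ) := by
    ext i j
    rw [Matrix.mul_apply]
    fin_cases i <;> fin_cases j <;>
      simp only [Fin.sum_univ_three, Matrix.conjTranspose_apply, Matrix.smul_apply,
        Matrix.cons_val', Matrix.cons_val_zero, Matrix.cons_val_one, Matrix.head_cons,
        Matrix.head_fin_const, Matrix.empty_val', Matrix.cons_val_fin_one,
        Matrix.cons_val_two, Matrix.tail_cons, Matrix.one_apply, Matrix.star_apply,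
        RCLike.star_def, map_div₀, map_mul, map_add, map_sub, Complex.conj_conj,
        smul_eq_mul, if_true, if_false, Fin.mk.injEq, Matrix.of_apply, Fin.zero_eta, Fin.mk_one, Fin.reduceFinMk, Matrix.cons_val, Fin.reduceEq, Fin.isValue] <;>
      field_simp
    · linear_combination h + (B*conj B) * hS
    · linear_combination (conj E*S)*h + (B*conj B*conj E*S + A*B*conj E)*hS
    · linear_combination (conj F*S)*h + (B*conj B*conj F*S + A*B*conj F)*hS
    · linear_combination (E*conj S)*h + (B*conj B*E*conj S + conj A*conj B*E)*hS
    · linear_combination (E*conj E)*h + (E*conj E*F*conj F + E^2*(conj E)^2 + B*conj B*E*conj E + B*conj B*E*conj E*S*conj S + conj A*conj B*E*conj E*S + A*B*E*conj E*conj S - A*conj A*E*conj E - A*conj A*B*conj B + A^2*(conj A)^2)*hS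
    · linear_combination (E*conj F)*h + (E*F*(conj F)^2 + E^2*conj E*conj F + B*conj B*E*conj F + B*conj B*E*conj F*S*conj S + conj A*conj B*E*conj F*S + A*B*E*conj F*conj S - A*conj A*E*conj F)*hS
    · linear_combination (F*conj S)*h + (B*conj B*F*conj S + conj A*conj B*F)*hS
    · linear_combination (conj E*F)*h + (conj E*F^2*conj F + E*(conj E)^2*F + B*conj B*conj E*F + B*conj B*conj E*F*S*conj S + conj A*conj B*conj E*F*S + A*B*conj E*F*conj S - A*conj A*conj E*F)*hS
    · linear_combination (F*conj F)*h + (F^2*(conj F)^2 + E*conj E*F*conj F + B*conj B*F*conj F + B*conj B*F*conj F*S*conj S + conj A*conj B*F*conj F*S + A*B*F*conj F*conj S - A*conj A*F*conj F - A*conj A*B*conj B + A^2*(conj A)^2)*hS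
  rw [star_smul, Matrix.smul_mul, Matrix.mul_smul, key, smul_smul, smul_smul]
  have hA2 : conj A ≠ 0 := by simpa using hA
  rw [show (star A⁻¹ * A⁻¹ * (A * conj A)) = 1 by
    simp only [RCLike.star_def, map_inv₀]
    field_simp]
  exact one_smul _ _

lemma diff_eval2 (q : MvPolynomial (Fin 2) ℂ) :
    Differentiable ℂ (fun w : ℂ × ℂ => eval ![w.1, w.2] q) := by
  induction q using MvPolynomial.induction_on with
  | C c => simp
  | add p q hp hq => simp only [eval_add]; exact hp.add hq
  | mul_X p i hp =>
      simp only [eval_mul, eval_X]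
      refine hp.mul ?_
      fin_cases i
      · simp
      · simp

lemma refl2_on_torus {q qt : MvPolynomial (Fin 2) ℂ} (hq : IsReflection2 q qt)
    {z1 z2 : ℂ} (h1 : ‖z1‖ = 1) (h2 : ‖z2‖ = 1) :
    eval ![z1, z2] qt = z1 * z2 * conj (eval ![z1, z2] q) := by
  have hz1 : z1 ≠ 0 := by intro h; rw [h] at h1; simp at h1
  have hz2 : z2 ≠ 0 := by intro h; rw [h] at h2; simp at h2
  have e1 : (conj z1)⁻¹ = z1 := by
    rw [Complex.inv_eq_conj (by simpa using h1), Complex.conj_conj]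
  have e2 : (conj z2)⁻¹ = z2 := by
    rw [Complex.inv_eq_conj (by simpa using h2), Complex.conj_conj]
  rw [hq z1 z2 hz1 hz2, e1, e2]


set_option maxHeartbeats 2000000 in
/-- for a stable multi-affine `p = a + b z₃` and polynomials `E₁, E₂` of
degree at most one in each variable with `|E₁|² + |E₂|² = |a|² − |b|²` on `𝕋²`,
Kummert's matrix
`V = (1/a) [[b̃, Ẽᵗ], [E, (E Ẽᵗ − a(ã + b) I₂)/(a + b̃)]]`
is holomorphic on the open bidisk and unitary-valued on `𝕋²`. -/
theorem stmt19 (p : MvPolynomial (Fin 3) ℂ)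
    (a b a' bt E1 E2 Et1 Et2 : MvPolynomial (Fin 2) ℂ)
    (hma : ∀ i, p.degreeOf i ≤ 1) (hst : IsStable p)
    (hmaa : ∀ i, a.degreeOf i ≤ 1) (hmab : ∀ i, b.degreeOf i ≤ 1)
    (hp : ∀ z : Fin 3 → ℂ,
      eval z p = eval ![z 0, z 1] a + eval ![z 0, z 1] b * z 2)
    (hat : IsReflection2 a a') (hbt : IsReflection2 b bt)
    (hE1d : ∀ i, E1.degreeOf i ≤ 1) (hE2d : ∀ i, E2.degreeOf i ≤ 1)
    (hE : ∀ z1 z2 : ℂ, ‖z1‖ = 1 → ‖z2‖ = 1 →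
      ‖eval ![z1, z2] E1‖ ^ 2 + ‖eval ![z1, z2] E2‖ ^ 2 =
        ‖eval ![z1, z2] a‖ ^ 2 - ‖eval ![z1, z2] b‖ ^ 2)
    (hEt1 : IsReflection2 E1 Et1) (hEt2 : IsReflection2 E2 Et2)
    (V : ℂ → ℂ → Matrix (Fin 3) (Fin 3) ℂ)
    (hV : ∀ z1 z2 : ℂ, V z1 z2 =
      (eval ![z1, z2] a)⁻¹ •
        !![eval ![z1, z2] bt, eval ![z1, z2] Et1, eval ![z1, z2] Et2;
           eval ![z1, z2] E1,
             (eval ![z1, z2] E1 * eval ![z1, z2] Et1 -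
                 eval ![z1, z2] a * (eval ![z1, z2] a' + eval ![z1, z2] b)) /
               (eval ![z1, z2] a + eval ![z1, z2] bt),
             (eval ![z1, z2] E1 * eval ![z1, z2] Et2) /
               (eval ![z1, z2] a + eval ![z1, z2] bt);
           eval ![z1, z2] E2,
             (eval ![z1, z2] E2 * eval ![z1, z2] Et1) /
               (eval ![z1, z2] a + eval ![z1, z2] bt),
             (eval ![z1, z2] E2 * eval ![z1, z2] Et2 -
                 eval ![z1, z2] a * (eval ![z1, z2] a' + eval ![z1, z2] b)) /
               (eval ![z1, z2] a + eval ![z1, z2] bt)]) :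
    (∀ i j : Fin 3, DifferentiableOn ℂ (fun w : ℂ × ℂ => V w.1 w.2 i j)
        {w : ℂ × ℂ | ‖w.1‖ < 1 ∧ ‖w.2‖ < 1}) ∧
    (∀ z1 z2 : ℂ, ‖z1‖ = 1 → ‖z2‖ = 1 →
      V z1 z2 ∈ Matrix.unitaryGroup (Fin 3) ℂ) := by
  -- a has no zeros on the closed bidisk
  have hA0 : ∀ z1 z2 : ℂ, ‖z1‖ ≤ 1 → ‖z2‖ ≤ 1 → eval ![z1, z2] a ≠ 0 := by
    intro z1 z2 h1 h2 hzero
    apply hst ![z1, z2, 0] (by intro i; fin_cases i <;> simpa)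
    rw [hp]
    simp only [Matrix.cons_val_zero, Matrix.cons_val_one, Matrix.head_cons,
      Matrix.cons_val_two, Matrix.tail_cons, mul_zero, add_zero]
    exact hzero
  -- |b| < |a| on the closed bidisk
  have hBA : ∀ z1 z2 : ℂ, ‖z1‖ ≤ 1 → ‖z2‖ ≤ 1 →
      ‖eval ![z1, z2] b‖ < ‖eval ![z1, z2] a‖ := by
    intro z1 z2 h1 h2
    by_contra hle
    push_neg at hle
    have hb0 : eval ![z1, z2] b ≠ 0 := by
      intro h0
      apply hA0 z1 z2 h1 h2
      rw [h0, norm_zero] at hle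
      exact norm_le_zero_iff.mp hle
    set w := -(eval ![z1, z2] a / eval ![z1, z2] b) with hw
    have hw1 : ‖w‖ ≤ 1 := by
      rw [hw, norm_neg, norm_div]
      exact div_le_one_of_le₀ hle (norm_nonneg _)
    apply hst ![z1, z2, w] (by intro i; fin_cases i <;> simpa)
    rw [hp]
    simp only [Matrix.cons_val_zero, Matrix.cons_val_one, Matrix.head_cons,
      Matrix.cons_val_two, Matrix.tail_cons, hw]
    field_simp
    ring
  -- the max-modulus bound for bt/a
  have hbtlt : ∀ z1 z2 : ℂ, ‖z1‖ ≤ 1 → ‖z2‖ ≤ 1 →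
      ‖eval ![z1, z2] bt‖ < ‖eval ![z1, z2] a‖ := by
    have hKc : IsCompact (Metric.sphere (0:ℂ) 1 ×ˢ Metric.sphere (0:ℂ) 1) :=
      (isCompact_sphere _ _).prod (isCompact_sphere _ _)
    have hKne : (Metric.sphere (0:ℂ) 1 ×ˢ Metric.sphere (0:ℂ) 1).Nonempty :=
      ⟨(1, 1), by constructor <;> simp⟩
    have hKmem : ∀ w : ℂ × ℂ, w ∈ Metric.sphere (0:ℂ) 1 ×ˢ Metric.sphere (0:ℂ) 1 →
        ‖w.1‖ = 1 ∧ ‖w.2‖ = 1 := fun w hw =>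
      ⟨mem_sphere_zero_iff_norm.mp hw.1, mem_sphere_zero_iff_norm.mp hw.2⟩
    have hfc : ContinuousOn (fun w : ℂ × ℂ => ‖eval ![w.1, w.2] bt / eval ![w.1, w.2] a‖)
        (Metric.sphere (0:ℂ) 1 ×ˢ Metric.sphere (0:ℂ) 1) :=
      (((diff_eval2 bt).continuous.continuousOn).div
        ((diff_eval2 a).continuous.continuousOn)
        (fun w hw => hA0 _ _ (hKmem w hw).1.le (hKmem w hw).2.le)).norm
    obtain ⟨x₀, hx₀K, hmax⟩ := hKc.exists_isMaxOn hKne hfc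
    set M : ℝ := ‖eval ![x₀.1, x₀.2] bt / eval ![x₀.1, x₀.2] a‖ with hM
    obtain ⟨hx1, hx2⟩ := hKmem x₀ hx₀K
    have hM1 : M < 1 := by
      rw [hM, norm_div]
      have hbtval : ‖eval ![x₀.1, x₀.2] bt‖ = ‖eval ![x₀.1, x₀.2] b‖ := by
        rw [refl2_on_torus hbt hx1 hx2]
        simp [hx1, hx2]
      rw [hbtval]
      exact (div_lt_one (lt_of_le_of_lt (norm_nonneg _)
        (hBA _ _ hx1.le hx2.le))).mpr (hBA _ _ hx1.le hx2.le)
    have hdiffpair : ∀ (q : MvPolynomial (Fin 2) ℂ) (g : ℂ → ℂ × ℂ), Differentiable ℂ g →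
        Differentiable ℂ (fun w : ℂ => eval ![(g w).1, (g w).2] q) :=
      fun q g hg => (diff_eval2 q).comp hg
    have claim1 : ∀ z1 z2 : ℂ, ‖z1‖ = 1 → ‖z2‖ ≤ 1 →
        ‖eval ![z1, z2] bt / eval ![z1, z2] a‖ ≤ M := by
      intro z1 z2 h1 h2
      have hcl : z2 ∈ closure (Metric.ball (0:ℂ) 1) := by
        rw [closure_ball (0:ℂ) one_ne_zero]
        simpa using h2
      refine Complex.norm_le_of_forall_mem_frontier_norm_le
        (f := fun w : ℂ => eval ![z1, w] bt / eval ![z1, w] a) Metric.isBounded_ball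
        (DifferentiableOn.diffContOnCl ?_) (fun w hw => ?_) hcl
      · refine DifferentiableOn.div ?_ ?_ ?_
        · exact (hdiffpair bt (fun w => (z1, w))
            ((differentiable_const z1).prodMk differentiable_id)).differentiableOn
        · exact (hdiffpair a (fun w => (z1, w))
            ((differentiable_const z1).prodMk differentiable_id)).differentiableOn
        · intro w hw
          rw [closure_ball (0:ℂ) one_ne_zero] at hw
          exact hA0 _ _ h1.le (by simpa using hw)
      · rw [frontier_ball (0:ℂ) one_ne_zero] at hw
        have hKm : ((z1, w) : ℂ × ℂ) ∈ Metric.sphere (0:ℂ) 1 ×ˢ Metric.sphere (0:ℂ) 1 :=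
          Set.mk_mem_prod (mem_sphere_zero_iff_norm.mpr h1) hw
        rw [hM]
        simpa using isMaxOn_iff.mp hmax _ hKm
    have claim2 : ∀ z1 z2 : ℂ, ‖z1‖ ≤ 1 → ‖z2‖ ≤ 1 →
        ‖eval ![z1, z2] bt / eval ![z1, z2] a‖ ≤ M := by
      intro z1 z2 h1 h2
      have hcl : z1 ∈ closure (Metric.ball (0:ℂ) 1) := by
        rw [closure_ball (0:ℂ) one_ne_zero]
        simpa using h1
      refine Complex.norm_le_of_forall_mem_frontier_norm_le
        (f := fun w : ℂ => eval ![w, z2] bt / eval ![w, z2] a) Metric.isBounded_ball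
        (DifferentiableOn.diffContOnCl ?_) (fun w hw => ?_) hcl
      · refine DifferentiableOn.div ?_ ?_ ?_
        · exact (hdiffpair bt (fun w => (w, z2))
            (differentiable_id.prodMk (differentiable_const z2))).differentiableOn
        · exact (hdiffpair a (fun w => (w, z2))
            (differentiable_id.prodMk (differentiable_const z2))).differentiableOn
        · intro w hw
          rw [closure_ball (0:ℂ) one_ne_zero] at hw
          exact hA0 _ _ (by simpa using hw) h2
      · rw [frontier_ball (0:ℂ) one_ne_zero] at hw
        exact claim1 w z2 (mem_sphere_zero_iff_norm.mp hw) h2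
    intro z1 z2 h1 h2
    have h3 := claim2 z1 z2 h1 h2
    have ha : eval ![z1, z2] a ≠ 0 := hA0 z1 z2 h1 h2
    have hapos : 0 < ‖eval ![z1, z2] a‖ := norm_pos_iff.mpr ha
    rw [norm_div] at h3
    have h4 : ‖eval ![z1, z2] bt‖ ≤ M * ‖eval ![z1, z2] a‖ := (div_le_iff₀ hapos).mp h3
    nlinarith
  have hD : ∀ z1 z2 : ℂ, ‖z1‖ ≤ 1 → ‖z2‖ ≤ 1 →
      eval ![z1, z2] a + eval ![z1, z2] bt ≠ 0 := by
    intro z1 z2 h1 h2 h0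
    have : eval ![z1, z2] bt = -eval ![z1, z2] a := by linear_combination h0
    have h3 := hbtlt z1 z2 h1 h2
    rw [this, norm_neg] at h3
    exact lt_irrefl _ h3
  constructor
  · -- holomorphy
    intro i j
    have hden : ∀ w ∈ {w : ℂ × ℂ | ‖w.1‖ < 1 ∧ ‖w.2‖ < 1},
        eval ![w.1, w.2] a + eval ![w.1, w.2] bt ≠ 0 :=
      fun w hw => hD _ _ hw.1.le hw.2.le
    have hP : ∀ q : MvPolynomial (Fin 2) ℂ, DifferentiableOn ℂ
        (fun w : ℂ × ℂ => eval ![w.1, w.2] q) {w : ℂ × ℂ | ‖w.1‖ < 1 ∧ ‖w.2‖ < 1} :=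
      fun q => (diff_eval2 q).differentiableOn
    have hInv : DifferentiableOn ℂ (fun w : ℂ × ℂ => (eval ![w.1, w.2] a)⁻¹)
        {w : ℂ × ℂ | ‖w.1‖ < 1 ∧ ‖w.2‖ < 1} :=
      (hP a).inv (fun w hw => hA0 _ _ hw.1.le hw.2.le)
    have hMulInv : ∀ f : ℂ × ℂ → ℂ, DifferentiableOn ℂ f {w : ℂ × ℂ | ‖w.1‖ < 1 ∧ ‖w.2‖ < 1} →
        DifferentiableOn ℂ (fun w => (eval ![w.1, w.2] a)⁻¹ * f w)
          {w : ℂ × ℂ | ‖w.1‖ < 1 ∧ ‖w.2‖ < 1} := fun f hf => hInv.mul hf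
    have hDiv : ∀ f : ℂ × ℂ → ℂ, DifferentiableOn ℂ f {w : ℂ × ℂ | ‖w.1‖ < 1 ∧ ‖w.2‖ < 1} →
        DifferentiableOn ℂ (fun w => f w / (eval ![w.1, w.2] a + eval ![w.1, w.2] bt))
          {w : ℂ × ℂ | ‖w.1‖ < 1 ∧ ‖w.2‖ < 1} :=
      by
      intro f hf
      simp only [div_eq_mul_inv]
      exact hf.mul (((hP a).add (hP bt)).inv hden)
    have hMul : ∀ f g : ℂ × ℂ → ℂ, DifferentiableOn ℂ f {w : ℂ × ℂ | ‖w.1‖ < 1 ∧ ‖w.2‖ < 1} →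
        DifferentiableOn ℂ g {w : ℂ × ℂ | ‖w.1‖ < 1 ∧ ‖w.2‖ < 1} →
        DifferentiableOn ℂ (fun w => f w * g w)
          {w : ℂ × ℂ | ‖w.1‖ < 1 ∧ ‖w.2‖ < 1} := fun f g hf hg => hf.mul hg
    fin_cases i <;> fin_cases j <;>
      simp only [hV, Matrix.smul_apply, Matrix.cons_val', Matrix.cons_val_zero,
        Matrix.cons_val_one, Matrix.head_cons, Matrix.head_fin_const, Matrix.empty_val',
        Matrix.cons_val_fin_one, Matrix.cons_val_two, Matrix.tail_cons, smul_eq_mul]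
    · exact hMulInv _ (hP bt)
    · exact hMulInv _ (hP Et1)
    · exact hMulInv _ (hP Et2)
    · exact hMulInv _ (hP E1)
    · exact hMulInv _ (hDiv _ ((hMul _ _ (hP E1) (hP Et1)).sub
        (hMul _ _ (hP a) ((hP a').add (hP b)))))
    · exact hMulInv _ (hDiv _ (hMul _ _ (hP E1) (hP Et2)))
    · exact hMulInv _ (hP E2)
    · exact hMulInv _ (hDiv _ (hMul _ _ (hP E2) (hP Et1)))
    · exact hMulInv _ (hDiv _ ((hMul _ _ (hP E2) (hP Et2)).sub
        (hMul _ _ (hP a) ((hP a').add (hP b)))))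
  · -- unitarity on the torus
    intro z1 z2 h1 h2
    rw [hV, refl2_on_torus hbt h1 h2, refl2_on_torus hat h1 h2,
      refl2_on_torus hEt1 h1 h2, refl2_on_torus hEt2 h1 h2]
    have hA : eval ![z1, z2] a ≠ 0 := hA0 z1 z2 h1.le h2.le
    have u1 : z1 * conj z1 = 1 := by
      rw [Complex.mul_conj, Complex.normSq_eq_norm_sq, h1]
      norm_num
    have u2 : z2 * conj z2 = 1 := by
      rw [Complex.mul_conj, Complex.normSq_eq_norm_sq, h2]
      norm_num
    have hS : z1 * z2 * conj (z1 * z2) = 1 := by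
      rw [map_mul]
      linear_combination (z2 * conj z2) * u1 + u2
    have hd : eval ![z1, z2] a + z1 * z2 * conj (eval ![z1, z2] b) ≠ 0 := by
      have := hD z1 z2 h1.le h2.le
      rwa [refl2_on_torus hbt h1 h2] at this
    have hsum : eval ![z1, z2] E1 * conj (eval ![z1, z2] E1) +
        eval ![z1, z2] E2 * conj (eval ![z1, z2] E2) =
        eval ![z1, z2] a * conj (eval ![z1, z2] a) -
        eval ![z1, z2] b * conj (eval ![z1, z2] b) := by
      have h := hE z1 z2 h1 h2
      have key : ∀ z : ℂ, z * conj z = ((‖z‖ ^ 2 : ℝ) : ℂ) := fun z => by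
        rw [Complex.mul_conj, Complex.normSq_eq_norm_sq]
      rw [key, key, key, key]
      norm_cast
    exact kummert_core _ _ _ _ _ hA hS hd hsum
end
end
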